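/- arXiv:2412.21075 — 4 statements merged into one kernel-verified Lean document; each statement's English description precedes it below -/
import Mathlib

section
/- Let g, h ∈ 𝒢. The following are equivalent: (a) whenever K ⊆ V[g(n)] is bounded in the norm ‖·‖_{φ_g} and relatively compact with respect to the supremum norm ‖·‖_∞, then K ⊆ V[h(n)] and K is relatively compact in the norm ‖·‖_{φ_h}; (b) g(n) = o(h(n)), i.e. lim_{n→∞} g(n)/h(n) = 0; (c) Exh(φ_{g^M}) ⊆ Exh(φ_h) for some increasing sequence M = (m_k) of natural numbers. -/
open Filter Set
open scoped ENNReal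

/-- A Waterman sequence: a nonincreasing sequence of positive reals whose series diverges. -/
def IsWaterman (a : ℕ → ℝ) : Prop :=
  Antitone a ∧ (∀ n, 0 < a n) ∧ ¬ Summable a

/-- A Waterman sequence is proper if it moreover tends to zero. -/
def IsProperWaterman (a : ℕ → ℝ) : Prop :=
  IsWaterman a ∧ Tendsto a atTop (nhds 0)

/-- An admissible sequence of nonoverlapping closed subintervals `[s n, t n]` of `[0,1]`:
the intervals are contained in `[0,1]` and have pairwise disjoint interiors. -/
def Nonoverlapping (s t : ℕ → ℝ) : Prop :=
  (∀ n, 0 ≤ s n ∧ s n ≤ t n ∧ t n ≤ 1) ∧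
  Pairwise fun m n => Disjoint (Set.Ioo (s m) (t m)) (Set.Ioo (s n) (t n))

/-- The `A`-variation (in the sense of Waterman) of `x` on `[0,1]`, with values in `[0,∞]`. -/
noncomputable def eVar (a : ℕ → ℝ) (x : ℝ → ℝ) : ℝ≥0∞ :=
  ⨆ p : {p : (ℕ → ℝ) × (ℕ → ℝ) // Nonoverlapping p.1 p.2},
    ∑' n, ENNReal.ofReal (a n * |x (p.1.2 n) - x (p.1.1 n)|)

/-- Membership in the space `ABV` of functions of bounded `A`-variation. -/
def MemABV (a : ℕ → ℝ) (x : ℝ → ℝ) : Prop := eVar a x < ⊤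

/-- The norm `‖x‖_{ABV} = |x(0)| + var_A(x)`, with values in `[0,∞]`. -/
noncomputable def eNormABV (a : ℕ → ℝ) (x : ℝ → ℝ) : ℝ≥0∞ :=
  ENNReal.ofReal |x 0| + eVar a x

/-- The supremum norm of `x` on `[0,1]`, with values in `[0,∞]`. -/
noncomputable def eSupNorm (x : ℝ → ℝ) : ℝ≥0∞ :=
  ⨆ t ∈ Set.Icc (0 : ℝ) 1, ENNReal.ofReal |x t|

/-- `x` is bounded on `[0,1]`. -/
def BoundedOn01 (x : ℝ → ℝ) : Prop := ∃ C : ℝ, ∀ t ∈ Set.Icc (0 : ℝ) 1, |x t| ≤ C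

/-- `K` is relatively compact with respect to the supremum norm on `[0,1]`: every sequence
in `K` has a subsequence converging in the supremum norm to some bounded function. -/
def RelCompSup (K : Set (ℝ → ℝ)) : Prop :=
  ∀ u : ℕ → ℝ → ℝ, (∀ j, u j ∈ K) →
    ∃ φ : ℕ → ℕ, StrictMono φ ∧ ∃ x : ℝ → ℝ, BoundedOn01 x ∧
      Tendsto (fun k => eSupNorm (u (φ k) - x)) atTop (nhds 0)

/-- `K` is relatively compact in the norm of the space `BBV` (for the sequence `b`):
every sequence in `K` has a subsequence converging in `‖·‖_{BBV}` to an element of `BBV`. -/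
def RelCompABV (b : ℕ → ℝ) (K : Set (ℝ → ℝ)) : Prop :=
  ∀ u : ℕ → ℝ → ℝ, (∀ j, u j ∈ K) →
    ∃ φ : ℕ → ℕ, StrictMono φ ∧ ∃ x : ℝ → ℝ, MemABV b x ∧
      Tendsto (fun k => eNormABV b (u (φ k) - x)) atTop (nhds 0)

/-- `K` is a bounded subset of `ABV`. -/
def BddInABV (a : ℕ → ℝ) (K : Set (ℝ → ℝ)) : Prop :=
  ∃ M : ℝ≥0∞, M < ⊤ ∧ ∀ x ∈ K, eNormABV a x ≤ M

/-- `∑_{k=1}^n b_k = o(∑_{k=1}^n a_k)`. -/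
def PartialSumsLittleO (a b : ℕ → ℝ) : Prop :=
  Tendsto (fun n => (∑ k ∈ Finset.range n, b k) / (∑ k ∈ Finset.range n, a k))
    atTop (nhds 0)

/-- Condition (b): for every `ε > 0` there is `k₀` such that for every nonincreasing
nonnegative sequence `c` tending to `0` with `∑ aₙcₙ < ∞` one has
`∑_{n>k₀} bₙcₙ ≤ ε ∑ₙ aₙcₙ`. -/
def SmallTailCond (a b : ℕ → ℝ) : Prop :=
  ∀ ε : ℝ, 0 < ε → ∃ k₀ : ℕ, ∀ c : ℕ → ℝ,
    (∀ n, 0 ≤ c n) → Antitone c → Tendsto c atTop (nhds 0) →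
    (∑' n, ENNReal.ofReal (a n * c n)) < ⊤ →
    (∑' n, ENNReal.ofReal (b (n + k₀) * c (n + k₀))) ≤
      ENNReal.ofReal ε * ∑' n, ENNReal.ofReal (a n * c n)

/-- The compact-embedding property from `ABV` into `BBV`: every bounded subset of `ABV`
which is relatively compact in the supremum norm is contained in `BBV` and relatively
compact there. -/
def CompactEmbeddingABV (a b : ℕ → ℝ) : Prop :=
  ∀ K : Set (ℝ → ℝ), (∀ x ∈ K, MemABV a x) → BddInABV a K → RelCompSup K →
    (∀ x ∈ K, MemABV b x) ∧ RelCompABV b K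

/-- The summable ideal `I_A = {C ⊆ ℕ : ∑_{n ∈ C} a_n < ∞}` (as a family of sets;
it may equal `P(ℕ)` when `∑ a_n < ∞`). -/
def IdealOf (a : ℕ → ℝ) : Set (Set ℕ) := {C : Set ℕ | Summable fun n : C => a n}

/-- The Katětov order on families of subsets of `ℕ`. -/
def KatetovLE (I J : Set (Set ℕ)) : Prop :=
  ∃ f : ℕ → ℕ, ∀ C ∈ I, f ⁻¹' C ∈ J

/-- Given a sequence `b` and an increasing sequence `m` of naturals, the sequence `b^M`,
whose `n`-th term is `k·bₙ` where `k` is the number of indices `j` with `m j ≤ n`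
(and `bₙ` itself if `n` is below all of `m`). -/
def seqM (b : ℕ → ℝ) (m : ℕ → ℕ) (n : ℕ) : ℝ :=
  ((max 1 (((Finset.range (n + 1)).filter fun j => m j ≤ n).card) : ℕ) : ℝ) * b n

/-- An admissible `n`-tuple of nonoverlapping closed subintervals of `[0,1]`. -/
def NonoverlappingFin {n : ℕ} (s t : Fin n → ℝ) : Prop :=
  (∀ i, 0 ≤ s i ∧ s i ≤ t i ∧ t i ≤ 1) ∧
  Pairwise fun i j => Disjoint (Set.Ioo (s i) (t i)) (Set.Ioo (s j) (t j))

/-- The modulus of variation of Chanturia: `v(x,n)` is the supremum of `∑_{k=1}^n |x(I_k)|`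
over all `n`-tuples of nonoverlapping closed subintervals of `[0,1]`. -/
noncomputable def modVar (x : ℝ → ℝ) (n : ℕ) : ℝ≥0∞ :=
  ⨆ p : {p : (Fin n → ℝ) × (Fin n → ℝ) // NonoverlappingFin p.1 p.2},
    ENNReal.ofReal (∑ i, |x (p.1.2 i) - x (p.1.1 i)|)

/-- Membership in the Chanturia class `V[g(n)]`: `x` is bounded and `v(x,n) = O(g(n))`. -/
def MemChanturia (g : ℕ → ℝ) (x : ℝ → ℝ) : Prop :=
  BoundedOn01 x ∧ ∃ η : ℝ, 0 < η ∧ ∀ n, modVar x n ≤ ENNReal.ofReal (η * g n)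

/-- The norm `‖x‖_{φ_g} = |x(0)| + sup_n v(x,n)/g(n)` of the Chanturia class. -/
noncomputable def eNormChan (g : ℕ → ℝ) (x : ℝ → ℝ) : ℝ≥0∞ :=
  ENNReal.ofReal |x 0| + ⨆ n, modVar x n / ENNReal.ofReal (g n)

/-- The family `𝒢`: positive, nondecreasing `g` tending to `∞` with `n/g(n)`
nondecreasing and tending to `∞`. -/
def MemG (g : ℕ → ℝ) : Prop :=
  (∀ n, 0 < g n) ∧ Monotone g ∧ Tendsto g atTop atTop ∧
  Monotone (fun n : ℕ => (n : ℝ) / g n) ∧ Tendsto (fun n : ℕ => (n : ℝ) / g n) atTop atTop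

/-- `K` is a bounded subset of the Chanturia class `V[g(n)]`. -/
def BddInChan (g : ℕ → ℝ) (K : Set (ℝ → ℝ)) : Prop :=
  ∃ M : ℝ≥0∞, M < ⊤ ∧ ∀ x ∈ K, eNormChan g x ≤ M

/-- `K` is relatively compact in the norm of the Chanturia class `V[h(n)]`. -/
def RelCompChan (h : ℕ → ℝ) (K : Set (ℝ → ℝ)) : Prop :=
  ∀ u : ℕ → ℝ → ℝ, (∀ j, u j ∈ K) →
    ∃ φ : ℕ → ℕ, StrictMono φ ∧ ∃ x : ℝ → ℝ, MemChanturia h x ∧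
      Tendsto (fun k => eNormChan h (u (φ k) - x)) atTop (nhds 0)

/-- The compact-embedding property from `V[g(n)]` into `V[h(n)]`. -/
def CompactEmbeddingChan (g h : ℕ → ℝ) : Prop :=
  ∀ K : Set (ℝ → ℝ), (∀ x ∈ K, MemChanturia g x) → BddInChan g K → RelCompSup K →
    (∀ x ∈ K, MemChanturia h x) ∧ RelCompChan h K

/-- The submeasure `φ_g(C) = sup_n |C ∩ {0,…,n}| / g(n)`, with values in `[0,∞]`. -/
noncomputable def phiSub (g : ℕ → ℝ) (C : Set ℕ) : ℝ≥0∞ :=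
  ⨆ n, ENNReal.ofReal (((C ∩ Set.Iic n).ncard : ℝ) / g n)

/-- The exhaustive ideal `Exh(φ_g)`. -/
def Exh (g : ℕ → ℝ) : Set (Set ℕ) :=
  {C : Set ℕ | Tendsto (fun k => phiSub g (C \ Set.Iic k)) atTop (nhds 0)}

/-- The characteristic function of `[0,t]`. -/
noncomputable def chi (t : ℝ) : ℝ → ℝ := Set.indicator (Set.Icc 0 t) fun _ => 1

section Helpers
open Filter

-- not tendsto to 0 of nonneg ratio gives frequent lower bound
lemma not_tendsto_ratio {f : ℕ → ℝ} (hf : ∀ n, 0 ≤ f n)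
    (hnt : ¬ Tendsto f atTop (nhds 0)) :
    ∃ c : ℝ, 0 < c ∧ ∃ᶠ n in atTop, c ≤ f n := by
  by_contra hc
  push_neg at hc
  apply hnt
  rw [Metric.tendsto_atTop]
  intro ε hε
  have := hc (ε/2) (by linarith)
  have this : ∀ᶠ n in atTop, ¬ (ε/2 ≤ f n) := this.mono fun n hn => not_le.2 hn
  rw [Filter.eventually_atTop] at this
  obtain ⟨N, hN⟩ := this
  exact ⟨N, fun n hn => by
    have := hN n hn
    push_neg at this
    rw [Real.dist_eq, sub_zero, abs_of_nonneg (hf n)]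
    linarith⟩

lemma exists_global_bound {g h : ℕ → ℝ} (hgpos : ∀ n, 0 < g n) (hhpos : ∀ n, 0 < h n)
    (ht : Tendsto (fun n => g n / h n) atTop (nhds 0)) :
    ∃ C : ℝ, 0 < C ∧ ∀ n, g n ≤ C * h n := by
  obtain ⟨N, hN⟩ := (Metric.tendsto_atTop.1 ht) 1 one_pos
  set C := max 1 ((Finset.range (N+1)).sup' (by simp) (fun n => g n / h n)) with hC
  refine ⟨C, lt_of_lt_of_le one_pos (le_max_left _ _), fun n => ?_⟩
  rcases le_or_gt n N with hn | hn
  · have : g n / h n ≤ C := le_trans (Finset.le_sup' (fun n => g n / h n)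
      (Finset.mem_range.2 (Nat.lt_succ_of_le hn))) (le_max_right _ _)
    have hhn := hhpos n
    calc g n = (g n / h n) * h n := by field_simp
    _ ≤ C * h n := by nlinarith
  · have := hN n (le_of_lt hn)
    have hda : 0 ≤ g n / h n := div_nonneg (hgpos n).le (hhpos n).le
    rw [Real.dist_eq, sub_zero, abs_of_nonneg hda] at this
    have h1C : (1:ℝ) ≤ C := le_max_left _ _
    have hhn := hhpos n
    calc g n = (g n / h n) * h n := by field_simp
    _ ≤ C * h n := by nlinarith

end Helpers
section ModVar
open Filter

lemma mem_Icc_of_nonoverlapping {n : ℕ} {s t : Fin n → ℝ} (hp : NonoverlappingFin s t) (i : Fin n) :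
    s i ∈ Set.Icc (0:ℝ) 1 ∧ t i ∈ Set.Icc (0:ℝ) 1 := by
  obtain ⟨h0, h1, h2⟩ := hp.1 i
  exact ⟨⟨h0, le_trans h1 h2⟩, ⟨le_trans h0 h1, h2⟩⟩

lemma ofReal_term_le_modVar {x : ℝ → ℝ} {n : ℕ} {s t : Fin n → ℝ}
    (hp : NonoverlappingFin s t) :
    ENNReal.ofReal (∑ i, |x (t i) - x (s i)|) ≤ modVar x n :=
  le_iSup_of_le ⟨(s, t), hp⟩ le_rfl

lemma eSupNorm_apply_le {x : ℝ → ℝ} {t : ℝ} (ht : t ∈ Set.Icc (0:ℝ) 1) :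
    ENNReal.ofReal |x t| ≤ eSupNorm x :=
  le_iSup_of_le t (by simp [ht])

lemma modVar_le_of_forall_term {x : ℝ → ℝ} {β : ℝ} (n : ℕ)
    (hb : ∀ s t : ℝ, s ∈ Set.Icc (0:ℝ) 1 → t ∈ Set.Icc (0:ℝ) 1 → |x t - x s| ≤ β) :
    modVar x n ≤ ENNReal.ofReal ((n : ℝ) * β) := by
  refine iSup_le fun p => ENNReal.ofReal_le_ofReal ?_
  obtain ⟨⟨s, t⟩, hp⟩ := p
  calc ∑ i, |x (t i) - x (s i)| ≤ ∑ _i : Fin n, β := by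
        refine Finset.sum_le_sum fun i _ => ?_
        obtain ⟨hs, ht⟩ := mem_Icc_of_nonoverlapping hp i
        exact hb _ _ hs ht
  _ = (n : ℝ) * β := by simp [mul_comm]

lemma modVar_triple {a b c : ℝ → ℝ} (n : ℕ)
    (hb : ∀ s t : ℝ, s ∈ Set.Icc (0:ℝ) 1 → t ∈ Set.Icc (0:ℝ) 1 →
      |a t - a s| ≤ |b t - b s| + |c t - c s|) :
    modVar a n ≤ modVar b n + modVar c n := by
  refine iSup_le fun p => ?_
  obtain ⟨⟨s, t⟩, hp⟩ := p
  have key : ∑ i, |a (t i) - a (s i)| ≤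
      (∑ i, |b (t i) - b (s i)|) + ∑ i, |c (t i) - c (s i)| := by
    rw [← Finset.sum_add_distrib]
    refine Finset.sum_le_sum fun i _ => ?_
    obtain ⟨hs, ht⟩ := mem_Icc_of_nonoverlapping hp i
    exact hb _ _ hs ht
  calc ENNReal.ofReal (∑ i, |a (t i) - a (s i)|)
      ≤ ENNReal.ofReal ((∑ i, |b (t i) - b (s i)|) + ∑ i, |c (t i) - c (s i)|) :=
        ENNReal.ofReal_le_ofReal key
    _ ≤ ENNReal.ofReal (∑ i, |b (t i) - b (s i)|) +
        ENNReal.ofReal (∑ i, |c (t i) - c (s i)|) := ENNReal.ofReal_add_le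
    _ ≤ modVar b n + modVar c n :=
        add_le_add (ofReal_term_le_modVar hp) (ofReal_term_le_modVar hp)

lemma modVar_sub_le (x y : ℝ → ℝ) (n : ℕ) :
    modVar (x - y) n ≤ modVar x n + modVar y n := by
  refine modVar_triple n fun s t _ _ => ?_
  have : (x - y) t - (x - y) s = (x t - x s) - (y t - y s) := by
    simp [Pi.sub_apply]; ring
  rw [this]; exact abs_sub _ _

lemma modVar_le_sub_add (x y : ℝ → ℝ) (n : ℕ) :
    modVar x n ≤ modVar (x - y) n + modVar y n := by
  refine modVar_triple n fun s t _ _ => ?_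
  have : x t - x s = ((x - y) t - (x - y) s) + (y t - y s) := by
    simp [Pi.sub_apply]; ring
  rw [this]; exact abs_add_le _ _

lemma modVar_le_supnorm (x : ℝ → ℝ) (n : ℕ) :
    modVar x n ≤ (n : ℝ≥0∞) * (2 * eSupNorm x) := by
  refine iSup_le fun p => ?_
  obtain ⟨⟨s, t⟩, hp⟩ := p
  have habs : ∀ i : Fin n, (0:ℝ) ≤ |x (t i) - x (s i)| := fun i => abs_nonneg _
  rw [ENNReal.ofReal_sum_of_nonneg (fun i _ => habs i)]
  calc ∑ i : Fin n, ENNReal.ofReal (|x (t i) - x (s i)|)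
      ≤ ∑ _i : Fin n, 2 * eSupNorm x := by
        refine Finset.sum_le_sum fun i _ => ?_
        obtain ⟨hs, ht⟩ := mem_Icc_of_nonoverlapping hp i
        calc ENNReal.ofReal (|x (t i) - x (s i)|)
            ≤ ENNReal.ofReal (|x (t i)| + |x (s i)|) :=
              ENNReal.ofReal_le_ofReal (abs_sub _ _)
          _ ≤ ENNReal.ofReal |x (t i)| + ENNReal.ofReal |x (s i)| := ENNReal.ofReal_add_le
          _ ≤ eSupNorm x + eSupNorm x :=
              add_le_add (eSupNorm_apply_le ht) (eSupNorm_apply_le hs)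
          _ = 2 * eSupNorm x := (two_mul _).symm
    _ = (n : ℝ≥0∞) * (2 * eSupNorm x) := by simp [mul_comm]

lemma modVar_congr {a b : ℝ → ℝ} (hab : ∀ t ∈ Set.Icc (0:ℝ) 1, a t = b t) (n : ℕ) :
    modVar a n = modVar b n := by
  have key : ∀ (a b : ℝ → ℝ), (∀ t ∈ Set.Icc (0:ℝ) 1, a t = b t) →
      modVar a n ≤ modVar b n := by
    intro a b hab
    refine iSup_le fun p => ?_
    obtain ⟨⟨s, t⟩, hp⟩ := p
    have : ∑ i, |a (t i) - a (s i)| = ∑ i, |b (t i) - b (s i)| := by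
      refine Finset.sum_congr rfl fun i _ => ?_
      obtain ⟨hs, ht⟩ := mem_Icc_of_nonoverlapping hp i
      rw [hab _ hs, hab _ ht]
    rw [this]; exact ofReal_term_le_modVar hp
  exact le_antisymm (key a b hab) (key b a fun t ht => (hab t ht).symm)

lemma eSupNorm_le_sub_add (a b : ℝ → ℝ) :
    eSupNorm a ≤ eSupNorm (a - b) + eSupNorm b := by
  refine iSup_le fun t => iSup_le fun ht => ?_
  calc ENNReal.ofReal |a t| ≤ ENNReal.ofReal (|(a - b) t| + |b t|) := by
        refine ENNReal.ofReal_le_ofReal ?_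
        have : a t = (a - b) t + b t := by simp
        rw [this]; exact abs_add_le _ _
    _ ≤ ENNReal.ofReal |(a - b) t| + ENNReal.ofReal |b t| := ENNReal.ofReal_add_le
    _ ≤ eSupNorm (a - b) + eSupNorm b :=
        add_le_add (eSupNorm_apply_le ht) (eSupNorm_apply_le ht)

lemma eSupNorm_le_norm_chan (y : ℝ → ℝ) :
    eSupNorm y ≤ ENNReal.ofReal |y 0| + modVar y 1 := by
  refine iSup_le fun t => iSup_le fun ht => ?_
  have hp : NonoverlappingFin (fun _ : Fin 1 => (0:ℝ)) (fun _ : Fin 1 => t) := by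
    constructor
    · exact fun i => ⟨le_refl 0, ht.1, ht.2⟩
    · intro i j hij
      exact absurd (Subsingleton.elim i j) hij
  have h1 : ENNReal.ofReal |y t - y 0| ≤ modVar y 1 := by
    have := ofReal_term_le_modVar (x := y) hp
    simpa using this
  calc ENNReal.ofReal |y t| ≤ ENNReal.ofReal (|y 0| + |y t - y 0|) := by
        refine ENNReal.ofReal_le_ofReal ?_
        have h := abs_add_le (y 0) (y t - y 0)
        simpa using h
    _ ≤ ENNReal.ofReal |y 0| + ENNReal.ofReal |y t - y 0| := ENNReal.ofReal_add_le
    _ ≤ _ := add_le_add le_rfl h1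

end ModVar
section Spike
open Filter Classical in
/-- Spike function: takes value `α` at points `(2i+1)/(2n)`, `0` elsewhere. -/
noncomputable def spike (n : ℕ) (α : ℝ) : ℝ → ℝ :=
  fun t => if ∃ i : Fin n, t = (2*(i:ℝ)+1)/(2*(n:ℝ)) then α else 0

lemma spike_eq_or (n : ℕ) (α : ℝ) (t : ℝ) : spike n α t = α ∨ spike n α t = 0 := by
  unfold spike; split <;> simp

lemma spike_abs_le {n : ℕ} {α : ℝ} (hα : 0 ≤ α) (s t : ℝ) :
    |spike n α t - spike n α s| ≤ α := by
  rcases spike_eq_or n α t with h1 | h1 <;> rcases spike_eq_or n α s with h2 | h2 <;>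
    rw [h1, h2] <;> simp [abs_of_nonneg, abs_of_nonpos, hα]

lemma spike_nonneg {n : ℕ} {α : ℝ} (hα : 0 ≤ α) (t : ℝ) : 0 ≤ spike n α t := by
  rcases spike_eq_or n α t with h | h <;> rw [h] <;> simp [hα]

lemma spike_le {n : ℕ} {α : ℝ} (hα : 0 ≤ α) (t : ℝ) : spike n α t ≤ α := by
  rcases spike_eq_or n α t with h | h <;> rw [h] <;> simp [hα]

lemma spike_zero {n : ℕ} {α : ℝ} (hn : 0 < n) : spike n α 0 = 0 := by
  unfold spike
  rw [if_neg]
  rintro ⟨i, hi⟩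
  have hn' : (0:ℝ) < 2*(n:ℝ) := by positivity
  have : (0:ℝ) < (2*(i:ℝ)+1)/(2*(n:ℝ)) := by positivity
  rw [← hi] at this
  exact lt_irrefl _ this

lemma eSupNorm_spike {n : ℕ} {α : ℝ} (hα : 0 ≤ α) : eSupNorm (spike n α) ≤ ENNReal.ofReal α := by
  refine iSup_le fun t => iSup_le fun _ => ENNReal.ofReal_le_ofReal ?_
  rw [abs_of_nonneg (spike_nonneg hα t)]
  exact spike_le hα t

lemma spike_lower {n : ℕ} {α : ℝ} (hn : 0 < n) (hα : 0 < α) :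
    ENNReal.ofReal ((n:ℝ) * α) ≤ modVar (spike n α) n := by
  classical
  have hn' : (0:ℝ) < (n:ℝ) := by exact_mod_cast hn
  set s : Fin n → ℝ := fun i => (i:ℝ)/(n:ℝ) with hs
  set t : Fin n → ℝ := fun i => (2*(i:ℝ)+1)/(2*(n:ℝ)) with ht
  have hp : NonoverlappingFin s t := by
    constructor
    · intro i
      have hi : (i:ℝ) < (n:ℝ) := by exact_mod_cast i.2
      have hi2 : (i:ℝ) + 1 ≤ (n:ℝ) := by exact_mod_cast i.2
      refine ⟨by positivity, ?_, ?_⟩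
      · rw [hs, ht, div_le_div_iff₀ hn' (by positivity)]
        nlinarith
      · rw [ht, div_le_one (by positivity)]
        linarith
    · intro i j hij
      rw [Set.Ioo_disjoint_Ioo]
      rcases lt_or_gt_of_ne (fun hc : (i:Fin n) = j => hij hc) with hlt | hlt
      · have hij' : (i:ℝ) < (j:ℝ) := by exact_mod_cast hlt
        have h1 : t i ≤ s j := by
          have hij2 : (i:ℝ) + 1 ≤ (j:ℝ) := by exact_mod_cast hlt
          rw [ht, hs, div_le_div_iff₀ (by positivity) hn']
          nlinarith
        exact le_trans (inf_le_left) (le_trans h1 le_sup_right)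
      · have hij' : (j:ℝ) < (i:ℝ) := by exact_mod_cast hlt
        have h1 : t j ≤ s i := by
          have hij2 : (j:ℝ) + 1 ≤ (i:ℝ) := by exact_mod_cast hlt
          rw [ht, hs, div_le_div_iff₀ (by positivity) hn']
          nlinarith
        exact le_trans (inf_le_right) (le_trans h1 le_sup_left)
  have hval : ∀ i : Fin n, |spike n α (t i) - spike n α (s i)| = α := by
    intro i
    have h1 : spike n α (t i) = α := by
      unfold spike; rw [if_pos ⟨i, rfl⟩]
    have h2 : spike n α (s i) = 0 := by
      unfold spike; rw [if_neg]
      rintro ⟨j, hj⟩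
      rw [hs, div_eq_div_iff hn'.ne' (by positivity : (0:ℝ) < 2*(n:ℝ)).ne'] at hj
      have h4 : ((i:ℝ)*2 - (2*(j:ℝ)+1)) * (n:ℝ) = 0 := by ring_nf; ring_nf at hj; linarith
      rcases mul_eq_zero.1 h4 with h5 | h5
      · have h6 : (2:ℝ)*(i:ℕ) = 2*(j:ℕ)+1 := by push_cast; linarith
        have h7 : 2*(i:ℕ) = 2*(j:ℕ)+1 := by exact_mod_cast h6
        omega
      · exact absurd h5 hn'.ne'
    rw [h1, h2, sub_zero, abs_of_nonneg hα.le]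
  calc ENNReal.ofReal ((n:ℝ) * α) = ENNReal.ofReal (∑ i : Fin n, |spike n α (t i) - spike n α (s i)|) := by
        rw [Finset.sum_congr rfl (fun i _ => hval i)]
        simp [mul_comm]
    _ ≤ modVar (spike n α) n := ofReal_term_le_modVar hp

lemma spike_upper {n : ℕ} {α : ℝ} (hα : 0 < α) (N : ℕ) :
    modVar (spike n α) N ≤ ENNReal.ofReal (2 * (n:ℝ) * α) := by
  classical
  refine iSup_le fun p => ?_
  obtain ⟨⟨s, t⟩, hp⟩ := p
  replace hp : NonoverlappingFin s t := hp
  set x := spike n α with hx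
  set P : Finset ℝ := Finset.image (fun i : Fin n => (2*(i:ℝ)+1)/(2*(n:ℝ))) Finset.univ with hP
  have hmem : ∀ u : ℝ, (∃ i : Fin n, u = (2*(i:ℝ)+1)/(2*(n:ℝ))) ↔ u ∈ P := by
    intro u
    simp only [hP, Finset.mem_image, Finset.mem_univ, true_and]
    exact ⟨fun ⟨i, hi⟩ => ⟨i, hi.symm⟩, fun ⟨i, hi⟩ => ⟨i, hi.symm⟩⟩
  have hxval : ∀ u : ℝ, x u = if u ∈ P then α else 0 := by
    intro u
    rw [hx]
    unfold spike
    by_cases hu : u ∈ P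
    · rw [if_pos ((hmem u).2 hu), if_pos hu]
    · rw [if_neg (fun hc => hu ((hmem u).1 hc)), if_neg hu]
  set T : Finset (Fin N) := Finset.univ.filter (fun i => x (t i) ≠ x (s i)) with hT
  have hsum : ∑ i, |x (t i) - x (s i)| = ∑ i ∈ T, |x (t i) - x (s i)| := by
    refine (Finset.sum_subset (Finset.subset_univ T) ?_).symm
    intro i _ hi
    rw [hT] at hi
    simp only [Finset.mem_filter, Finset.mem_univ, true_and, not_not] at hi
    rw [hi, sub_self, abs_zero]
  have hlt : ∀ i ∈ T, s i < t i := by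
    intro i hi
    rw [hT] at hi
    simp only [Finset.mem_filter, Finset.mem_univ, true_and] at hi
    rcases lt_or_eq_of_le (hp.1 i).2.1 with h | h
    · exact h
    · exact absurd (by rw [h]) hi
  set F : Fin N → ℝ × Bool := fun i => if t i ∈ P then (t i, true) else (s i, false) with hF
  have hFapp : ∀ i, F i = if t i ∈ P then ((t i), true) else (s i, false) := fun _ => rfl
  have hFmem : ∀ i ∈ T, F i ∈ P ×ˢ ({true, false} : Finset Bool) := by
    intro i hi
    rw [hFapp i]
    by_cases hc : t i ∈ P
    · rw [if_pos hc]; simp [hc]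
    · rw [if_neg hc]
      have hxi : x (t i) = 0 := by rw [hxval, if_neg hc]
      rw [hT] at hi
      simp only [Finset.mem_filter, Finset.mem_univ, true_and] at hi
      have : x (s i) ≠ 0 := by rw [hxi] at hi; exact fun hc2 => hi hc2.symm
      have hs : s i ∈ P := by
        by_contra hsc
        exact this (by rw [hxval, if_neg hsc])
      simp [hs]
  have hinj : Set.InjOn F T := by
    intro i hi j hj hij
    rw [Finset.mem_coe] at hi hj
    by_contra hne
    have hdisj : Disjoint (Set.Ioo (s i) (t i)) (Set.Ioo (s j) (t j)) := hp.2 hne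
    rw [Set.Ioo_disjoint_Ioo] at hdisj
    rw [hFapp i, hFapp j] at hij
    have hlti := hlt i hi
    have hltj := hlt j hj
    by_cases hci : t i ∈ P <;> by_cases hcj : t j ∈ P
    · rw [if_pos hci, if_pos hcj] at hij
      have h1 : t i = t j := congrArg Prod.fst hij
      rw [h1, inf_idem] at hdisj
      have : s i ⊔ s j < t j := sup_lt_iff.2 ⟨h1 ▸ hlti, hltj⟩
      exact absurd hdisj (not_le.2 this)
    · rw [if_pos hci, if_neg hcj] at hij
      have h2 := congrArg Prod.snd hij
      simp at h2
    · rw [if_neg hci, if_pos hcj] at hij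
      have h2 := congrArg Prod.snd hij
      simp at h2
    · rw [if_neg hci, if_neg hcj] at hij
      have h1 : s i = s j := congrArg Prod.fst hij
      have : t i ⊓ t j > s i ⊔ s j := by
        rw [h1, sup_idem]
        exact lt_inf_iff.2 ⟨h1 ▸ hlti, hltj⟩
      exact absurd hdisj (not_le.2 this)
  have hcard : T.card ≤ 2 * n := by
    calc T.card ≤ (P ×ˢ ({true, false} : Finset Bool)).card :=
          Finset.card_le_card_of_injOn F hFmem hinj
    _ = P.card * 2 := by rw [Finset.card_product]; simp
    _ ≤ n * 2 := by
        have hPle : P.card ≤ n := by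
          rw [hP]
          calc (Finset.image (fun i : Fin n => (2*(i:ℝ)+1)/(2*(n:ℝ))) Finset.univ).card
              ≤ (Finset.univ : Finset (Fin n)).card := Finset.card_image_le
          _ = n := by simp
        exact Nat.mul_le_mul_right 2 hPle
    _ = 2 * n := by ring
  refine ENNReal.ofReal_le_ofReal ?_
  rw [hsum]
  calc ∑ i ∈ T, |x (t i) - x (s i)| ≤ T.card • α :=
        Finset.sum_le_card_nsmul _ _ _ (fun i _ => spike_abs_le hα.le _ _)
  _ = (T.card : ℝ) * α := nsmul_eq_mul _ _
  _ ≤ 2 * (n:ℝ) * α := by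
      have h2 : (T.card : ℝ) ≤ 2 * (n:ℝ) := by exact_mod_cast hcard
      nlinarith [hα.le]
end Spike
section NormHelpers
open Filter

lemma ennreal_div_le_of {a c : ℝ≥0∞} {b : ℝ} (hb : 0 < b) (h : a ≤ c * ENNReal.ofReal b) :
    a / ENNReal.ofReal b ≤ c := by
  rw [ENNReal.div_le_iff_le_mul (Or.inl (by simp [hb])) (Or.inl ENNReal.ofReal_ne_top)]
  exact h

lemma ennreal_le_mul_of_div_le {a c : ℝ≥0∞} {b : ℝ} (hb : 0 < b)
    (h : a / ENNReal.ofReal b ≤ c) : a ≤ c * ENNReal.ofReal b := by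
  rw [← ENNReal.div_le_iff_le_mul (Or.inl (by simp [hb])) (Or.inl ENNReal.ofReal_ne_top)]
  exact h

lemma modVar_le_of_norm {g : ℕ → ℝ} {x : ℝ → ℝ} {M : ℝ≥0∞} (hM : eNormChan g x ≤ M)
    {n : ℕ} (hg : 0 < g n) : modVar x n ≤ M * ENNReal.ofReal (g n) := by
  refine ennreal_le_mul_of_div_le hg ?_
  calc modVar x n / ENNReal.ofReal (g n) ≤ ⨆ n, modVar x n / ENNReal.ofReal (g n) :=
        le_iSup (fun n => modVar x n / ENNReal.ofReal (g n)) n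
  _ ≤ eNormChan g x := le_add_self
  _ ≤ M := hM

lemma norm_chan_le {g : ℕ → ℝ} {x : ℝ → ℝ} {a η : ℝ} (hgpos : ∀ n, 0 < g n)
    (hx0 : |x 0| ≤ a) (hη : 0 ≤ η)
    (hmv : ∀ n, modVar x n ≤ ENNReal.ofReal (η * g n)) :
    eNormChan g x ≤ ENNReal.ofReal a + ENNReal.ofReal η := by
  refine add_le_add (ENNReal.ofReal_le_ofReal hx0) (iSup_le fun n => ?_)
  refine ennreal_div_le_of (hgpos n) ?_
  rw [← ENNReal.ofReal_mul hη]
  exact hmv n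

lemma eSupNorm_sub_comm (a b : ℝ → ℝ) : eSupNorm (a - b) = eSupNorm (b - a) := by
  unfold eSupNorm
  congr 1
  funext t
  congr 1
  funext ht
  congr 1
  have h2 : (a - b) t = -((b - a) t) := by simp
  rw [h2, abs_neg]

lemma tendsto_zero_of_forall_ofReal {F : ℕ → ℝ≥0∞}
    (h : ∀ ε : ℝ, 0 < ε → ∀ᶠ k in atTop, F k ≤ ENNReal.ofReal ε) :
    Tendsto F atTop (nhds 0) := by
  rw [ENNReal.tendsto_nhds_zero]
  intro ε hε
  rcases eq_or_ne ε ⊤ with rfl | hεt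
  · exact Filter.Eventually.of_forall fun k => le_top
  · rcases lt_or_ge ε 1 with hε1 | hε1
    · have hpos : 0 < ε.toReal := ENNReal.toReal_pos hε.ne' hεt
      refine (h ε.toReal hpos).mono fun k hk => le_trans hk ?_
      rw [ENNReal.ofReal_toReal hεt]
    · refine (h 1 one_pos).mono fun k hk => le_trans hk ?_
      simpa using hε1

lemma eventually_le_ofReal {F : ℕ → ℝ≥0∞} (h : Tendsto F atTop (nhds 0))
    {ε : ℝ} (hε : 0 < ε) : ∀ᶠ k in atTop, F k ≤ ENNReal.ofReal ε :=
  (ENNReal.tendsto_nhds_zero.1 h) _ (by simp [hε])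

lemma modVar_lsc {x : ℝ → ℝ} {y : ℕ → ℝ → ℝ} {n : ℕ} {B : ℝ≥0∞}
    (hB : ∀ k, modVar (y k) n ≤ B)
    (hconv : Tendsto (fun k => eSupNorm (y k - x)) atTop (nhds 0)) :
    modVar x n ≤ B := by
  have key : ∀ k, modVar x n ≤ B + (n : ℝ≥0∞) * (2 * eSupNorm (y k - x)) := by
    intro k
    have h1 : modVar x n ≤ modVar (x - y k) n + modVar (y k) n := modVar_le_sub_add x (y k) n
    have h2 : modVar (x - y k) n ≤ (n : ℝ≥0∞) * (2 * eSupNorm (x - y k)) := modVar_le_supnorm _ n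
    rw [eSupNorm_sub_comm] at h2
    calc modVar x n ≤ modVar (x - y k) n + modVar (y k) n := h1
    _ ≤ (n : ℝ≥0∞) * (2 * eSupNorm (y k - x)) + B := add_le_add h2 (hB k)
    _ = B + (n : ℝ≥0∞) * (2 * eSupNorm (y k - x)) := add_comm _ _
  refine ENNReal.le_of_forall_pos_le_add fun ε hε _ => ?_
  have htend : Tendsto (fun k => (n : ℝ≥0∞) * (2 * eSupNorm (y k - x))) atTop (nhds 0) := by
    have h2 : Tendsto (fun k => ((n : ℝ≥0∞) * 2) * eSupNorm (y k - x)) atTop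
        (nhds (((n : ℝ≥0∞) * 2) * 0)) :=
      ENNReal.Tendsto.const_mul hconv (Or.inr (by simp [ENNReal.mul_ne_top]))
    rw [mul_zero] at h2
    refine h2.congr fun k => by ring
  have : ∀ᶠ k in atTop, (n : ℝ≥0∞) * (2 * eSupNorm (y k - x)) ≤ (ε : ℝ≥0∞) := by
    refine (ENNReal.tendsto_nhds_zero.1 htend) _ ?_
    exact_mod_cast hε
  obtain ⟨k, hk⟩ := this.exists
  exact le_trans (key k) (add_le_add le_rfl hk)

end NormHelpers
section DirBA
open Filter

lemma tendsto_norm_chan {g h : ℕ → ℝ} {d : ℕ → ℝ → ℝ} {b : ℝ}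
    (hgpos : ∀ n, 0 < g n) (hhpos : ∀ n, 0 < h n) (hhmono : Monotone h) (hb : 0 ≤ b)
    (hvar : ∀ k n, modVar (d k) n ≤ ENNReal.ofReal (b * g n))
    (hsup : Tendsto (fun k => eSupNorm (d k)) atTop (nhds 0))
    (hratio : Tendsto (fun n => g n / h n) atTop (nhds 0)) :
    Tendsto (fun k => eNormChan h (d k)) atTop (nhds 0) := by
  refine tendsto_zero_of_forall_ofReal fun ε hε => ?_
  -- choose N
  have hε2 : 0 < ε / 2 := by linarith
  have hratN : ∀ᶠ n in atTop, g n / h n < (ε/2) / (b+1) := by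
    have := (Metric.tendsto_atTop.1 hratio) ((ε/2)/(b+1)) (by positivity)
    rw [Filter.eventually_atTop]
    obtain ⟨N, hN⟩ := this
    exact ⟨N, fun n hn => by
      have := hN n hn
      rw [Real.dist_eq, sub_zero, abs_of_nonneg (div_nonneg (hgpos n).le (hhpos n).le)] at this
      exact this⟩
  obtain ⟨N, hN⟩ := Filter.eventually_atTop.1 hratN
  have hNbd : ∀ n ≥ N, b * g n ≤ (ε/2) * h n := by
    intro n hn
    have h1 := hN n hn
    have h2 : g n < ((ε/2)/(b+1)) * h n := by
      have := (div_lt_iff₀ (hhpos n)).1 h1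
      linarith
    have h3 : b * g n ≤ (b+1) * g n := by nlinarith [(hgpos n).le]
    have h4 : (b+1) * g n ≤ (b+1) * (((ε/2)/(b+1)) * h n) := by nlinarith
    have h5 : (b+1) * (((ε/2)/(b+1)) * h n) = (ε/2) * h n := by field_simp
    linarith
  set c : ℝ≥0∞ := (2 * N : ℝ≥0∞) / ENNReal.ofReal (h 0) with hc
  have hh0 : ENNReal.ofReal (h 0) ≠ 0 := by simp [hhpos 0]
  have hctop : c ≠ ⊤ := by
    rw [hc]
    exact (ENNReal.div_lt_top (ENNReal.mul_ne_top (by simp) (ENNReal.natCast_ne_top N)) hh0).ne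
  have htendc : Tendsto (fun k => c * eSupNorm (d k)) atTop (nhds 0) := by
    have h2 := ENNReal.Tendsto.const_mul hsup (Or.inr hctop)
    rw [mul_zero] at h2
    exact h2
  have E1 := eventually_le_ofReal hsup hε2
  have E2 := eventually_le_ofReal htendc hε2
  filter_upwards [E1, E2] with k hk1 hk2
  have hfirst : ENNReal.ofReal |d k 0| ≤ ENNReal.ofReal (ε/2) :=
    le_trans (eSupNorm_apply_le (by constructor <;> norm_num)) hk1
  have hsecond : (⨆ n, modVar (d k) n / ENNReal.ofReal (h n)) ≤ ENNReal.ofReal (ε/2) := by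
    refine iSup_le fun n => ?_
    rcases le_or_gt N n with hn | hn
    · refine ennreal_div_le_of (hhpos n) ?_
      rw [← ENNReal.ofReal_mul hε2.le]
      exact le_trans (hvar k n) (ENNReal.ofReal_le_ofReal (hNbd n hn))
    · refine le_trans ?_ hk2
      refine ennreal_div_le_of (hhpos n) ?_
      calc modVar (d k) n ≤ (n : ℝ≥0∞) * (2 * eSupNorm (d k)) := modVar_le_supnorm _ n
      _ = (2 * n : ℝ≥0∞) * eSupNorm (d k) := by ring
      _ ≤ (c * ENNReal.ofReal (h n)) * eSupNorm (d k) := by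
          refine mul_le_mul' ?_ le_rfl
          calc (2 * n : ℝ≥0∞) ≤ (2 * N : ℝ≥0∞) := by
                have : (n:ℝ≥0∞) ≤ (N:ℝ≥0∞) := by exact_mod_cast hn.le
                exact mul_le_mul' le_rfl this
          _ = (2 * N : ℝ≥0∞) / ENNReal.ofReal (h 0) * ENNReal.ofReal (h 0) :=
                (ENNReal.div_mul_cancel hh0 ENNReal.ofReal_ne_top).symm
          _ ≤ c * ENNReal.ofReal (h n) := by
                rw [hc]
                exact mul_le_mul' le_rfl (ENNReal.ofReal_le_ofReal (hhmono (Nat.zero_le n)))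
      _ = (c * eSupNorm (d k)) * ENNReal.ofReal (h n) := by ring
  calc eNormChan h (d k) = ENNReal.ofReal |d k 0| + ⨆ n, modVar (d k) n / ENNReal.ofReal (h n) := rfl
  _ ≤ ENNReal.ofReal (ε/2) + ENNReal.ofReal (ε/2) := add_le_add hfirst hsecond
  _ = ENNReal.ofReal ε := by
      rw [← ENNReal.ofReal_add hε2.le hε2.le]
      norm_num

lemma compactEmbedding_of_o {g h : ℕ → ℝ} (hg : MemG g) (hh : MemG h)
    (ht : Tendsto (fun n => g n / h n) atTop (nhds 0)) : CompactEmbeddingChan g h := by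
  intro K hKg hKbdd hKcomp
  obtain ⟨C, hC0, hC⟩ := exists_global_bound hg.1 hh.1 ht
  obtain ⟨M, hMlt, hM⟩ := hKbdd
  set m : ℝ := M.toReal with hm
  have hm0 : 0 ≤ m := ENNReal.toReal_nonneg
  have hub : ∀ x ∈ K, ∀ n, modVar x n ≤ ENNReal.ofReal (m * g n) := by
    intro x hx n
    have h1 : modVar x n ≤ M * ENNReal.ofReal (g n) := modVar_le_of_norm (hM x hx) (hg.1 n)
    have hMof : M = ENNReal.ofReal m := by rw [hm, ENNReal.ofReal_toReal hMlt.ne]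
    rwa [hMof, ← ENNReal.ofReal_mul hm0] at h1
  constructor
  · intro x hx
    obtain ⟨hxb, _⟩ := hKg x hx
    refine ⟨hxb, m * C + 1, by positivity, fun n => ?_⟩
    refine le_trans (hub x hx n) (ENNReal.ofReal_le_ofReal ?_)
    have h1 : g n ≤ C * h n := hC n
    have h2 := (hg.1 n).le
    have h3 := (hh.1 n).le
    nlinarith
  · intro u hu
    obtain ⟨φ, hφ, x, hxb, hconv⟩ := hKcomp u hu
    have hxvar : ∀ n, modVar x n ≤ ENNReal.ofReal (m * g n) := fun n =>
      modVar_lsc (fun k => hub _ (hu (φ k)) n) hconv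
    have hdvar : ∀ k n, modVar (u (φ k) - x) n ≤ ENNReal.ofReal ((2*m) * g n) := by
      intro k n
      calc modVar (u (φ k) - x) n ≤ modVar (u (φ k)) n + modVar x n := modVar_sub_le _ _ n
      _ ≤ ENNReal.ofReal (m * g n) + ENNReal.ofReal (m * g n) :=
          add_le_add (hub _ (hu (φ k)) n) (hxvar n)
      _ = ENNReal.ofReal ((2*m) * g n) := by
          rw [← ENNReal.ofReal_add (mul_nonneg hm0 (hg.1 n).le) (mul_nonneg hm0 (hg.1 n).le)]
          ring_nf
    refine ⟨φ, hφ, x, ?_, ?_⟩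
    · refine ⟨hxb, m * C + 1, by positivity, fun n => ?_⟩
      refine le_trans (hxvar n) (ENNReal.ofReal_le_ofReal ?_)
      have h1 : g n ≤ C * h n := hC n
      have h2 := (hg.1 n).le
      have h3 := (hh.1 n).le
      nlinarith
    · exact tendsto_norm_chan hg.1 hh.1 hh.2.1 (by positivity) hdvar hconv ht

end DirBA
section DirAB
open Filter

lemma eSupNorm_zero_fun : eSupNorm 0 = 0 := by
  unfold eSupNorm; simp

lemma modVar_div_le_norm {h : ℕ → ℝ} (d : ℝ → ℝ) (n : ℕ) :
    modVar d n / ENNReal.ofReal (h n) ≤ eNormChan h d :=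
  le_trans (le_iSup (fun n => modVar d n / ENNReal.ofReal (h n)) n) le_add_self

lemma tendsto_eSupNorm_of_chan {h : ℕ → ℝ} {d : ℕ → ℝ → ℝ} (hh1 : 0 < h 1)
    (hconv : Tendsto (fun k => eNormChan h (d k)) atTop (nhds 0)) :
    Tendsto (fun k => eSupNorm (d k)) atTop (nhds 0) := by
  have hb : ∀ k, eSupNorm (d k) ≤ (1 + ENNReal.ofReal (h 1)) * eNormChan h (d k) := by
    intro k
    have h1 : ENNReal.ofReal |d k 0| ≤ eNormChan h (d k) := self_le_add_right _ _
    have h2 : modVar (d k) 1 ≤ eNormChan h (d k) * ENNReal.ofReal (h 1) :=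
      ennreal_le_mul_of_div_le hh1 (modVar_div_le_norm _ 1)
    calc eSupNorm (d k) ≤ ENNReal.ofReal |d k 0| + modVar (d k) 1 := eSupNorm_le_norm_chan _
    _ ≤ eNormChan h (d k) + eNormChan h (d k) * ENNReal.ofReal (h 1) := add_le_add h1 h2
    _ = (1 + ENNReal.ofReal (h 1)) * eNormChan h (d k) := by ring
  have htop : (1 + ENNReal.ofReal (h 1)) ≠ ⊤ := by
    simp [ENNReal.add_ne_top]
  have h2 : Tendsto (fun k => (1 + ENNReal.ofReal (h 1)) * eNormChan h (d k)) atTop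
      (nhds ((1 + ENNReal.ofReal (h 1)) * 0)) := ENNReal.Tendsto.const_mul hconv (Or.inr htop)
  rw [mul_zero] at h2
  exact tendsto_of_tendsto_of_tendsto_of_le_of_le tendsto_const_nhds h2
    (fun k => zero_le) hb

lemma o_of_compactEmbedding {g h : ℕ → ℝ} (hg : MemG g) (hh : MemG h)
    (hce : CompactEmbeddingChan g h) : Tendsto (fun n => g n / h n) atTop (nhds 0) := by
  by_contra hnt
  obtain ⟨c, hc0, hfreq⟩ := not_tendsto_ratio
    (fun n => div_nonneg (hg.1 n).le (hh.1 n).le) hnt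
  obtain ⟨ψ, hψ, hψc⟩ := extraction_of_frequently_atTop hfreq
  set ν : ℕ → ℕ := fun j => ψ (j+1) with hν
  have hν1 : ∀ j, 0 < ν j := fun j => lt_of_lt_of_le (Nat.succ_pos j) hψ.le_apply
  have hνmono : StrictMono ν := fun a b hab => hψ (by omega)
  have hνc : ∀ j, c * h (ν j) ≤ g (ν j) := by
    intro j
    have := hψc (j+1)
    exact (le_div_iff₀ (hh.1 (ν j))).1 this
  set α : ℕ → ℝ := fun j => g (ν j) / (ν j : ℝ) with hα
  have hνR : ∀ j, (0:ℝ) < (ν j : ℝ) := fun j => by exact_mod_cast hν1 j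
  have hα0 : ∀ j, 0 < α j := fun j => div_pos (hg.1 _) (hνR j)
  set X : ℕ → ℝ → ℝ := fun j => spike (ν j) (α j) with hX
  -- modVar bound
  have hXvar : ∀ j n, modVar (X j) n ≤ ENNReal.ofReal (2 * g n) := by
    intro j n
    rcases le_or_gt n (ν j) with hn | hn
    · refine le_trans (modVar_le_of_forall_term n fun s t _ _ => spike_abs_le (hα0 j).le s t)
        (ENNReal.ofReal_le_ofReal ?_)
      rcases Nat.eq_zero_or_pos n with rfl | hn0
      · have h0 := hg.1 0
        push_cast
        nlinarith
      · have hnR : (0:ℝ) < (n:ℝ) := by exact_mod_cast hn0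
        have hmono := hg.2.2.2.1 hn  -- (n:ℝ)/g n ≤ (ν j:ℝ)/g (ν j)
        have hkey : (n:ℝ) * g (ν j) ≤ (ν j : ℝ) * g n := by
          rw [div_le_div_iff₀ (hg.1 n) (hg.1 (ν j))] at hmono
          nlinarith
        have : (n:ℝ) * α j ≤ g n := by
          rw [hα, mul_div_assoc', div_le_iff₀ (hνR j)]
          nlinarith
        nlinarith [hg.1 n]
    · refine le_trans (spike_upper (hα0 j) n) (ENNReal.ofReal_le_ofReal ?_)
      have h1 : 2 * (ν j : ℝ) * α j = 2 * g (ν j) := by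
        have hne : (ν j:ℝ) ≠ 0 := (hνR j).ne'
        rw [hα]; field_simp <;> ring
      rw [h1]
      have := hg.2.1 hn.le
      linarith
  have hX0 : ∀ j, X j 0 = 0 := fun j => spike_zero (hν1 j)
  set K : Set (ℝ → ℝ) := Set.range X with hK
  -- hypotheses of compact embedding
  have hKg : ∀ x ∈ K, MemChanturia g x := by
    rintro x ⟨j, rfl⟩
    refine ⟨⟨α j, fun t _ => ?_⟩, 2, two_pos, hXvar j⟩
    rw [abs_of_nonneg (spike_nonneg (hα0 j).le t)]
    exact spike_le (hα0 j).le t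
  have hKbdd : BddInChan g K := by
    refine ⟨ENNReal.ofReal 2, ENNReal.ofReal_lt_top, ?_⟩
    rintro x ⟨j, rfl⟩
    have := norm_chan_le (g := g) (x := X j) (a := 0) (η := 2) hg.1
      (by rw [hX0 j]; simp) (by norm_num) (hXvar j)
    simpa using this
  -- α tends to zero
  have hαtend : Tendsto α atTop (nhds 0) := by
    have h1 : Tendsto (fun j => ((ν j : ℝ)) / g (ν j)) atTop atTop := by
      refine (hg.2.2.2.2).comp ?_
      exact hνmono.tendsto_atTop
    have h2 := h1.inv_tendsto_atTop
    refine h2.congr fun j => ?_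
    simp only [Pi.inv_apply, hα, inv_div]
  have hKcomp : RelCompSup K := by
    intro u hu
    choose f hf using hu
    by_cases hinf : ∃ i, Set.Infinite {j | f j = i}
    · obtain ⟨i, hi⟩ := hinf
      refine ⟨Nat.nth (fun j => f j = i), Nat.nth_strictMono hi, X i, ?_, ?_⟩
      · exact ⟨α i, fun t _ => by
          rw [hX, abs_of_nonneg (spike_nonneg (hα0 i).le t)]
          exact spike_le (hα0 i).le t⟩
      · have : ∀ k, u (Nat.nth (fun j => f j = i) k) - X i = 0 := by
          intro k
          have h1 : f (Nat.nth (fun j => f j = i) k) = i := Nat.nth_mem_of_infinite hi k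
          rw [← hf (Nat.nth (fun j => f j = i) k), h1, sub_self]
        simp only [this, eSupNorm_zero_fun]
        exact tendsto_const_nhds
    · push_neg at hinf
      have hftend : Tendsto f atTop atTop := by
        have hcof : Tendsto f cofinite atTop := by
          rw [tendsto_atTop]
          intro K0
          rw [eventually_cofinite]
          have : {j | ¬ K0 ≤ f j} ⊆ ⋃ i ∈ Finset.range K0, {j | f j = i} := by
            intro j hj
            simp only [Set.mem_setOf_eq, not_le] at hj
            simp only [Set.mem_iUnion]
            exact ⟨f j, by simpa using hj, rfl⟩
          exact Set.Finite.subset (Set.Finite.biUnion (Finset.range K0).finite_toSet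
            fun i _ => hinf i) this
        rwa [Nat.cofinite_eq_atTop] at hcof
      refine ⟨id, strictMono_id, 0, ⟨0, by simp⟩, ?_⟩
      have hub : ∀ k, eSupNorm (u k - 0) ≤ ENNReal.ofReal (α (f k)) := by
        intro k
        rw [sub_zero, ← hf k, hX]
        exact eSupNorm_spike (hα0 (f k)).le
      have hup : Tendsto (fun k => ENNReal.ofReal (α (f k))) atTop (nhds 0) := by
        have := ENNReal.tendsto_ofReal (hαtend.comp hftend)
        simpa using this
      exact tendsto_of_tendsto_of_tendsto_of_le_of_le tendsto_const_nhds hup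
        (fun k => zero_le) hub
  -- apply compact embedding
  obtain ⟨-, hrc⟩ := hce K hKg hKbdd hKcomp
  obtain ⟨φ, hφ, y, hy, hconv⟩ := hrc X (fun j => ⟨j, rfl⟩)
  -- sup-norm convergence to y
  have hsupconv : Tendsto (fun k => eSupNorm (X (φ k) - y)) atTop (nhds 0) :=
    tendsto_eSupNorm_of_chan (hh.1 1) hconv
  -- X (φ k) tends to 0 in sup norm
  have hXtend : Tendsto (fun k => eSupNorm (X (φ k))) atTop (nhds 0) := by
    have hub : ∀ k, eSupNorm (X (φ k)) ≤ ENNReal.ofReal (α (φ k)) := fun k =>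
      eSupNorm_spike (hα0 (φ k)).le
    have hup : Tendsto (fun k => ENNReal.ofReal (α (φ k))) atTop (nhds 0) := by
      have := ENNReal.tendsto_ofReal (hαtend.comp hφ.tendsto_atTop)
      simpa using this
    exact tendsto_of_tendsto_of_tendsto_of_le_of_le tendsto_const_nhds hup
      (fun k => zero_le) hub
  -- y vanishes on [0,1]
  have hy0 : ∀ t ∈ Set.Icc (0:ℝ) 1, y t = 0 := by
    have hyle : ∀ k, eSupNorm y ≤ eSupNorm (X (φ k) - y) + eSupNorm (X (φ k)) := by
      intro k
      calc eSupNorm y ≤ eSupNorm (y - X (φ k)) + eSupNorm (X (φ k)) := eSupNorm_le_sub_add _ _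
      _ = eSupNorm (X (φ k) - y) + eSupNorm (X (φ k)) := by rw [eSupNorm_sub_comm]
    have hzero : eSupNorm y = 0 := by
      have hsum : Tendsto (fun k => eSupNorm (X (φ k) - y) + eSupNorm (X (φ k))) atTop
          (nhds 0) := by
        have := Tendsto.add hsupconv hXtend
        simpa using this
      have hle := ge_of_tendsto' hsum hyle
      exact le_antisymm hle (zero_le)
    intro t ht
    have h1 : ENNReal.ofReal |y t| ≤ eSupNorm y := eSupNorm_apply_le ht
    rw [hzero] at h1
    have h2 : |y t| ≤ 0 := by
      have := ENNReal.ofReal_eq_zero.1 (le_antisymm (le_trans h1 (le_refl 0)) (zero_le))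
      linarith [this]
    have := abs_nonneg (y t)
    have habs : |y t| = 0 := le_antisymm h2 (abs_nonneg _)
    exact abs_eq_zero.1 habs
  -- contradiction
  have hlow : ∀ k, ENNReal.ofReal c ≤ eNormChan h (X (φ k) - y) := by
    intro k
    have hmv : modVar (X (φ k) - y) (ν (φ k)) = modVar (X (φ k)) (ν (φ k)) :=
      modVar_congr (fun t ht => by simp [hy0 t ht]) _
    have h1 : ENNReal.ofReal (g (ν (φ k))) ≤ modVar (X (φ k) - y) (ν (φ k)) := by
      rw [hmv]
      have := spike_lower (hν1 (φ k)) (hα0 (φ k))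
      have hcast : (ν (φ k) : ℝ) * α (φ k) = g (ν (φ k)) := by
        have hne : (ν (φ k):ℝ) ≠ 0 := (hνR (φ k)).ne'
        rw [hα]; field_simp <;> ring
      rwa [hcast] at this
    have h2 : ENNReal.ofReal c ≤ modVar (X (φ k) - y) (ν (φ k)) / ENNReal.ofReal (h (ν (φ k))) := by
      rw [ENNReal.le_div_iff_mul_le (Or.inl (by simp [hh.1])) (Or.inl ENNReal.ofReal_ne_top)]
      calc ENNReal.ofReal c * ENNReal.ofReal (h (ν (φ k)))
          = ENNReal.ofReal (c * h (ν (φ k))) := (ENNReal.ofReal_mul hc0.le).symm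
      _ ≤ ENNReal.ofReal (g (ν (φ k))) := ENNReal.ofReal_le_ofReal (hνc (φ k))
      _ ≤ _ := h1
    exact le_trans h2 (modVar_div_le_norm _ _)
  have hev := eventually_le_ofReal hconv (half_pos hc0)
  obtain ⟨k, hk⟩ := hev.exists
  have := le_trans (hlow k) hk
  rw [ENNReal.ofReal_le_ofReal_iff (by linarith)] at this
  linarith
end DirAB
section ExhOfO
open Filter

lemma seqM_pos {g : ℕ → ℝ} (hg : ∀ n, 0 < g n) (m : ℕ → ℕ) (n : ℕ) : 0 < seqM g m n := by
  unfold seqM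
  have h1 : (1:ℕ) ≤ max 1 (((Finset.range (n + 1)).filter fun j => m j ≤ n).card) :=
    le_max_left _ _
  have h2 : (1:ℝ) ≤ ((max 1 (((Finset.range (n + 1)).filter fun j => m j ≤ n).card) : ℕ) : ℝ) := by
    exact_mod_cast h1
  nlinarith [hg n]

lemma exh_of_o {g h : ℕ → ℝ} (hg : MemG g) (hh : MemG h)
    (ht : Tendsto (fun n => g n / h n) atTop (nhds 0)) :
    ∃ m : ℕ → ℕ, StrictMono m ∧ Exh (seqM g m) ⊆ Exh h := by
  have hNk : ∀ k : ℕ, ∃ N, ∀ n ≥ N, (k+2) * g n ≤ h n := by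
    intro k
    have hpos : (0:ℝ) < 1 / (k+2) := by positivity
    obtain ⟨N, hN⟩ := (Metric.tendsto_atTop.1 ht) (1/(k+2)) hpos
    refine ⟨N, fun n hn => ?_⟩
    have := hN n hn
    rw [Real.dist_eq, sub_zero, abs_of_nonneg (div_nonneg (hg.1 n).le (hh.1 n).le)] at this
    have h2 : g n < (1/(k+2)) * h n := by
      rw [div_lt_iff₀ (hh.1 n)] at this
      linarith
    have h3 : ((k:ℝ)+2) * g n < ((k:ℝ)+2) * ((1/(k+2)) * h n) := by
      have : (0:ℝ) < (k:ℝ)+2 := by positivity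
      nlinarith
    have h4 : ((k:ℝ)+2) * ((1/((k:ℝ)+2)) * h n) = h n := by
      field_simp
    push_cast
    nlinarith
  choose N hN using hNk
  -- recursive strictly monotone m with N k ≤ m k
  set m : ℕ → ℕ := fun k => Nat.rec (N 0) (fun k mk => max (N (k+1)) (mk + 1)) k with hm
  have hmsucc : ∀ k, m (k+1) = max (N (k+1)) (m k + 1) := fun k => rfl
  have hmono : StrictMono m := by
    apply strictMono_nat_of_lt_succ
    intro k
    rw [hmsucc k]
    exact lt_of_lt_of_le (Nat.lt_succ_self _) (le_max_right _ _)
  have hmN : ∀ k, N k ≤ m k := by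
    intro k
    cases k with
    | zero => exact le_refl _
    | succ k => rw [hmsucc k]; exact le_max_left _ _
  have hkey : ∀ n, m 0 ≤ n → seqM g m n ≤ h n := by
    intro n hn
    set P := (Finset.range (n+1)).filter (fun j => m j ≤ n) with hP
    have h0P : 0 ∈ P := by
      rw [hP, Finset.mem_filter]
      exact ⟨Finset.mem_range.2 (Nat.succ_pos n), hn⟩
    have hPne : P.Nonempty := ⟨0, h0P⟩
    set J := P.max' hPne with hJ
    have hJP : J ∈ P := P.max'_mem hPne
    have hmJ : m J ≤ n := (Finset.mem_filter.1 hJP).2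
    have hcard : P.card ≤ J + 1 := by
      have hsub : P ⊆ Finset.range (J+1) := by
        intro j hj
        rw [Finset.mem_range, Nat.lt_succ_iff]
        exact P.le_max' j hj
      calc P.card ≤ (Finset.range (J+1)).card := Finset.card_le_card hsub
      _ = J + 1 := Finset.card_range _
    have hmax : max 1 P.card = P.card := by
      have : 1 ≤ P.card := Finset.card_pos.2 hPne
      omega
    have hhn := hN J n (le_trans (hmN J) hmJ)
    unfold seqM
    rw [← hP, hmax]
    have hc : (P.card : ℝ) ≤ (J:ℝ) + 2 := by
      have := hcard
      exact_mod_cast by omega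
    have := hg.1 n
    push_cast at hhn ⊢
    nlinarith
  refine ⟨m, hmono, fun C hC => ?_⟩
  rw [Exh, Set.mem_setOf_eq] at hC ⊢
  rw [ENNReal.tendsto_nhds_zero] at hC ⊢
  intro ε hε
  filter_upwards [hC ε hε, Filter.eventually_ge_atTop (m 0)] with k hk1 hk2
  refine le_trans ?_ hk1
  refine iSup_le fun n => ?_
  rcases le_or_gt n k with hn | hn
  · have hempty : (C \ Set.Iic k) ∩ Set.Iic n = ∅ := by
      ext x
      simp only [Set.mem_inter_iff, Set.mem_diff, Set.mem_Iic, Set.mem_empty_iff_false,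
        iff_false, not_and, and_imp]
      intro _ hx2 hx3
      omega
    rw [hempty]
    simp
  · have hle : seqM g m n ≤ h n := hkey n (by omega)
    have hterm : (((C \ Set.Iic k) ∩ Set.Iic n).ncard : ℝ) / h n ≤
        (((C \ Set.Iic k) ∩ Set.Iic n).ncard : ℝ) / seqM g m n := by
      apply div_le_div_of_nonneg_left (by positivity) (seqM_pos hg.1 m n) hle
    exact le_trans (ENNReal.ofReal_le_ofReal hterm)
      (le_iSup (fun n => ENNReal.ofReal ((((C \ Set.Iic k) ∩ Set.Iic n).ncard : ℝ) / seqM g m n)) n)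
end ExhOfO
section OOfExh
open Filter

set_option maxHeartbeats 1200000 in
lemma o_of_exh {g h : ℕ → ℝ} (hg : MemG g) (hh : MemG h)
    (hex : ∃ m : ℕ → ℕ, StrictMono m ∧ Exh (seqM g m) ⊆ Exh h) :
    Tendsto (fun n => g n / h n) atTop (nhds 0) := by
  obtain ⟨m, hm, hsub⟩ := hex
  by_contra hnt
  obtain ⟨c, hc0, hfreq⟩ := not_tendsto_ratio
    (fun n => div_nonneg (hg.1 n).le (hh.1 n).le) hnt
  -- thresholds for g largeness
  have hgth0 : ∀ Tn : ℕ, ∃ G : ℕ, ∀ n, G ≤ n → (max 1 (Tn:ℝ)) ≤ g n := by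
    intro Tn
    have h1 := tendsto_atTop.1 hg.2.2.1 (max 1 (Tn:ℝ))
    obtain ⟨G, hG⟩ := eventually_atTop.1 h1
    exact ⟨G, hG⟩
  choose gth hgth using hgth0
  have hfreq' : ∃ᶠ n in atTop, c * h n ≤ g n :=
    hfreq.mono fun n hn => (le_div_iff₀ (hh.1 n)).1 hn
  have hEv : ∀ᶠ n : ℕ in atTop, (4:ℝ) * (h n + 1) ≤ (n:ℝ) := by
    have h8 := tendsto_atTop.1 hh.2.2.2.2 8
    filter_upwards [h8, eventually_ge_atTop 8] with n hn1 hn2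
    have hhn := hh.1 n
    rw [le_div_iff₀ hhn] at hn1
    have h8n : (8:ℝ) ≤ (n:ℝ) := by exact_mod_cast hn2
    nlinarith
  have hpick0 : ∀ b : ℕ, ∃ n : ℕ, b ≤ n ∧ c * h n ≤ g n ∧ (4:ℝ) * (h n + 1) ≤ (n:ℝ) := by
    intro b
    obtain ⟨n, h1, h2, h3⟩ := (hfreq'.and_eventually (hEv.and (eventually_ge_atTop b))).exists
    exact ⟨n, h3, h1, h2⟩
  choose pick hpickb hpickc hpickh using hpick0
  -- the recursive construction
  set bnext : ℕ → ℕ × ℕ → ℕ := fun i st =>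
    max (2*st.1 + 2) (max (2 * (max (m (i+1)) (i+1)) + 2) (2 * gth st.2 + 2)) with hbnext
  set b0 : ℕ := max (2 * (max (m 0) 0) + 2) (2 * gth 0 + 2) with hb0
  set st : ℕ → ℕ × ℕ := fun i => Nat.rec (pick b0, Nat.ceil (h (pick b0)))
    (fun i p => (pick (bnext i p), p.2 + Nat.ceil (h (pick (bnext i p))))) i with hst
  set N : ℕ → ℕ := fun i => (st i).1 with hNdef
  set Tm : ℕ → ℕ := fun i => (st i).2 with hTmdef
  set L : ℕ → ℕ := fun i => Nat.ceil (h (N i)) with hLdef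
  have hstsucc : ∀ i, st (i+1) =
      (pick (bnext i (st i)), (st i).2 + Nat.ceil (h (pick (bnext i (st i))))) := fun i => rfl
  have hNsucc : ∀ i, N (i+1) = pick (bnext i (st i)) := fun i => rfl
  have hN0 : N 0 = pick b0 := rfl
  have hTm0 : Tm 0 = L 0 := rfl
  have hTmsucc : ∀ i, Tm (i+1) = Tm i + L (i+1) := fun i => rfl
  -- invariants
  have I1 : ∀ i, c * h (N i) ≤ g (N i) := by
    intro i; cases i with
    | zero => exact hpickc b0
    | succ i => rw [hNsucc i]; exact hpickc _
  have I2 : ∀ i, (4:ℝ) * (h (N i) + 1) ≤ (N i : ℝ) := by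
    intro i; cases i with
    | zero => exact hpickh b0
    | succ i => rw [hNsucc i]; exact hpickh _
  have hst1 : ∀ i, (st i).1 = N i := fun _ => rfl
  have hLeq : ∀ i, L i = Nat.ceil (h (N i)) := fun _ => rfl
  have hst2 : ∀ i, (st i).2 = Tm i := fun _ => rfl
  have Ib : ∀ i, (match i with | 0 => b0 | Nat.succ i => bnext i (st i)) ≤ N i := by
    intro i; cases i with
    | zero => exact hpickb b0
    | succ i => rw [hNsucc i]; exact hpickb _
  set TP : ℕ → ℕ := fun i => match i with | 0 => 0 | Nat.succ i => Tm i with hTPdef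
  have hTP0 : TP 0 = 0 := rfl
  have hTPsucc : ∀ i, TP (i+1) = Tm i := fun _ => rfl
  have I3 : ∀ i, 2 * N i + 2 ≤ N (i+1) := by
    intro i
    have h1 := Ib (i+1)
    simp only at h1
    rw [hbnext] at h1
    simp only [hst1, hst2] at h1
    exact le_trans (le_max_left _ _) h1
  have I4 : ∀ i, 2 * (max (m i) i) + 2 ≤ N i := by
    intro i
    have h1 := Ib i
    cases i with
    | zero =>
        simp only at h1
        rw [hb0] at h1
        exact le_trans (le_max_left _ _) h1
    | succ i =>
        simp only at h1
        rw [hbnext] at h1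
        simp only [hst1, hst2] at h1
        exact le_trans (le_trans (le_max_left _ _) (le_max_right _ _)) h1
  have I5 : ∀ i, 2 * gth (TP i) + 2 ≤ N i := by
    intro i
    have h1 := Ib i
    cases i with
    | zero =>
        simp only at h1
        rw [hb0] at h1
        rw [hTP0]
        exact le_trans (le_max_right _ _) h1
    | succ i =>
        simp only at h1
        rw [hbnext] at h1
        simp only [hst1, hst2] at h1
        rw [hTPsucc i]
        exact le_trans (le_trans (le_max_right _ _) (le_max_right _ _)) h1
  clear_value bnext b0 st N Tm L TP
  have hTPL : ∀ i, TP i + L i = Tm i := by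
    intro i; cases i with
    | zero => rw [hTm0, hTP0]; omega
    | succ i => rw [hTmsucc i, hTPsucc i]
  -- derived facts
  have hL1 : ∀ i, 1 ≤ L i := fun i => by rw [hLeq i]; exact Nat.ceil_pos.2 (hh.1 (N i))
  have hL4 : ∀ i, 4 * L i ≤ N i := by
    intro i
    have h1 : (L i : ℝ) < h (N i) + 1 := by
      rw [hLeq i]; exact Nat.ceil_lt_add_one (hh.1 (N i)).le
    have h2 := I2 i
    have : (4 * L i : ℝ) < (N i : ℝ) := by push_cast; nlinarith
    exact_mod_cast this.le
  set s : ℕ → ℕ := fun i => N i - L i + 1 with hsdef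
  have hs2 : ∀ i, N i ≤ 2 * s i := by
    intro i
    have h1 := hL4 i
    have h2 := hL1 i
    simp only [hsdef]
    omega
  have hsle : ∀ i, s i ≤ N i := by
    intro i
    have h1 := hL4 i
    have h2 := hL1 i
    simp only [hsdef]
    omega
  have hsm : ∀ i, max (m i) i < s i := by
    intro i
    have h1 := hs2 i
    have h2 := I4 i
    omega
  have hsN : ∀ i, N i < s (i+1) := by
    intro i
    have h1 := hs2 (i+1)
    have h2 := I3 i
    omega
  have hNmono : Monotone N := by
    apply monotone_nat_of_le_succ
    intro i
    have := I3 i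
    omega
  have hsgth : ∀ i, gth (TP i) ≤ s i := by
    intro i
    have h1 := hs2 i
    have h2 := I5 i
    omega
  have hD7 : ∀ i n, s i ≤ n → (max 1 ((TP i : ℕ) : ℝ)) ≤ g n :=
    fun i n hn => hgth (TP i) n (le_trans (hsgth i) hn)
  have hblockcard : ∀ i, (Set.Icc (s i) (N i)).ncard = L i := by
    intro i
    rw [← Finset.coe_Icc, Set.ncard_coe_finset, Nat.card_Icc]
    have h1 := hL4 i
    have h2 := hL1 i
    simp only [hsdef]
    omega
  -- the set C
  set C : Set ℕ := ⋃ i, Set.Icc (s i) (N i) with hC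
  -- C is in Exh (seqM g m)
  have hmult : ∀ i n, m i ≤ n → i ≤ n →
      (i+1 : ℕ) ≤ max 1 ((Finset.range (n+1)).filter fun j => m j ≤ n).card := by
    intro i n h1 h2
    refine le_trans ?_ (le_max_right _ _)
    have hsub2 : Finset.range (i+1) ⊆ (Finset.range (n+1)).filter fun j => m j ≤ n := by
      intro j hj
      rw [Finset.mem_range] at hj
      rw [Finset.mem_filter, Finset.mem_range]
      exact ⟨by omega, le_trans (hm.monotone (by omega)) h1⟩
    calc i+1 = (Finset.range (i+1)).card := (Finset.card_range _).symm
    _ ≤ _ := Finset.card_le_card hsub2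
  have hBfin : ∀ i, (⋃ j ∈ Finset.range (i+1), Set.Icc (s j) (N j)).Finite := by
    intro i
    exact Set.Finite.biUnion (Finset.range (i+1)).finite_toSet fun j _ => Set.finite_Icc _ _
  have hBcard : ∀ i, (⋃ j ∈ Finset.range (i+1), Set.Icc (s j) (N j)).ncard ≤ Tm i := by
    intro i
    induction i with
    | zero =>
        have hrw : (⋃ j ∈ Finset.range 1, Set.Icc (s j) (N j)) = Set.Icc (s 0) (N 0) := by
          simp
        rw [hrw, hblockcard 0, hTm0]
    | succ i ih =>
        have hsplit : (⋃ j ∈ Finset.range (i+2), Set.Icc (s j) (N j)) =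
            (⋃ j ∈ Finset.range (i+1), Set.Icc (s j) (N j)) ∪ Set.Icc (s (i+1)) (N (i+1)) := by
          rw [Finset.range_add_one]
          simp [Set.biUnion_insert, Set.union_comm]
        rw [hsplit]
        calc ((⋃ j ∈ Finset.range (i+1), Set.Icc (s j) (N j)) ∪ Set.Icc (s (i+1)) (N (i+1))).ncard
            ≤ (⋃ j ∈ Finset.range (i+1), Set.Icc (s j) (N j)).ncard +
              (Set.Icc (s (i+1)) (N (i+1))).ncard := Set.ncard_union_le _ _
        _ ≤ Tm i + L (i+1) := by
            rw [hblockcard (i+1)]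
            exact add_le_add ih le_rfl
        _ = Tm (i+1) := (hTmsucc i).symm
  have hLh : ∀ i, (h (N i) : ℝ) ≤ (L i : ℝ) := fun i => by
    rw [hLeq i]; exact Nat.le_ceil _
  set D : ℝ := 2/c + 2 with hD
  have hD0 : 0 < D := by positivity
  -- Claim B : C ∈ Exh (seqM g m)
  have hCin : C ∈ Exh (seqM g m) := by
    rw [Exh, Set.mem_setOf_eq]
    refine tendsto_zero_of_forall_ofReal fun ε hε => ?_
    obtain ⟨I, hI⟩ := exists_nat_ge (D / ε)
    have hDI : D / ((I:ℝ)+2) ≤ ε := by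
      rw [div_le_iff₀ (by positivity)]
      rw [div_le_iff₀ hε] at hI
      nlinarith
    rw [eventually_atTop]
    refine ⟨N I, fun k hk => ?_⟩
    refine le_trans (iSup_le fun n => ?_) (ENNReal.ofReal_le_ofReal hDI)
    by_cases hS : (C \ Set.Iic k) ∩ Set.Iic n = ∅
    · rw [hS]
      simp
    · obtain ⟨e, he⟩ := Set.nonempty_iff_ne_empty.2 hS
      obtain ⟨⟨heC, hek⟩, hen⟩ := he
      rw [Set.mem_Iic] at hen
      have hek' : k < e := by simpa using hek
      obtain ⟨j, hj⟩ : ∃ j, e ∈ Set.Icc (s j) (N j) := by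
        simpa [hC, Set.mem_iUnion] using heC
      have hjI : I < j := by
        by_contra hle
        push_neg at hle
        have h1 : e ≤ N j := hj.2
        have h2 : N j ≤ N I := hNmono hle
        omega
      have hsjn : s j ≤ n := le_trans hj.1 hen
      have hjn : j ≤ n := by have := hsm j; omega
      set i := Nat.findGreatest (fun a => s a ≤ n) n with hi
      have hPi : s i ≤ n := Nat.findGreatest_spec (P := fun a => s a ≤ n) hjn hsjn
      have hiI : I + 1 ≤ i := by
        have := Nat.le_findGreatest (P := fun a => s a ≤ n) hjn hsjn
        omega
      have hsubU : (C \ Set.Iic k) ∩ Set.Iic n ⊆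
          ⋃ j' ∈ Finset.range (i+1), Set.Icc (s j') (N j') := by
        rintro e' ⟨⟨he'C, -⟩, he'n⟩
        rw [Set.mem_Iic] at he'n
        obtain ⟨j', hj'⟩ : ∃ j', e' ∈ Set.Icc (s j') (N j') := by
          simpa [hC, Set.mem_iUnion] using he'C
        have hj'i : j' ≤ i := by
          by_contra hgt
          push_neg at hgt
          have h1 : s j' ≤ n := le_trans hj'.1 he'n
          have h2 : j' ≤ n := by have := hsm j'; omega
          exact (Nat.findGreatest_is_greatest (P := fun a => s a ≤ n) hgt h2) h1
        simp only [Set.mem_iUnion, Finset.mem_range]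
        exact ⟨j', by omega, hj'⟩
      have hcard : ((C \ Set.Iic k) ∩ Set.Iic n).ncard ≤ Tm i :=
        le_trans (Set.ncard_le_ncard hsubU (hBfin i)) (hBcard i)
      have hmn : m i ≤ n := by have := hsm i; omega
      have hin : i ≤ n := by have := hsm i; omega
      have hn1 : 1 ≤ n := by have := hsm i; omega
      have hmultn := hmult i n hmn hin
      have hgd7 := hD7 i n hPi
      have hgn1 : (1:ℝ) ≤ g n := le_trans (le_max_left _ _) hgd7
      have hgnTP : ((TP i : ℕ) : ℝ) ≤ g n := le_trans (le_max_right _ _) hgd7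
      have hgNi : g (N i) ≤ 2 * g n := by
        rcases le_or_gt (N i) n with hcase | hcase
        · have := hg.2.1 hcase
          linarith [hg.1 (N i)]
        · have hmono := hg.2.2.2.1 hcase.le
          rw [div_le_div_iff₀ (hg.1 n) (hg.1 (N i))] at hmono
          have h2n : (N i : ℝ) ≤ 2 * (n:ℝ) := by
            have h1 := hs2 i
            have h3 : (N i:ℕ) ≤ 2*n := by omega
            exact_mod_cast h3
          have hn0 : (0:ℝ) < n := by
            have : (1:ℝ) ≤ (n:ℝ) := by exact_mod_cast hn1
            linarith
          nlinarith [hg.1 (N i), hg.1 n]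
      have hLi : (L i : ℝ) ≤ (2/c + 1) * g n := by
        have h1 : (L i:ℝ) < h (N i) + 1 := by
          rw [hLeq i]; exact Nat.ceil_lt_add_one (hh.1 _).le
        have h2 : c * h (N i) ≤ g (N i) := I1 i
        have h3 : h (N i) ≤ 2 * g n / c := by
          rw [le_div_iff₀ hc0]
          nlinarith
        have h4 : (2:ℝ) * g n / c = (2/c) * g n := by ring
        rw [h4] at h3
        linarith
      have hnum : (((C \ Set.Iic k) ∩ Set.Iic n).ncard : ℝ) ≤ D * g n := by
        have h1 : (((C \ Set.Iic k) ∩ Set.Iic n).ncard : ℝ) ≤ (Tm i : ℝ) := by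
          exact_mod_cast hcard
        have h2 : (Tm i : ℝ) = ((TP i : ℕ):ℝ) + (L i : ℝ) := by
          rw [← hTPL i]; push_cast; ring
        rw [hD]
        nlinarith
      have hseq : ((I:ℝ)+2) * g n ≤ seqM g m n := by
        unfold seqM
        have h1 : I + 2 ≤ max 1 ((Finset.range (n+1)).filter fun j => m j ≤ n).card := by
          omega
        have h2 : ((I:ℝ)+2) ≤ ((max 1 (((Finset.range (n + 1)).filter fun j => m j ≤ n).card) : ℕ) : ℝ) := by
          exact_mod_cast h1
        nlinarith [hg.1 n]
      have hseqpos : (0:ℝ) < seqM g m n := seqM_pos hg.1 m n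
      refine ENNReal.ofReal_le_ofReal ?_
      calc (((C \ Set.Iic k) ∩ Set.Iic n).ncard : ℝ) / seqM g m n
          ≤ (D * g n) / (((I:ℝ)+2) * g n) := by
            refine div_le_div₀ (by positivity) hnum (by positivity) hseq
      _ = D / ((I:ℝ)+2) := by
            rw [mul_div_mul_right _ _ (by linarith : g n ≠ 0)]
  -- Claim A : C ∉ Exh h, contradiction
  have hCout := hsub hCin
  rw [Exh, Set.mem_setOf_eq] at hCout
  obtain ⟨k, hk⟩ := (eventually_le_ofReal hCout (by norm_num : (0:ℝ) < 1/2)).exists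
  have hsk : k < s (k+1) := by have := hsm (k+1); omega
  have hsubset : Set.Icc (s (k+1)) (N (k+1)) ⊆ (C \ Set.Iic k) ∩ Set.Iic (N (k+1)) := by
    intro e he
    refine ⟨⟨?_, ?_⟩, ?_⟩
    · rw [hC]
      exact Set.mem_iUnion.2 ⟨k+1, he⟩
    · rw [Set.mem_Iic, not_le]
      have := he.1
      omega
    · exact Set.mem_Iic.2 he.2
  have hfin : ((C \ Set.Iic k) ∩ Set.Iic (N (k+1))).Finite :=
    (Set.finite_Iic _).subset Set.inter_subset_right
  have hcard2 : L (k+1) ≤ ((C \ Set.Iic k) ∩ Set.Iic (N (k+1))).ncard := by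
    rw [← hblockcard (k+1)]
    exact Set.ncard_le_ncard hsubset hfin
  have hterm : (1:ℝ) ≤ ((((C \ Set.Iic k) ∩ Set.Iic (N (k+1))).ncard : ℕ) : ℝ) / h (N (k+1)) := by
    rw [le_div_iff₀ (hh.1 _)]
    have h1 := hLh (k+1)
    have h2 : ((L (k+1) : ℕ) : ℝ) ≤ ((((C \ Set.Iic k) ∩ Set.Iic (N (k+1))).ncard : ℕ) : ℝ) := by
      exact_mod_cast hcard2
    linarith
  have hlow : ENNReal.ofReal 1 ≤ phiSub h (C \ Set.Iic k) := by
    refine le_trans (ENNReal.ofReal_le_ofReal hterm) ?_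
    exact le_iSup (fun n => ENNReal.ofReal (((((C \ Set.Iic k) ∩ Set.Iic n).ncard : ℕ):ℝ) / h n)) (N (k+1))
  have hfinal := le_trans hlow hk
  rw [ENNReal.ofReal_le_ofReal_iff (by norm_num)] at hfinal
  linarith
end OOfExh
/-- For `g, h ∈ 𝒢`, the following are equivalent: (a) the
compact-embedding property of `V[g(n)]` into `V[h(n)]`; (b) `g(n) = o(h(n))`;
(c) `Exh(φ_{g^M}) ⊆ Exh(φ_h)` for some increasing sequence `M`. -/
theorem stmt8 (g h : ℕ → ℝ) (hg : MemG g) (hh : MemG h) :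
    (CompactEmbeddingChan g h ↔ Tendsto (fun n => g n / h n) atTop (nhds 0)) ∧
    ((∃ m : ℕ → ℕ, StrictMono m ∧ Exh (seqM g m) ⊆ Exh h) ↔
      Tendsto (fun n => g n / h n) atTop (nhds 0)) := by
  constructor
  · exact ⟨fun hce => o_of_compactEmbedding hg hh hce, fun ht => compactEmbedding_of_o hg hh ht⟩
  · exact ⟨fun hex => o_of_exh hg hh hex, fun ht => exh_of_o hg hh ht⟩
end

section
/- Let g, h ∈ 𝒢. The following are equivalent: (a) g(n) = O(h(n)), i.e. there is η > 0 such that g(n)/h(n) ≤ η for all n ∈ ℕ; (b) Exh(φ_g) ⊆ Exh(φ_h); (c) V[g(n)] ⊆ V[h(n)]. -/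
open Filter Set
open scoped ENNReal

/-! ### Auxiliary lemmas -/

lemma anti_sum_le (f : ℕ → ℝ) (hf : Antitone f) :
    ∀ (m : ℕ) (T : Finset ℕ), T.card = m → ∑ j ∈ T, f j ≤ ∑ j ∈ Finset.range m, f j := by
  intro m
  induction m with
  | zero => intro T hT; simp [Finset.card_eq_zero.mp hT]
  | succ m ih =>
    intro T hT
    have hne : T.Nonempty := Finset.card_pos.mp (by omega)
    set M := T.max' hne with hM
    have hMem : M ∈ T := T.max'_mem hne
    have hsub : T ⊆ Finset.range (M + 1) := by
      intro a ha
      exact Finset.mem_range.mpr (Nat.lt_succ_of_le (T.le_max' a ha))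
    have hcard : m + 1 ≤ M + 1 := by
      have := Finset.card_le_card hsub
      simpa [hT] using this
    have hmM : m ≤ M := by omega
    have h1 : ∑ j ∈ T.erase M, f j ≤ ∑ j ∈ Finset.range m, f j :=
      ih _ (by rw [Finset.card_erase_of_mem hMem, hT]; omega)
    calc ∑ j ∈ T, f j = ∑ j ∈ T.erase M, f j + f M := (Finset.sum_erase_add T f hMem).symm
    _ ≤ ∑ j ∈ Finset.range m, f j + f m := add_le_add h1 (hf hmM)
    _ = ∑ j ∈ Finset.range (m+1), f j := (Finset.sum_range_succ f m).symm

lemma geom_range_le (a : ℕ) : ∀ n : ℕ, ∑ j ∈ Finset.range n, (1/2:ℝ)^(a+j) ≤ 2 * (1/2)^a := by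
  intro n
  induction n generalizing a with
  | zero => simp only [Finset.range_zero, Finset.sum_empty]; positivity
  | succ n ih =>
    rw [Finset.sum_range_succ' (fun j => (1/2:ℝ)^(a+j)) n]
    have h2 : ∑ j ∈ Finset.range n, (1/2:ℝ)^(a+(j+1)) ≤ 2 * (1/2)^(a+1) := by
      calc ∑ j ∈ Finset.range n, (1/2:ℝ)^(a+(j+1))
          = ∑ j ∈ Finset.range n, (1/2:ℝ)^((a+1)+j) := by
            apply Finset.sum_congr rfl; intro j _; ring_nf
      _ ≤ _ := ih (a+1)
    calc ∑ j ∈ Finset.range n, (1/2:ℝ)^(a+(j+1)) + (1/2)^(a+0)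
        ≤ 2 * (1/2:ℝ)^(a+1) + (1/2)^(a+0) := add_le_add h2 le_rfl
    _ ≤ 2 * (1/2)^a := le_of_eq (by rw [pow_succ]; ring)

lemma geom_Icc_le (a b : ℕ) : ∑ k ∈ Finset.Icc a b, (1/2:ℝ)^k ≤ 2 * (1/2)^a := by
  have : Finset.Icc a b = Finset.Ico a (b+1) := by ext x; simp only [Finset.mem_Icc, Finset.mem_Ico]; omega
  rw [this, Finset.sum_Ico_eq_sum_range]
  exact geom_range_le a (b+1-a)

lemma seq_step (g h : ℕ → ℝ) (hg : MemG g) (hh : MemG h)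
    (hna : ∀ η : ℝ, 0 < η → ∃ n, η < g n / h n) (k A : ℕ) (G : ℝ) :
    ∃ n : ℕ, A ≤ n ∧ 1 ≤ h n ∧ 4 * g n ≤ (n : ℝ) ∧ (2:ℝ)^k * h n ≤ g n ∧ G ≤ g n := by
  obtain ⟨B₁, hB₁⟩ : ∃ B, ∀ n ≥ B, 1 ≤ h n := eventually_atTop.mp (hh.2.2.1.eventually_ge_atTop 1)
  obtain ⟨B₂, hB₂⟩ : ∃ B : ℕ, ∀ n ≥ B, (4:ℝ) ≤ (n:ℝ) / g n :=
    eventually_atTop.mp (hg.2.2.2.2.eventually_ge_atTop 4)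
  obtain ⟨B₃, hB₃⟩ : ∃ B, ∀ n ≥ B, G ≤ g n := eventually_atTop.mp (hg.2.2.1.eventually_ge_atTop G)
  set B := max (max A B₁) (max B₂ B₃) + 1 with hB
  have hBpos : 0 < B := by omega
  set η : ℝ := (Finset.range B).sup' (Finset.nonempty_range_iff.mpr (by omega)) (fun n => g n / h n) with hη
  set η' : ℝ := max η ((2:ℝ)^k) + 1 with hη'
  have hη'pos : 0 < η' := by
    have : (0:ℝ) < 2^k := by positivity
    have := le_max_right η ((2:ℝ)^k)
    nlinarith
  obtain ⟨n, hn⟩ := hna η' hη'pos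
  have hnB : B ≤ n := by
    by_contra hc
    push_neg at hc
    have hmem : n ∈ Finset.range B := Finset.mem_range.mpr hc
    have hle : g n / h n ≤ η := Finset.le_sup' (fun n => g n / h n) hmem
    have hle2 : η ≤ η' - 1 := by
      rw [hη']; have := le_max_left η ((2:ℝ)^k); linarith
    linarith
  have hA : A ≤ n := by omega
  have h1 : 1 ≤ h n := hB₁ n (by omega)
  have hhn : 0 < h n := hh.1 n
  have h4 : 4 * g n ≤ (n:ℝ) := by
    have := hB₂ n (by omega)
    have hgn := hg.1 n
    rw [le_div_iff₀ hgn] at this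
    linarith
  have h2k : (2:ℝ)^k * h n ≤ g n := by
    have : (2:ℝ)^k ≤ η' := by
      have := le_max_right η ((2:ℝ)^k); nlinarith
    have hlt : (2:ℝ)^k < g n / h n := lt_of_le_of_lt this hn
    rw [lt_div_iff₀ hhn] at hlt
    linarith
  exact ⟨n, hA, h1, h4, h2k, hB₃ n (by omega)⟩

lemma exists_seq (g h : ℕ → ℝ) (hg : MemG g) (hh : MemG h)
    (hna : ∀ η : ℝ, 0 < η → ∃ n, η < g n / h n) :
    ∃ N : ℕ → ℕ, (∀ k, 2 * N k + 1 ≤ N (k+1)) ∧ 1 ≤ N 0 ∧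
      (∀ k, 2 * g (N k) ≤ g (N (k+1))) ∧
      (∀ k, 1 ≤ h (N k) ∧ 4 * g (N k) ≤ ((N k : ℕ) : ℝ) ∧ (2:ℝ)^k * h (N k) ≤ g (N k)) := by
  have step := seq_step g h hg hh hna
  let N : ℕ → ℕ := fun k => Nat.rec (Classical.choose (step 0 1 0))
    (fun k ih => Classical.choose (step (k+1) (2*ih+1) (2 * g ih))) k
  have hN0 : N 0 = Classical.choose (step 0 1 0) := rfl
  have hNs : ∀ k, N (k+1) = Classical.choose (step (k+1) (2*(N k)+1) (2 * g (N k))) := fun k => rfl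
  refine ⟨N, ?_, ?_, ?_, ?_⟩
  · intro k
    have := Classical.choose_spec (step (k+1) (2*(N k)+1) (2 * g (N k)))
    rw [← hNs k] at this
    exact this.1
  · have := Classical.choose_spec (step 0 1 0)
    rw [← hN0] at this
    exact this.1
  · intro k
    have := Classical.choose_spec (step (k+1) (2*(N k)+1) (2 * g (N k)))
    rw [← hNs k] at this
    exact this.2.2.2.2
  · intro k
    cases k with
    | zero =>
      have := Classical.choose_spec (step 0 1 0)
      rw [← hN0] at this
      exact ⟨this.2.1, this.2.2.1, by simpa using this.2.2.2.1⟩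
    | succ k =>
      have := Classical.choose_spec (step (k+1) (2*(N k)+1) (2 * g (N k)))
      rw [← hNs k] at this
      exact ⟨this.2.1, this.2.2.1, this.2.2.2.1⟩
lemma part_b (g h : ℕ → ℝ) (hg : MemG g) (hh : MemG h)
    (hna : ∀ η : ℝ, 0 < η → ∃ n, η < g n / h n) :
    ∃ C : Set ℕ, C ∈ Exh g ∧ C ∉ Exh h := by
  obtain ⟨N, hNs, hN0, hNg, hNp⟩ := exists_seq g h hg hh hna
  have hNmono : StrictMono N := strictMono_nat_of_lt_succ (fun k => by have := hNs k; omega)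
  have hNpow : ∀ k, 2^k ≤ N k := by
    intro k
    induction k with
    | zero => simpa using hN0
    | succ k ih => have := hNs k; calc 2^(k+1) = 2*2^k := by ring
                   _ ≤ 2 * N k := by omega
                   _ ≤ N (k+1) := by omega
  set c : ℕ → ℕ := fun k => ⌈h (N k)⌉₊ with hc
  have hhpos : ∀ k, (0:ℝ) < h (N k) := fun k => hh.1 _
  have hch : ∀ k, h (N k) ≤ (c k : ℝ) := fun k => Nat.le_ceil _
  have hc2h : ∀ k, (c k : ℝ) ≤ 2 * h (N k) := by
    intro k
    have h1 := (hNp k).1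
    have := Nat.ceil_lt_add_one (le_of_lt (hhpos k))
    calc (c k : ℝ) ≤ h (N k) + 1 := le_of_lt this
    _ ≤ 2 * h (N k) := by linarith
  have hck : ∀ k, (c k : ℝ) ≤ 2 * (1/2:ℝ)^k * g (N k) := by
    intro k
    have h2k := (hNp k).2.2
    have hpk : (0:ℝ) < 2^k := by positivity
    have : h (N k) ≤ (1/2:ℝ)^k * g (N k) := by
      rw [div_pow, one_pow, div_mul_eq_mul_div, le_div_iff₀ hpk]
      linarith
    calc (c k : ℝ) ≤ 2 * h (N k) := hc2h k
    _ ≤ 2 * ((1/2:ℝ)^k * g (N k)) := by linarith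
    _ = 2 * (1/2:ℝ)^k * g (N k) := by ring
  have hcN : ∀ k, 2 * c k ≤ N k := by
    intro k
    have h4 := (hNp k).2.1
    have hpk : (1:ℝ) ≤ 2^k := one_le_pow₀ (by norm_num : (1:ℝ) ≤ 2)
    have h2k := (hNp k).2.2
    have hh1 : h (N k) ≤ g (N k) := by nlinarith [hhpos k]
    have : (2 * c k : ℝ) ≤ (N k : ℝ) := by
      push_cast
      calc (2:ℝ) * c k ≤ 4 * h (N k) := by have := hc2h k; linarith
      _ ≤ 4 * g (N k) := by linarith
      _ ≤ (N k : ℝ) := h4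
    exact_mod_cast this
  have hc1 : ∀ k, 1 ≤ c k := by
    intro k
    have : (1:ℝ) ≤ (c k : ℝ) := le_trans (hNp k).1 (hch k)
    exact_mod_cast this
  set C : Set ℕ := ⋃ k, Set.Ioc (N k - c k) (N k) with hC
  refine ⟨C, ?_, ?_⟩
  · -- C ∈ Exh g
    simp only [Exh, Set.mem_setOf_eq]
    rw [ENNReal.tendsto_atTop_zero]
    intro ε hε
    -- find K with ofReal (4 * (1/2)^K) ≤ ε
    obtain ⟨K, hK⟩ : ∃ K : ℕ, ENNReal.ofReal (4 * (1/2:ℝ)^K) ≤ ε := by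
      have hr : Tendsto (fun K : ℕ => (4:ℝ) * (1/2)^K) atTop (nhds 0) := by
        have := tendsto_pow_atTop_nhds_zero_of_lt_one (by norm_num : (0:ℝ) ≤ 1/2) (by norm_num : (1/2:ℝ) < 1)
        simpa using this.const_mul (4:ℝ)
      have he : Tendsto (fun K : ℕ => ENNReal.ofReal ((4:ℝ) * (1/2)^K)) atTop (nhds 0) := by
        have := (ENNReal.tendsto_ofReal hr)
        simpa using this
      exact (he.eventually_lt_const hε).exists.imp (fun K hK => le_of_lt hK)
    refine ⟨N K, fun m hm => ?_⟩
    refine iSup_le fun n => ?_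
    refine le_trans ?_ hK
    apply ENNReal.ofReal_le_ofReal
    have hgn : (0:ℝ) < g n := hg.1 n
    rw [div_le_iff₀ hgn]
    -- count bound
    set S : Finset ℕ := (Finset.Icc (K+1) (2*n)).biUnion
      (fun k => Finset.Ioc (N k - c k) (min (N k) n)) with hS
    have hsub : (C \ Set.Iic m) ∩ Set.Iic n ⊆ (S : Set ℕ) := by
      rintro i ⟨⟨hiC, him⟩, hin⟩
      simp only [Set.mem_Iic, not_le] at him hin
      obtain ⟨k, hk⟩ := Set.mem_iUnion.mp hiC
      obtain ⟨hk1, hk2⟩ := hk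
      have hkK : K + 1 ≤ k := by
        by_contra hcon
        push_neg at hcon
        have : N k ≤ N K := hNmono.monotone (by omega)
        omega
      have hk2n : k ≤ 2 * n := by
        have h1 : 2 * c k ≤ N k := hcN k
        have h2 : 2^k ≤ N k := hNpow k
        have h3 : k < 2^k := (Nat.lt_two_pow_self (n := k))
        omega
      simp only [S, Finset.coe_biUnion, Set.mem_iUnion, Finset.mem_coe, Finset.mem_Ioc,
        Finset.mem_Icc]
      exact ⟨k, by omega, by omega, by omega⟩
    have hfin : (S : Set ℕ).Finite := S.finite_toSet
    have hcard1 : ((C \ Set.Iic m) ∩ Set.Iic n).ncard ≤ S.card := by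
      calc ((C \ Set.Iic m) ∩ Set.Iic n).ncard ≤ (S : Set ℕ).ncard :=
            Set.ncard_le_ncard hsub hfin
      _ = S.card := Set.ncard_coe_finset S
    have hcard2 : S.card ≤ ∑ k ∈ Finset.Icc (K+1) (2*n), (Finset.Ioc (N k - c k) (min (N k) n)).card :=
      Finset.card_biUnion_le
    have hperk : ∀ k, ((Finset.Ioc (N k - c k) (min (N k) n)).card : ℝ) ≤ 4 * g n * (1/2)^k := by
      intro k
      rw [Nat.card_Ioc]
      have hpk : (0:ℝ) ≤ (1/2:ℝ)^k := by positivity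
      rcases le_or_gt (N k) n with hkn | hkn
      · -- full block
        have hmin : min (N k) n = N k := min_eq_left hkn
        rw [hmin]
        have : N k - (N k - c k) = c k := by have := hcN k; omega
        rw [this]
        have hg1 : g (N k) ≤ g n := hg.2.1 hkn
        calc (c k : ℝ) ≤ 2 * (1/2:ℝ)^k * g (N k) := hck k
        _ ≤ 2 * (1/2:ℝ)^k * g n := by nlinarith
        _ ≤ 4 * g n * (1/2)^k := by nlinarith [le_of_lt hgn]
      · have hmin : min (N k) n = n := min_eq_right (le_of_lt hkn)
        rw [hmin]
        rcases le_or_gt n (N k - c k) with hna2 | hna2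
        · have : n - (N k - c k) = 0 := by omega
          rw [this]
          simp only [Nat.cast_zero]
          positivity
        · -- partial block
          have hle : n - (N k - c k) ≤ c k := by omega
          have h2n : N k ≤ 2 * n := by have := hcN k; omega
          have hn1 : 1 ≤ n := by omega
          have hgN2 : g (N k) ≤ 2 * g n := by
            have hmono := hg.2.2.2.1 (le_of_lt hkn : n ≤ N k)
            simp only at hmono
            have hgN : (0:ℝ) < g (N k) := hg.1 _
            rw [div_le_div_iff₀ hgn hgN] at hmono
            have hcast : (N k : ℝ) ≤ 2 * n := by exact_mod_cast h2n
            have hn1' : (1:ℝ) ≤ (n:ℝ) := by exact_mod_cast hn1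
            nlinarith
          calc ((n - (N k - c k) : ℕ) : ℝ) ≤ (c k : ℝ) := by exact_mod_cast hle
          _ ≤ 2 * (1/2:ℝ)^k * g (N k) := hck k
          _ ≤ 2 * (1/2:ℝ)^k * (2 * g n) := by nlinarith
          _ = 4 * g n * (1/2)^k := by ring
    calc (((C \ Set.Iic m) ∩ Set.Iic n).ncard : ℝ)
        ≤ (S.card : ℝ) := by exact_mod_cast hcard1
    _ ≤ ((∑ k ∈ Finset.Icc (K+1) (2*n), (Finset.Ioc (N k - c k) (min (N k) n)).card : ℕ) : ℝ) := by
        exact_mod_cast hcard2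
    _ = ∑ k ∈ Finset.Icc (K+1) (2*n), ((Finset.Ioc (N k - c k) (min (N k) n)).card : ℝ) := by
        push_cast; ring
    _ ≤ ∑ k ∈ Finset.Icc (K+1) (2*n), 4 * g n * (1/2:ℝ)^k :=
        Finset.sum_le_sum (fun k _ => hperk k)
    _ = 4 * g n * ∑ k ∈ Finset.Icc (K+1) (2*n), (1/2:ℝ)^k := by rw [Finset.mul_sum]
    _ ≤ 4 * g n * (2 * (1/2:ℝ)^(K+1)) := by
        have := geom_Icc_le (K+1) (2*n)
        nlinarith [le_of_lt hgn]
    _ = 4 * (1/2:ℝ)^K * g n := by rw [pow_succ]; ring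
  · -- C ∉ Exh h
    intro hmem
    simp only [Exh, Set.mem_setOf_eq] at hmem
    have hev := hmem.eventually_lt_const (zero_lt_one' ℝ≥0∞)
    obtain ⟨m, hm⟩ := hev.exists
    have hkey : (1:ℝ≥0∞) ≤ phiSub h (C \ Set.Iic m) := by
      set k := m + 2 with hk
      have hgt : m < N k - c k := by
        have h1 : 2 * c k ≤ N k := hcN k
        have h2 : 2^k ≤ N k := hNpow k
        have h3 : m + 1 ≤ 2^m := by have := (Nat.lt_two_pow_self (n := m)); omega
        have h4 : 2^k = 4 * 2^m := by rw [hk]; ring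
        omega
      have hsub2 : (Finset.Ioc (N k - c k) (N k) : Set ℕ) ⊆ (C \ Set.Iic m) ∩ Set.Iic (N k) := by
        intro i hi
        simp only [Finset.coe_Ioc, Set.mem_Ioc] at hi
        refine ⟨⟨Set.mem_iUnion.mpr ⟨k, Set.mem_Ioc.mpr hi⟩, ?_⟩, Set.mem_Iic.mpr hi.2⟩
        simp only [Set.mem_Iic, not_le]
        omega
      have hcard : (c k : ℝ) ≤ (((C \ Set.Iic m) ∩ Set.Iic (N k)).ncard : ℝ) := by
        have h1 : ((Finset.Ioc (N k - c k) (N k) : Finset ℕ) : Set ℕ).ncard = c k := by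
          rw [Set.ncard_coe_finset, Nat.card_Ioc]
          have := hcN k; omega
        have h2 : ((Finset.Ioc (N k - c k) (N k) : Finset ℕ) : Set ℕ).ncard ≤
            ((C \ Set.Iic m) ∩ Set.Iic (N k)).ncard :=
          Set.ncard_le_ncard hsub2 ((Set.finite_Iic (N k)).subset Set.inter_subset_right)
        rw [h1] at h2
        exact_mod_cast h2
      have hterm : (1:ℝ≥0∞) ≤ ENNReal.ofReal ((((C \ Set.Iic m) ∩ Set.Iic (N k)).ncard : ℝ) / h (N k)) := by
        rw [show (1:ℝ≥0∞) = ENNReal.ofReal 1 by simp]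
        apply ENNReal.ofReal_le_ofReal
        rw [le_div_iff₀ (hhpos k)]
        calc 1 * h (N k) = h (N k) := by ring
        _ ≤ (c k : ℝ) := hch k
        _ ≤ _ := hcard
      exact le_trans hterm (le_iSup (fun n => ENNReal.ofReal ((((C \ Set.Iic m) ∩ Set.Iic n).ncard : ℝ) / h n)) (N k))
    exact absurd hm (not_lt.mpr hkey)
lemma a_to_b (g h : ℕ → ℝ) (hg : MemG g) (hh : MemG h)
    (ha : ∃ η : ℝ, 0 < η ∧ ∀ n, g n / h n ≤ η) : Exh g ⊆ Exh h := by
  obtain ⟨η, hη, hle⟩ := ha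
  intro C hC
  simp only [Exh, Set.mem_setOf_eq] at hC ⊢
  have key : ∀ D : Set ℕ, phiSub h D ≤ ENNReal.ofReal η * phiSub g D := by
    intro D
    refine iSup_le fun n => ?_
    have hgn := hg.1 n
    have hhn := hh.1 n
    have h1 : g n ≤ η * h n := (div_le_iff₀ hhn).mp (hle n)
    have hcnt : (0:ℝ) ≤ ((D ∩ Set.Iic n).ncard : ℝ) := Nat.cast_nonneg _
    have hreal : ((D ∩ Set.Iic n).ncard : ℝ) / h n ≤ η * (((D ∩ Set.Iic n).ncard : ℝ) / g n) := by
      rw [div_le_iff₀ hhn]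
      have heq : η * (((D ∩ Set.Iic n).ncard : ℝ) / g n) * h n
          = ((D ∩ Set.Iic n).ncard : ℝ) * (η * h n) / g n := by ring
      rw [heq, le_div_iff₀ hgn]
      nlinarith [mul_le_mul_of_nonneg_left h1 hcnt]
    calc ENNReal.ofReal (((D ∩ Set.Iic n).ncard : ℝ) / h n)
        ≤ ENNReal.ofReal (η * (((D ∩ Set.Iic n).ncard : ℝ) / g n)) :=
          ENNReal.ofReal_le_ofReal hreal
    _ = ENNReal.ofReal η * ENNReal.ofReal (((D ∩ Set.Iic n).ncard : ℝ) / g n) :=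
          ENNReal.ofReal_mul (le_of_lt hη)
    _ ≤ ENNReal.ofReal η * phiSub g D := by
          gcongr
          exact le_iSup (fun n => ENNReal.ofReal (((D ∩ Set.Iic n).ncard : ℝ) / g n)) n
  have h0 : Tendsto (fun k => ENNReal.ofReal η * phiSub g (C \ Set.Iic k)) atTop (nhds 0) := by
    have := ENNReal.Tendsto.const_mul (a := ENNReal.ofReal η) hC
      (Or.inr (ENNReal.ofReal_ne_top (r := η)))
    simpa using this
  exact tendsto_of_tendsto_of_tendsto_of_le_of_le tendsto_const_nhds h0
    (fun k => bot_le) (fun k => key _)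

lemma a_to_c (g h : ℕ → ℝ) (hg : MemG g) (hh : MemG h)
    (ha : ∃ η : ℝ, 0 < η ∧ ∀ n, g n / h n ≤ η) :
    ∀ x : ℝ → ℝ, MemChanturia g x → MemChanturia h x := by
  rintro x ⟨hb, η₀, hη₀, hbd⟩
  obtain ⟨η, hη, hle⟩ := ha
  refine ⟨hb, η₀ * η, by positivity, fun n => le_trans (hbd n) (ENNReal.ofReal_le_ofReal ?_)⟩
  have hhn := hh.1 n
  have h1 : g n ≤ η * h n := (div_le_iff₀ hhn).mp (hle n)
  nlinarith
noncomputable def spikeP (i : ℕ) : ℝ := 1/((i:ℝ)+2)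

lemma spikeP_pos (i : ℕ) : 0 < spikeP i := by
  unfold spikeP; positivity

lemma spikeP_strictAnti : StrictAnti spikeP := by
  intro i j hij
  unfold spikeP
  apply one_div_lt_one_div_of_lt (by positivity)
  have : (i:ℝ) < j := by exact_mod_cast hij
  linarith

lemma spikeP_le_one (i : ℕ) : spikeP i ≤ 1 := by
  unfold spikeP
  rw [div_le_one (by positivity)]
  have : (0:ℝ) ≤ (i:ℝ) := Nat.cast_nonneg i
  linarith

lemma spikeP_inj : Function.Injective spikeP := spikeP_strictAnti.injective

open Classical in
noncomputable def spikeX (dd : ℕ → ℝ) : ℝ → ℝ :=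
  fun u => if hu : ∃ i : ℕ, u = spikeP i then dd (Nat.find hu) else 0

lemma spikeX_spike (dd : ℕ → ℝ) (i : ℕ) : spikeX dd (spikeP i) = dd i := by
  unfold spikeX
  rw [dif_pos ⟨i, rfl⟩]
  congr 1
  have hspec := Nat.find_spec (⟨i, rfl⟩ : ∃ i' : ℕ, spikeP i = spikeP i')
  exact (spikeP_inj hspec.symm)

lemma spikeX_ne (dd : ℕ → ℝ) (u : ℝ) (h : ∀ i, u ≠ spikeP i) : spikeX dd u = 0 := by
  unfold spikeX
  rw [dif_neg]
  rintro ⟨i, hi⟩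
  exact h i hi

lemma spikeX_nonneg (dd : ℕ → ℝ) (h0 : ∀ i, 0 ≤ dd i) (u : ℝ) : 0 ≤ spikeX dd u := by
  unfold spikeX
  split_ifs with hu
  · exact h0 _
  · exact le_refl 0

lemma spikeX_le (dd : ℕ → ℝ) (hanti : Antitone dd) (h0 : ∀ i, 0 ≤ dd i) (u : ℝ) :
    spikeX dd u ≤ dd 0 := by
  unfold spikeX
  split_ifs with hu
  · exact hanti (Nat.zero_le _)
  · exact h0 0

lemma spike_sum_aux (dd : ℕ → ℝ) (hanti : Antitone dd) (h0 : ∀ i, 0 ≤ dd i)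
    (n : ℕ) (A : Finset (Fin n)) (r : Fin n → ℝ) (hinj : Set.InjOn r ↑A) :
    ∑ i ∈ A, spikeX dd (r i) ≤ ∑ j ∈ Finset.range n, dd j := by
  classical
  set x := spikeX dd with hx
  set A' := A.filter (fun i => x (r i) ≠ 0) with hA'
  have hsum : ∑ i ∈ A', x (r i) = ∑ i ∈ A, x (r i) :=
    Finset.sum_filter_of_ne (fun i _ hne => hne)
  set J : Fin n → ℕ := fun i => if hji : ∃ j : ℕ, r i = spikeP j then Nat.find hji else 0 with hJ
  have hJP : ∀ i ∈ A', r i = spikeP (J i) ∧ x (r i) = dd (J i) := by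
    intro i hi
    have hne : x (r i) ≠ 0 := (Finset.mem_filter.mp hi).2
    have hex_i : ∃ j : ℕ, r i = spikeP j := by
      by_contra hcon; push_neg at hcon
      exact hne (spikeX_ne dd _ hcon)
    have h1 : J i = Nat.find hex_i := by rw [hJ]; simp only; rw [dif_pos hex_i]
    have h2 : r i = spikeP (Nat.find hex_i) := Nat.find_spec hex_i
    refine ⟨by rw [h1]; exact h2, ?_⟩
    rw [h1]
    calc x (r i) = x (spikeP (Nat.find hex_i)) := by rw [← h2]
    _ = dd (Nat.find hex_i) := spikeX_spike dd _
  have hJinj : ∀ i ∈ A', ∀ j ∈ A', J i = J j → i = j := by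
    intro i hi j hj hij
    have h1 := (hJP i hi).1
    have h2 := (hJP j hj).1
    apply hinj (Finset.mem_coe.mpr (Finset.filter_subset _ _ hi))
      (Finset.mem_coe.mpr (Finset.filter_subset _ _ hj))
    rw [h1, h2, hij]
  have hcardle : (A'.image J).card ≤ n := by
    calc (A'.image J).card ≤ A'.card := Finset.card_image_le
    _ ≤ A.card := Finset.card_filter_le A _
    _ ≤ (Finset.univ : Finset (Fin n)).card := Finset.card_le_univ A
    _ = n := by simp
  calc ∑ i ∈ A, x (r i) = ∑ i ∈ A', x (r i) := hsum.symm
  _ = ∑ i ∈ A', dd (J i) := Finset.sum_congr rfl (fun i hi => (hJP i hi).2)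
  _ = ∑ j ∈ A'.image J, dd j := (Finset.sum_image hJinj).symm
  _ ≤ ∑ j ∈ Finset.range (A'.image J).card, dd j := anti_sum_le dd hanti _ _ rfl
  _ ≤ ∑ j ∈ Finset.range n, dd j := Finset.sum_le_sum_of_subset_of_nonneg
        (Finset.range_subset_range.mpr hcardle) (fun j _ _ => h0 j)

lemma spike_sum_le (dd : ℕ → ℝ) (hanti : Antitone dd) (h0 : ∀ i, 0 ≤ dd i)
    (n : ℕ) (s t : Fin n → ℝ) (hst : NonoverlappingFin s t) :
    ∑ i, |spikeX dd (t i) - spikeX dd (s i)| ≤ 2 * ∑ j ∈ Finset.range n, dd j := by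
  classical
  set x := spikeX dd with hx
  set A := Finset.univ.filter (fun i : Fin n => s i < t i) with hA
  have h1 : ∑ i, |x (t i) - x (s i)| = ∑ i ∈ A, |x (t i) - x (s i)| := by
    symm
    apply Finset.sum_filter_of_ne
    intro i _ hne
    rcases lt_or_eq_of_le (hst.1 i).2.1 with hlt | heq
    · exact hlt
    · exact absurd (by rw [heq, sub_self, abs_zero]) hne
  have hmem : ∀ i, i ∈ A → s i < t i := by
    intro i hi
    exact (Finset.mem_filter.mp hi).2
  have hsinj : Set.InjOn s ↑A := by
    intro i hi j hj hij
    by_contra hne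
    have hdisj := hst.2 hne
    have hi' := hmem i (Finset.mem_coe.mp hi)
    have hj' := hmem j (Finset.mem_coe.mp hj)
    set z := (s i + min (t i) (t j))/2 with hz
    have hzi : z ∈ Set.Ioo (s i) (t i) := by
      constructor
      · have : s i < min (t i) (t j) := lt_min hi' (by rw [hij]; exact hj')
        rw [hz]; linarith
      · have h1 := min_le_left (t i) (t j)
        rw [hz]; have := hi'; simp only [lt_min_iff] at *
        linarith [min_le_left (t i) (t j)]
    have hzj : z ∈ Set.Ioo (s j) (t j) := by
      constructor
      · have : s i < min (t i) (t j) := lt_min hi' (by rw [hij]; exact hj')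
        rw [hz, ← hij]; linarith
      · rw [hz]
        have h2 := min_le_right (t i) (t j)
        have : s i < t j := by rw [hij]; exact hj'
        linarith
    exact Set.disjoint_left.mp hdisj hzi hzj
  have htinj : Set.InjOn t ↑A := by
    intro i hi j hj hij
    by_contra hne
    have hdisj := hst.2 hne
    have hi' := hmem i (Finset.mem_coe.mp hi)
    have hj' := hmem j (Finset.mem_coe.mp hj)
    set z := (max (s i) (s j) + t i)/2 with hz
    have hzi : z ∈ Set.Ioo (s i) (t i) := by
      constructor
      · have h1 := le_max_left (s i) (s j)
        have : max (s i) (s j) < t i := max_lt hi' (by rw [hij]; exact hj')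
        rw [hz]; linarith
      · have : max (s i) (s j) < t i := max_lt hi' (by rw [hij]; exact hj')
        rw [hz]; linarith
    have hzj : z ∈ Set.Ioo (s j) (t j) := by
      constructor
      · have h1 := le_max_right (s i) (s j)
        have : max (s i) (s j) < t i := max_lt hi' (by rw [hij]; exact hj')
        rw [hz]; linarith
      · have : max (s i) (s j) < t i := max_lt hi' (by rw [hij]; exact hj')
        rw [hz, ← hij]; linarith
    exact Set.disjoint_left.mp hdisj hzi hzj
  have h2 : ∀ i, |x (t i) - x (s i)| ≤ x (s i) + x (t i) := by
    intro i
    rw [abs_sub_le_iff]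
    constructor <;> nlinarith [spikeX_nonneg dd h0 (s i), spikeX_nonneg dd h0 (t i)]
  calc ∑ i, |x (t i) - x (s i)| = ∑ i ∈ A, |x (t i) - x (s i)| := h1
  _ ≤ ∑ i ∈ A, (x (s i) + x (t i)) := Finset.sum_le_sum (fun i _ => h2 i)
  _ = ∑ i ∈ A, x (s i) + ∑ i ∈ A, x (t i) := Finset.sum_add_distrib
  _ ≤ ∑ j ∈ Finset.range n, dd j + ∑ j ∈ Finset.range n, dd j :=
      add_le_add (spike_sum_aux dd hanti h0 n A s hsinj) (spike_sum_aux dd hanti h0 n A t htinj)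
  _ = 2 * ∑ j ∈ Finset.range n, dd j := by ring

lemma spike_family (dd : ℕ → ℝ) (h0 : ∀ i, 0 ≤ dd i) (n : ℕ) :
    ∃ s t : Fin n → ℝ, NonoverlappingFin s t ∧
      ∑ i, |spikeX dd (t i) - spikeX dd (s i)| = ∑ j ∈ Finset.range n, dd j := by
  classical
  refine ⟨fun i => (spikeP (i.1+1) + spikeP i.1)/2, fun i => spikeP i.1, ⟨?_, ?_⟩, ?_⟩
  · intro i
    have hlt : spikeP (i.1+1) < spikeP i.1 := spikeP_strictAnti (by omega)
    have h1 := spikeP_pos (i.1+1)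
    have h2 := spikeP_pos i.1
    refine ⟨by linarith, by linarith, spikeP_le_one i.1⟩
  · intro i j hne
    -- WLOG via helper
    have key : ∀ i j : Fin n, (i:ℕ) < (j:ℕ) →
        Disjoint (Set.Ioo ((spikeP (i.1+1) + spikeP i.1)/2) (spikeP i.1))
          (Set.Ioo ((spikeP (j.1+1) + spikeP j.1)/2) (spikeP j.1)) := by
      intro i j hij
      rw [Set.disjoint_left]
      rintro a ⟨ha1, ha2⟩ ⟨hb1, hb2⟩
      have h1 : spikeP j.1 ≤ spikeP (i.1+1) := spikeP_strictAnti.antitone (by omega)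
      have h2 : spikeP (i.1+1) < spikeP i.1 := spikeP_strictAnti (by omega)
      linarith
    rcases lt_or_gt_of_ne (fun hcon => hne (Fin.ext hcon) : (i:ℕ) ≠ (j:ℕ)) with hlt | hgt
    · exact key i j hlt
    · exact (key j i hgt).symm
  · have hzero : ∀ i : Fin n, spikeX dd ((spikeP (i.1+1) + spikeP i.1)/2) = 0 := by
      intro i
      apply spikeX_ne
      intro m hm
      have h2 : spikeP (i.1+1) < spikeP i.1 := spikeP_strictAnti (by omega)
      rcases le_or_gt m i.1 with hle | hlt
      · have : spikeP i.1 ≤ spikeP m := spikeP_strictAnti.antitone hle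
        rw [← hm] at this; linarith
      · have : spikeP m ≤ spikeP (i.1+1) := spikeP_strictAnti.antitone (by omega)
        rw [← hm] at this; linarith
    calc ∑ i : Fin n, |spikeX dd (spikeP i.1) - spikeX dd ((spikeP (i.1+1) + spikeP i.1)/2)|
        = ∑ i : Fin n, dd i.1 := by
          apply Finset.sum_congr rfl
          intro i _
          rw [hzero i, spikeX_spike, sub_zero, abs_of_nonneg (h0 i.1)]
    _ = ∑ j ∈ Finset.range n, dd j := Fin.sum_univ_eq_sum_range dd n
lemma part_c (g h : ℕ → ℝ) (hg : MemG g) (hh : MemG h)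
    (hna : ∀ η : ℝ, 0 < η → ∃ n, η < g n / h n) :
    ∃ x : ℝ → ℝ, MemChanturia g x ∧ ¬ MemChanturia h x := by
  classical
  obtain ⟨N, hNs, hN0, hNg, hNp⟩ := exists_seq g h hg hh hna
  have hNmono : StrictMono N := strictMono_nat_of_lt_succ (fun k => by have := hNs k; omega)
  have hNpow : ∀ k, 2^k ≤ N k := by
    intro k
    induction k with
    | zero => simpa using hN0
    | succ k ih => have := hNs k; calc 2^(k+1) = 2*2^k := by ring
                   _ ≤ 2 * N k := by omega
                   _ ≤ N (k+1) := by omega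
  have hN1 : ∀ k, 1 ≤ N k := fun k => le_trans (Nat.one_le_two_pow) (hNpow k)
  have hNr : ∀ k, (0:ℝ) < (N k:ℝ) := fun k => by exact_mod_cast hN1 k
  have hgpos : ∀ n, 0 < g n := hg.1
  have hex : ∀ j : ℕ, ∃ k, j ≤ N k :=
    fun j => ⟨j, by have h1 := (Nat.lt_two_pow_self (n := j)); have h2 := hNpow j; omega⟩
  set blk : ℕ → ℕ := fun j => Nat.find (hex j) with hblk
  have hblk_spec : ∀ j, j ≤ N (blk j) := fun j => Nat.find_spec (hex j)
  have hblk_min : ∀ j k, j ≤ N k → blk j ≤ k := fun j k hk => Nat.find_min' (hex j) hk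
  have hblk_mono : Monotone blk := fun i j hij => hblk_min i _ (le_trans hij (hblk_spec j))
  have hblk_gt : ∀ j k, N k < j → k < blk j := by
    intro j k hkj
    by_contra hcon
    push_neg at hcon
    have := le_trans (hblk_spec j) (hNmono.monotone hcon)
    omega
  set q : ℕ → ℝ := fun k => g (N k) / (N k : ℝ) with hq
  have hq_pos : ∀ k, 0 < q k := fun k => div_pos (hgpos _) (hNr k)
  have hq_anti : Antitone q := by
    intro k k' hkk'
    have hm := hg.2.2.2.1 (hNmono.monotone hkk')
    simp only at hm
    rw [div_le_div_iff₀ (hgpos (N k)) (hgpos (N k'))] at hm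
    rw [hq]
    simp only
    rw [div_le_div_iff₀ (hNr k') (hNr k)]
    linarith
  set dd : ℕ → ℝ := fun i => q (blk (i+1)) with hdd
  have hdd_anti : Antitone dd := fun i j hij => hq_anti (hblk_mono (by omega))
  have hdd_pos : ∀ i, 0 < dd i := fun i => hq_pos _
  have hdd_nonneg : ∀ i, 0 ≤ dd i := fun i => le_of_lt (hdd_pos i)
  have hblk_eq : ∀ k i, N k ≤ i → i < N (k+1) → dd i = q (k+1) := by
    intro k i h1 h2
    have ha : blk (i+1) ≤ k+1 := hblk_min _ _ (by omega)
    have hb : k < blk (i+1) := hblk_gt (i+1) k (by omega)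
    have hc : blk (i+1) = k+1 := by omega
    rw [hdd]; simp only; rw [hc]
  have hblk0 : ∀ i, i < N 0 → dd i = q 0 := by
    intro i hi
    have ha : blk (i+1) ≤ 0 := hblk_min _ _ (by omega)
    rw [hdd]; simp only; rw [Nat.le_zero.mp ha]
  have hIco : ∀ a b k₀, (∀ i, a ≤ i → i < b → dd i = q k₀) →
      ∑ i ∈ Finset.Ico a b, dd i = ((b - a : ℕ):ℝ) * q k₀ := by
    intro a b k₀ hconst
    rw [Finset.sum_congr rfl
      (fun i hi => hconst i (Finset.mem_Ico.mp hi).1 (Finset.mem_Ico.mp hi).2)]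
    rw [Finset.sum_const, Nat.card_Ico, nsmul_eq_mul]
  have hsplit : ∀ a b, a ≤ b → ∑ j ∈ Finset.range b, dd j
      = ∑ j ∈ Finset.range a, dd j + ∑ i ∈ Finset.Ico a b, dd i := by
    intro a b hab
    simp only [Finset.range_eq_Ico]
    exact (Finset.sum_Ico_consecutive _ (Nat.zero_le a) hab).symm
  have hNq : ∀ k, (N k : ℝ) * q k = g (N k) := by
    intro k; rw [hq]; simp only; rw [mul_comm]
    exact div_mul_cancel₀ _ (ne_of_gt (hNr k))
  have hDN : ∀ k, ∑ j ∈ Finset.range (N k), dd j ≤ 2 * g (N k) := by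
    intro k
    induction k with
    | zero =>
      rw [Finset.range_eq_Ico, hIco 0 (N 0) 0 (fun i _ h2 => hblk0 i h2)]
      rw [Nat.sub_zero, hNq 0]
      have := hgpos (N 0); linarith
    | succ k ih =>
      rw [hsplit (N k) (N (k+1)) (le_of_lt (hNmono (by omega))),
        hIco (N k) (N (k+1)) (k+1) (fun i h1 h2 => hblk_eq k i h1 h2)]
      have hc1 : ((N (k+1) - N k : ℕ):ℝ) ≤ (N (k+1):ℝ) := by
        have : N (k+1) - N k ≤ N (k+1) := by omega
        exact_mod_cast this
      have hc2 : ((N (k+1) - N k : ℕ):ℝ) * q (k+1) ≤ g (N (k+1)) := by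
        calc ((N (k+1) - N k : ℕ):ℝ) * q (k+1) ≤ (N (k+1):ℝ) * q (k+1) :=
              mul_le_mul_of_nonneg_right hc1 (le_of_lt (hq_pos (k+1)))
        _ = g (N (k+1)) := hNq (k+1)
      have := hNg k
      linarith
  have hq_le_g : ∀ n k, 1 ≤ n → n ≤ N k → (n:ℝ) * q k ≤ g n := by
    intro n k h1 h2
    have hm := hg.2.2.2.1 h2
    simp only at hm
    rw [div_le_div_iff₀ (hgpos n) (hgpos (N k))] at hm
    rw [hq]; simp only
    rw [← mul_div_assoc, div_le_iff₀ (hNr k)]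
    linarith
  have hD3 : ∀ n, ∑ j ∈ Finset.range n, dd j ≤ 3 * g n := by
    intro n
    rcases Nat.eq_zero_or_pos n with hn0 | hn1
    · rw [hn0]
      simp only [Finset.range_zero, Finset.sum_empty]
      have := hgpos 0; linarith [hgpos n]
    rcases le_or_gt n (N 0) with hn0 | hn0
    · rw [Finset.range_eq_Ico, hIco 0 n 0 (fun i _ h2 => hblk0 i (by omega)), Nat.sub_zero]
      have := hq_le_g n 0 hn1 hn0
      have := hgpos n
      linarith
    · set K := blk n - 1 with hK
      have hbn : 0 < blk n := hblk_gt n 0 hn0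
      have hK1 : K + 1 = blk n := by omega
      have hNK : N K < n := by
        have hmin := Nat.find_min (hex n) (show K < blk n by omega)
        push_neg at hmin
        exact hmin
      have hNK1 : n ≤ N (K+1) := by rw [hK1]; exact hblk_spec n
      rw [hsplit (N K) n (le_of_lt hNK),
        hIco (N K) n (K+1) (fun i ha hb => hblk_eq K i ha (by omega))]
      have hc1 : ((n - N K : ℕ):ℝ) ≤ (n:ℝ) := by
        have : n - N K ≤ n := by omega
        exact_mod_cast this
      have hc2 : ((n - N K : ℕ):ℝ) * q (K+1) ≤ g n := by
        calc ((n - N K : ℕ):ℝ) * q (K+1) ≤ (n:ℝ) * q (K+1) :=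
              mul_le_mul_of_nonneg_right hc1 (le_of_lt (hq_pos (K+1)))
        _ ≤ g n := hq_le_g n (K+1) hn1 hNK1
      have h3 := hDN K
      have h4 : g (N K) ≤ g n := hg.2.1 (le_of_lt hNK)
      linarith
  have hDlow : ∀ K, g (N (K+1)) / 2 ≤ ∑ j ∈ Finset.range (N (K+1)), dd j := by
    intro K
    rw [hsplit (N K) (N (K+1)) (le_of_lt (hNmono (by omega))),
      hIco (N K) (N (K+1)) (K+1) (fun i h1 h2 => hblk_eq K i h1 h2)]
    have hDpos : (0:ℝ) ≤ ∑ j ∈ Finset.range (N K), dd j :=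
      Finset.sum_nonneg (fun j _ => hdd_nonneg j)
    have hcast : ((N (K+1) - N K : ℕ):ℝ) = (N (K+1):ℝ) - (N K:ℝ) :=
      Nat.cast_sub (le_of_lt (hNmono (by omega)))
    have hcast2 : (2:ℝ) * (N K : ℝ) ≤ (N (K+1):ℝ) := by
      have := hNs K
      have : 2 * N K ≤ N (K+1) := by omega
      exact_mod_cast this
    have hhalf : (N (K+1):ℝ)/2 ≤ ((N (K+1) - N K : ℕ):ℝ) := by
      rw [hcast]; linarith
    have h5 : (N (K+1):ℝ)/2 * q (K+1) ≤ ((N (K+1) - N K : ℕ):ℝ) * q (K+1) :=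
      mul_le_mul_of_nonneg_right hhalf (le_of_lt (hq_pos (K+1)))
    have h6 : (N (K+1):ℝ)/2 * q (K+1) = g (N (K+1))/2 := by
      rw [div_mul_eq_mul_div, hNq (K+1)]
    linarith
  refine ⟨spikeX dd, ⟨?_, 6, by norm_num, ?_⟩, ?_⟩
  · exact ⟨dd 0, fun u _ => by
      rw [abs_of_nonneg (spikeX_nonneg dd hdd_nonneg u)]
      exact spikeX_le dd hdd_anti hdd_nonneg u⟩
  · intro n
    simp only [modVar]
    refine iSup_le ?_
    rintro ⟨⟨s, t⟩, hst⟩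
    apply ENNReal.ofReal_le_ofReal
    have h1 := spike_sum_le dd hdd_anti hdd_nonneg n s t hst
    have h2 := hD3 n
    simp only at h1 ⊢
    linarith
  · rintro ⟨-, η, hη, hb⟩
    obtain ⟨K0, hK0⟩ := pow_unbounded_of_one_lt (2*η) (one_lt_two (α := ℝ))
    set K := K0 + 1 with hKdef
    have hble := hb (N K)
    have hlow : ENNReal.ofReal (g (N K)/2) ≤ modVar (spikeX dd) (N K) := by
      obtain ⟨s, t, hst, hsum⟩ := spike_family dd hdd_nonneg (N K)
      have hstep : ENNReal.ofReal (g (N K)/2)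
          ≤ ENNReal.ofReal (∑ i, |spikeX dd (t i) - spikeX dd (s i)|) := by
        apply ENNReal.ofReal_le_ofReal
        rw [hsum]
        exact hDlow K0
      refine le_trans hstep ?_
      simp only [modVar]
      exact le_iSup (fun p : {p : (Fin (N K) → ℝ) × (Fin (N K) → ℝ) //
        NonoverlappingFin p.1 p.2} =>
          ENNReal.ofReal (∑ i, |spikeX dd (p.1.2 i) - spikeX dd (p.1.1 i)|)) ⟨(s, t), hst⟩
    have hhp : 0 < h (N K) := hh.1 _
    have hcomp : g (N K)/2 ≤ η * h (N K) := by
      have hc := le_trans hlow hble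
      rw [ENNReal.ofReal_le_ofReal_iff (by positivity)] at hc
      exact hc
    have h2k := (hNp K).2.2
    have hmono2 : (2:ℝ)^K0 ≤ (2:ℝ)^K := pow_le_pow_right₀ (by norm_num) (by omega)
    have hprod : 2 * η * h (N K) < (2:ℝ)^K * h (N K) :=
      mul_lt_mul_of_pos_right (lt_of_lt_of_le hK0 hmono2) hhp
    linarith
/-- For `g, h ∈ 𝒢`, the following are equivalent: (a) `g(n) = O(h(n))`;
(b) `Exh(φ_g) ⊆ Exh(φ_h)`; (c) `V[g(n)] ⊆ V[h(n)]`. -/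
theorem stmt10 (g h : ℕ → ℝ) (hg : MemG g) (hh : MemG h) :
    ((∃ η : ℝ, 0 < η ∧ ∀ n, g n / h n ≤ η) ↔ Exh g ⊆ Exh h) ∧
    (Exh g ⊆ Exh h ↔ ∀ x : ℝ → ℝ, MemChanturia g x → MemChanturia h x) := by
  by_cases ha : ∃ η : ℝ, 0 < η ∧ ∀ n, g n / h n ≤ η
  · exact ⟨Iff.intro (fun _ => a_to_b g h hg hh ha) (fun _ => ha),
      Iff.intro (fun _ => a_to_c g h hg hh ha) (fun _ => a_to_b g h hg hh ha)⟩
  · have hna : ∀ η : ℝ, 0 < η → ∃ n, η < g n / h n := by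
      push_neg at ha
      exact ha
    obtain ⟨C, hC1, hC2⟩ := part_b g h hg hh hna
    obtain ⟨x, hx1, hx2⟩ := part_c g h hg hh hna
    refine ⟨Iff.intro (fun ha' => absurd ha' ha) (fun hb => absurd (hb hC1) hC2), ?_⟩
    exact Iff.intro (fun hb => (hC2 (hb hC1)).elim)
      (fun hc => (hx2 (hc x hx1)).elim)
end

section
/- Let (x_j) be a sequence of bounded functions x_j : [0,1] → ℝ such that for every t ∈ [0,1] the set {x_j(t) : j ∈ ℕ} is bounded, and such that the sequence μ(n) = limsup_{j→∞} v(x_j, n) is finite for each n and satisfies μ(n) = o(n), i.e. lim_{n→∞} μ(n)/n = 0. Then there exists a subsequence (x_{j_k}) of (x_j) pointwise convergent on [0,1] to some function x : [0,1] → ℝ satisfying v(x,n) ≤ μ(n) for all n ∈ ℕ. -/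
open Filter Set
open scoped ENNReal

section Aux

lemma chis_diag {ι : Type*} [Countable ι] (f : ℕ → ι → ℝ) (C : ι → ℝ)
    (hb : ∀ j i, |f j i| ≤ C i) :
    ∃ φ : ℕ → ℕ, StrictMono φ ∧ ∃ L : ι → ℝ, ∀ i,
      Tendsto (fun k => f (φ k) i) atTop (nhds (L i)) := by
  have hK : IsCompact (Set.univ.pi fun i => Set.Icc (-C i) (C i)) :=
    isCompact_univ_pi fun i => isCompact_Icc
  have hmem : ∀ j, f j ∈ (Set.univ.pi fun i => Set.Icc (-C i) (C i)) := by
    intro j i _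
    exact abs_le.mp (hb j i)
  obtain ⟨L, _, φ, hφ, hconv⟩ := hK.isSeqCompact hmem
  exact ⟨φ, hφ, L, fun i => (tendsto_pi_nhds.mp hconv) i⟩

lemma chis_term_le_modVar (x : ℝ → ℝ) {n : ℕ} (s t : Fin n → ℝ) (h : NonoverlappingFin s t) :
    ENNReal.ofReal (∑ i, |x (t i) - x (s i)|) ≤ modVar x n :=
  le_iSup (fun p : {p : (Fin n → ℝ) × (Fin n → ℝ) // NonoverlappingFin p.1 p.2} =>
    ENNReal.ofReal (∑ i, |x (p.1.2 i) - x (p.1.1 i)|)) ⟨(s, t), h⟩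

lemma chis_single_le_modVar (x : ℝ → ℝ) {t : ℝ} (ht : t ∈ Set.Icc (0:ℝ) 1) :
    ENNReal.ofReal |x t - x 0| ≤ modVar x 1 := by
  have h : NonoverlappingFin (fun _ : Fin 1 => (0:ℝ)) (fun _ => t) := by
    constructor
    · intro i; exact ⟨le_refl 0, ht.1, ht.2⟩
    · intro i j hij; exact absurd (Subsingleton.elim i j) hij
  have := chis_term_le_modVar x _ _ h
  simpa using this

lemma chis_growth (μ : ℕ → ℝ≥0∞)
    (ho : Tendsto (fun n => μ n / (n : ℝ≥0∞)) atTop (nhds 0)) {ε : ℝ} (hε : 0 < ε) :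
    ∃ N : ℕ, 2 ≤ N ∧ ∀ n : ℕ, N ≤ n → μ n + 1 < ENNReal.ofReal (n * ε) := by
  have h2 : ∀ᶠ n : ℕ in atTop, μ n / (n : ℝ≥0∞) < ENNReal.ofReal (ε/2) :=
    ho.eventually_lt_const (by positivity)
  have h3 : ∀ᶠ n : ℕ in atTop, (2/ε : ℝ) ≤ (n:ℝ) := by
    obtain ⟨N, hN⟩ := exists_nat_ge (2/ε)
    filter_upwards [eventually_ge_atTop N] with n hn
    exact hN.trans (by exact_mod_cast hn)
  obtain ⟨N, hN⟩ := ((h2.and h3).and (eventually_ge_atTop 2)).exists_forall_of_atTop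
  refine ⟨max N 2, le_max_right _ _, fun n hn => ?_⟩
  obtain ⟨⟨hdiv, hbig⟩, -⟩ := hN n (le_trans (le_max_left _ _) hn)
  have hn2 : 2 ≤ n := le_trans (le_max_right _ _) hn
  have hn0 : (n : ℝ≥0∞) ≠ 0 := Nat.cast_ne_zero.mpr (by omega)
  have hnt : (n : ℝ≥0∞) ≠ ⊤ := ENNReal.natCast_ne_top n
  have hμ : μ n < ENNReal.ofReal (ε/2) * n := (ENNReal.div_lt_iff (Or.inl hn0) (Or.inl hnt)).mp hdiv
  have heq : ENNReal.ofReal (ε/2) * (n : ℝ≥0∞) = ENNReal.ofReal ((n:ℝ) * (ε/2)) := by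
    rw [← ENNReal.ofReal_natCast n, ← ENNReal.ofReal_mul (by positivity), mul_comm]
  have h1 : (1 : ℝ≥0∞) ≤ ENNReal.ofReal ((n:ℝ) * (ε/2)) := by
    rw [ENNReal.one_le_ofReal]
    calc (1:ℝ) = (2/ε) * (ε/2) := by field_simp
    _ ≤ (n:ℝ) * (ε/2) := by nlinarith
  have := ENNReal.add_lt_add_of_lt_of_le ENNReal.one_ne_top (heq ▸ hμ) h1
  calc μ n + 1 < ENNReal.ofReal ((n:ℝ) * (ε/2)) + ENNReal.ofReal ((n:ℝ) * (ε/2)) := this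
  _ = ENNReal.ofReal ((n:ℝ) * ε) := by
      rw [← ENNReal.ofReal_add (by positivity) (by positivity)]; ring_nf

noncomputable def chisOsc (f : ℝ → ℝ) (p q : ℚ) : ℝ :=
  sSup ((fun ab : ℝ × ℝ => |f ab.1 - f ab.2|) ''
    ((Set.Ioo (p:ℝ) q ∩ Set.Icc 0 1) ×ˢ (Set.Ioo (p:ℝ) q ∩ Set.Icc 0 1)))

lemma chisOsc_bddAbove {f : ℝ → ℝ} {B : ℝ} (hB : ∀ t ∈ Set.Icc (0:ℝ) 1, |f t| ≤ B) (p q : ℚ) :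
    ∀ v ∈ ((fun ab : ℝ × ℝ => |f ab.1 - f ab.2|) ''
      ((Set.Ioo (p:ℝ) q ∩ Set.Icc 0 1) ×ˢ (Set.Ioo (p:ℝ) q ∩ Set.Icc 0 1))), v ≤ 2*B := by
  rintro v ⟨⟨a, b⟩, ⟨⟨-, ha⟩, ⟨-, hb⟩⟩, rfl⟩
  have := hB a ha; have := hB b hb
  calc |f a - f b| ≤ |f a| + |f b| := abs_sub _ _
  _ ≤ 2*B := by linarith

lemma chisOsc_abs_le {f : ℝ → ℝ} {B : ℝ} (hB : ∀ t ∈ Set.Icc (0:ℝ) 1, |f t| ≤ B) (hB0 : 0 ≤ B)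
    (p q : ℚ) : |chisOsc f p q| ≤ 2*B := by
  rw [abs_le]
  constructor
  · by_cases h : ((Set.Ioo (p:ℝ) q ∩ Set.Icc 0 1) ×ˢ (Set.Ioo (p:ℝ) q ∩ Set.Icc 0 1)).Nonempty
    · obtain ⟨ab, hab⟩ := h
      have h0 : (0:ℝ) ≤ |f ab.1 - f ab.2| := abs_nonneg _
      have : |f ab.1 - f ab.2| ≤ chisOsc f p q :=
        le_csSup ⟨2*B, fun v hv => chisOsc_bddAbove hB p q v hv⟩ ⟨ab, hab, rfl⟩
      linarith
    · unfold chisOsc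
      rw [Set.image_eq_empty.mpr (Set.not_nonempty_iff_eq_empty.mp h), Real.sSup_empty]
      linarith
  · exact Real.sSup_le (chisOsc_bddAbove hB p q) (by linarith)

lemma chis_le_osc {f : ℝ → ℝ} {B : ℝ} (hB : ∀ t ∈ Set.Icc (0:ℝ) 1, |f t| ≤ B)
    {p q : ℚ} {a b : ℝ} (ha : a ∈ Set.Ioo (p:ℝ) q ∩ Set.Icc 0 1)
    (hb : b ∈ Set.Ioo (p:ℝ) q ∩ Set.Icc 0 1) : |f a - f b| ≤ chisOsc f p q :=
  le_csSup ⟨2*B, fun v hv => chisOsc_bddAbove hB p q v hv⟩ ⟨(a,b), ⟨ha, hb⟩, rfl⟩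

lemma chis_exists_of_osc_lt {f : ℝ → ℝ} {p q : ℚ} {c : ℝ} (hc : 0 ≤ c) (h : c < chisOsc f p q) :
    ∃ a ∈ Set.Ioo (p:ℝ) q ∩ Set.Icc 0 1, ∃ b ∈ Set.Ioo (p:ℝ) q ∩ Set.Icc 0 1,
      c < |f a - f b| := by
  have hne : ((fun ab : ℝ × ℝ => |f ab.1 - f ab.2|) ''
      ((Set.Ioo (p:ℝ) q ∩ Set.Icc 0 1) ×ˢ (Set.Ioo (p:ℝ) q ∩ Set.Icc 0 1))).Nonempty := by
    by_contra hne
    rw [Set.not_nonempty_iff_eq_empty] at hne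
    unfold chisOsc at h
    rw [hne, Real.sSup_empty] at h
    linarith
  obtain ⟨v, ⟨⟨a, b⟩, ⟨ha, hb⟩, rfl⟩, hv⟩ := exists_lt_of_lt_csSup hne h
  exact ⟨a, ha, b, hb, hv⟩

lemma chis_Hfin (μ : ℕ → ℝ≥0∞)
    (ho : Tendsto (fun n => μ n / (n : ℝ≥0∞)) atTop (nhds 0))
    (u : ℕ → ℝ → ℝ)
    (hctrl : ∀ j n, n ≤ j + 1 → modVar (u j) n ≤ μ n + 1)
    (ω : ℚ → ℚ → ℝ)
    (hω : ∀ p q : ℚ, Tendsto (fun j => chisOsc (u j) p q) atTop (nhds (ω p q)))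
    (m : ℕ) :
    {t : ℝ | t ∈ Set.Icc (0:ℝ) 1 ∧
      ∀ p q : ℚ, (p:ℝ) < t → t < (q:ℝ) → 1/(m+1:ℝ) ≤ ω p q}.Finite := by
  set ε : ℝ := 1/(2*(m+1)) with hεdef
  have hε : 0 < ε := by positivity
  obtain ⟨N, hN2, hNgrow⟩ := chis_growth μ ho hε
  by_contra hinf
  have hinf2 : {t : ℝ | t ∈ Set.Icc (0:ℝ) 1 ∧
      ∀ p q : ℚ, (p:ℝ) < t → t < (q:ℝ) → 1/(m+1:ℝ) ≤ ω p q}.Infinite := hinf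
  obtain ⟨Fs, hFsub, hFfin, hFcard⟩ := hinf2.exists_subset_ncard_eq N
  set F := hFfin.toFinset with hFdef
  have hcard : F.card = N := by
    rw [← hFcard, Set.ncard_eq_toFinset_card Fs hFfin]
  set T : Fin N → ℝ := fun i => F.orderEmbOfFin hcard i with hTdef
  have hTmono : StrictMono T := (F.orderEmbOfFin hcard).strictMono
  have hTmem : ∀ i, T i ∈ {t : ℝ | t ∈ Set.Icc (0:ℝ) 1 ∧
      ∀ p q : ℚ, (p:ℝ) < t → t < (q:ℝ) → 1/(m+1:ℝ) ≤ ω p q} := by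
    intro i
    exact hFsub (hFfin.mem_toFinset.mp (F.orderEmbOfFin_mem hcard i))
  set pairs : Finset (Fin N × Fin N) :=
    Finset.univ.filter (fun p : Fin N × Fin N => p.1 < p.2) with hpairs
  have hpne : pairs.Nonempty := by
    refine ⟨(⟨0, by omega⟩, ⟨1, by omega⟩), ?_⟩
    simp [hpairs, Fin.mk_lt_mk]
  set g : ℝ := pairs.inf' hpne (fun p => T p.2 - T p.1) with hgdef
  have hg : 0 < g := by
    rw [hgdef, Finset.lt_inf'_iff]
    rintro ⟨i, j⟩ hij
    rw [hpairs, Finset.mem_filter] at hij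
    exact sub_pos.mpr (hTmono hij.2)
  have hgle : ∀ i j : Fin N, i < j → g ≤ T j - T i := by
    intro i j hij
    have hmem : (i, j) ∈ pairs := Finset.mem_filter.mpr ⟨Finset.mem_univ _, hij⟩
    exact Finset.inf'_le _ hmem
  set δ : ℝ := g/2 with hδdef
  have hδ : 0 < δ := by positivity
  have hrat : ∀ i : Fin N, ∃ p q : ℚ, T i - δ < (p:ℝ) ∧ (p:ℝ) < T i ∧
      T i < (q:ℝ) ∧ (q:ℝ) < T i + δ := by
    intro i
    obtain ⟨p, hp1, hp2⟩ := exists_rat_btwn (by linarith : T i - δ < T i)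
    obtain ⟨q, hq1, hq2⟩ := exists_rat_btwn (by linarith : T i < T i + δ)
    exact ⟨p, q, hp1, hp2, hq1, hq2⟩
  choose P Q hP1 hP2 hQ1 hQ2 using hrat
  have hωge : ∀ i, 1/(m+1:ℝ) ≤ ω (P i) (Q i) := fun i =>
    (hTmem i).2 (P i) (Q i) (hP2 i) (hQ1 i)
  have hev : ∀ᶠ j in atTop, (∀ i : Fin N, ε < chisOsc (u j) (P i) (Q i)) ∧ N ≤ j + 1 := by
    refine ((eventually_all.mpr ?_).and ?_)
    · intro i
      refine (hω (P i) (Q i)).eventually_const_lt ?_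
      calc ε < 1/(m+1:ℝ) := by
            rw [hεdef, div_lt_div_iff₀ (by positivity) (by positivity)]
            nlinarith [(by positivity : (0:ℝ) < (m:ℝ)+1)]
      _ ≤ ω (P i) (Q i) := hωge i
    · filter_upwards [eventually_ge_atTop N] with j hj; omega
  obtain ⟨j, hj⟩ := hev.exists
  obtain ⟨hosc, hjN⟩ := hj
  have hwit : ∀ i : Fin N, ∃ a ∈ Set.Ioo ((P i):ℝ) (Q i) ∩ Set.Icc 0 1,
      ∃ b ∈ Set.Ioo ((P i):ℝ) (Q i) ∩ Set.Icc 0 1, ε < |u j a - u j b| :=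
    fun i => chis_exists_of_osc_lt hε.le (hosc i)
  choose a ha b hb hab using hwit
  set s : Fin N → ℝ := fun i => min (a i) (b i) with hsdef
  set tt : Fin N → ℝ := fun i => max (a i) (b i) with httdef
  have hIoo : ∀ i, Set.Ioo (s i) (tt i) ⊆ Set.Ioo (T i - δ) (T i + δ) := by
    intro i y hy
    obtain ⟨⟨ha1, ha2⟩, ha3⟩ := ha i
    obtain ⟨⟨hb1, hb2⟩, hb3⟩ := hb i
    have hP := hP1 i; have hQ := hQ2 i
    constructor
    · have : T i - δ < s i := by
        rw [hsdef]; simp only [lt_min_iff]; constructor <;> linarith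
      linarith [hy.1]
    · have : tt i < T i + δ := by
        rw [httdef]; simp only [max_lt_iff]; constructor <;> linarith
      linarith [hy.2]
  have hno : NonoverlappingFin s tt := by
    constructor
    · intro i
      obtain ⟨-, ha3⟩ := ha i
      obtain ⟨-, hb3⟩ := hb i
      refine ⟨le_min ha3.1 hb3.1, min_le_max, max_le ha3.2 hb3.2⟩
    · have key : ∀ i k : Fin N, i < k →
          Disjoint (Set.Ioo (s i) (tt i)) (Set.Ioo (s k) (tt k)) := by
        intro i k hik
        rw [Set.disjoint_left]
        intro y hy1 hy2
        have h1 := hIoo i hy1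
        have h2 := hIoo k hy2
        have := hgle i k hik
        have : T i + δ ≤ T k - δ := by rw [hδdef]; linarith
        linarith [h1.2, h2.1]
      intro i k hik
      rcases lt_or_gt_of_ne hik with h | h
      · exact key i k h
      · exact (key k i h).symm
  have hsum : (N:ℝ) * ε ≤ ∑ i, |u j (tt i) - u j (s i)| := by
    have : ∀ i ∈ Finset.univ, ε ≤ |u j (tt i) - u j (s i)| := by
      intro i _
      rcases le_total (a i) (b i) with h | h
      · rw [hsdef, httdef]; simp only [min_eq_left h, max_eq_right h]
        rw [abs_sub_comm]; exact (hab i).le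
      · rw [hsdef, httdef]; simp only [min_eq_right h, max_eq_left h]
        exact (hab i).le
    calc (N:ℝ) * ε = (Finset.univ : Finset (Fin N)).card • ε := by
          simp [mul_comm, nsmul_eq_mul]
    _ ≤ ∑ i, |u j (tt i) - u j (s i)| := Finset.card_nsmul_le_sum _ _ _ this
  have h1 : ENNReal.ofReal ((N:ℝ) * ε) ≤ modVar (u j) N :=
    le_trans (ENNReal.ofReal_le_ofReal hsum) (chis_term_le_modVar (u j) s tt hno)
  have h2 : modVar (u j) N ≤ μ N + 1 := hctrl j N hjN
  have h3 : μ N + 1 < ENNReal.ofReal ((N:ℝ) * ε) := hNgrow N le_rfl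
  exact absurd (h1.trans h2) (not_le.mpr h3)

end Aux


/-- Chistyakov's selection principle: if `(x_j)` is a pointwise bounded
sequence of bounded functions on `[0,1]` whose moduli of variation satisfy
`μ(n) = limsup_j v(x_j, n) < ∞` and `μ(n) = o(n)`, then some subsequence converges
pointwise on `[0,1]` to a function `x` with `v(x,n) ≤ μ(n)` for all `n`. -/
theorem stmt11 (x : ℕ → ℝ → ℝ) (hbdd : ∀ j, BoundedOn01 (x j))
    (hptw : ∀ t ∈ Set.Icc (0 : ℝ) 1, ∃ C : ℝ, ∀ j, |x j t| ≤ C)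
    (μ : ℕ → ℝ≥0∞) (hμ : ∀ n, μ n = Filter.limsup (fun j => modVar (x j) n) atTop)
    (hfin : ∀ n, μ n < ⊤)
    (ho : Tendsto (fun n => μ n / (n : ℝ≥0∞)) atTop (nhds 0)) :
    ∃ φ : ℕ → ℕ, StrictMono φ ∧ ∃ y : ℝ → ℝ,
      (∀ t ∈ Set.Icc (0 : ℝ) 1, Tendsto (fun k => x (φ k) t) atTop (nhds (y t))) ∧
      ∀ n, modVar y n ≤ μ n := by
  classical
  -- Stage A : control of the moduli of variation along a subsequence
  have hA : ∀ j : ℕ, ∀ᶠ i in atTop, ∀ n ≤ j + 1,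
      modVar (x i) n ≤ μ n + ENNReal.ofReal (1/((j:ℝ)+1)) := by
    intro j
    have hjpos : (0:ℝ) < 1/((j:ℝ)+1) := by positivity
    have h1 : ∀ n : ℕ, ∀ᶠ i in atTop,
        modVar (x i) n ≤ μ n + ENNReal.ofReal (1/((j:ℝ)+1)) := by
      intro n
      have hlt : Filter.limsup (fun i => modVar (x i) n) atTop
          < μ n + ENNReal.ofReal (1/((j:ℝ)+1)) := by
        rw [← hμ n]
        exact ENNReal.lt_add_right (hfin n).ne
          (by simp [ENNReal.ofReal_eq_zero]; linarith)
      exact (Filter.eventually_lt_of_limsup_lt hlt).mono fun i hi => hi.le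
    have h2 : ∀ᶠ i in atTop, ∀ n ∈ Finset.range (j+2),
        modVar (x i) n ≤ μ n + ENNReal.ofReal (1/((j:ℝ)+1)) :=
      Filter.eventually_all_finset _ |>.mpr fun n _ => h1 n
    exact h2.mono fun i hi n hn => hi n (Finset.mem_range.mpr (by omega))
  obtain ⟨ψ, hψmono, hψ⟩ := Filter.extraction_forall_of_eventually hA
  -- uniform bound
  obtain ⟨C₀, hC₀⟩ := hptw 0 ⟨le_refl 0, zero_le_one⟩
  have hμ1top : μ 1 + 1 ≠ ⊤ := by
    simp [ENNReal.add_eq_top, (hfin 1).ne]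
  set B : ℝ := C₀ + (μ 1 + 1).toReal with hBdef
  have hC₀0 : 0 ≤ C₀ := le_trans (abs_nonneg _) (hC₀ 0)
  have hB0 : 0 ≤ B := by
    have := ENNReal.toReal_nonneg (a := μ 1 + 1)
    rw [hBdef]; linarith
  have hctrl : ∀ j n, n ≤ j + 1 →
      modVar (x (ψ j)) n ≤ μ n + ENNReal.ofReal (1/((j:ℝ)+1)) := fun j => hψ j
  have hctrl1 : ∀ j n, n ≤ j + 1 → modVar (x (ψ j)) n ≤ μ n + 1 := by
    intro j n hn
    refine (hctrl j n hn).trans (add_le_add_right ?_ _)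
    rw [← ENNReal.ofReal_one]
    exact ENNReal.ofReal_le_ofReal (by
      rw [div_le_one (by positivity)]; linarith [Nat.cast_nonneg (α := ℝ) j])
  have hbound : ∀ j, ∀ t ∈ Set.Icc (0:ℝ) 1, |x (ψ j) t| ≤ B := by
    intro j t ht
    have h1 : ENNReal.ofReal |x (ψ j) t - x (ψ j) 0| ≤ μ 1 + 1 :=
      le_trans (chis_single_le_modVar (x (ψ j)) ht) (hctrl1 j 1 (by omega))
    have h2 : |x (ψ j) t - x (ψ j) 0| ≤ (μ 1 + 1).toReal :=
      (ENNReal.ofReal_le_iff_le_toReal hμ1top).mp h1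
    have h3 : |x (ψ j) 0| ≤ C₀ := hC₀ (ψ j)
    calc |x (ψ j) t| = |x (ψ j) 0 + (x (ψ j) t - x (ψ j) 0)| := by ring_nf
    _ ≤ |x (ψ j) 0| + |x (ψ j) t - x (ψ j) 0| := abs_add_le _ _
    _ ≤ B := by rw [hBdef]; linarith
  -- Stage B : extraction for rationals and oscillations
  set clamp : ℚ → ℝ := fun r => max 0 (min 1 (r:ℝ)) with hclampdef
  have hclampIcc : ∀ r : ℚ, clamp r ∈ Set.Icc (0:ℝ) 1 :=
    fun r => ⟨le_max_left _ _, max_le zero_le_one (min_le_left _ _)⟩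
  set fB : ℕ → (ℚ ⊕ ℚ × ℚ) → ℝ := fun j i =>
    Sum.rec (fun r => x (ψ j) (clamp r)) (fun pq => chisOsc (x (ψ j)) pq.1 pq.2) i with hfBdef
  have hfBbdd : ∀ j i, |fB j i| ≤ (Sum.rec (fun _ => B) (fun _ => 2*B) i : ℝ) := by
    intro j i
    cases i with
    | inl r => exact hbound j (clamp r) (hclampIcc r)
    | inr pq => exact chisOsc_abs_le (hbound j) hB0 pq.1 pq.2
  obtain ⟨φ₁, hφ₁mono, L₁, hL₁⟩ := chis_diag fB _ hfBbdd
  set u2 : ℕ → ℝ → ℝ := fun k => x (ψ (φ₁ k)) with hu2def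
  set yQ : ℚ → ℝ := fun r => L₁ (Sum.inl r) with hyQdef
  set ω : ℚ → ℚ → ℝ := fun p q => L₁ (Sum.inr (p, q)) with hωdef
  have hyQ : ∀ r : ℚ, Tendsto (fun k => u2 k (clamp r)) atTop (nhds (yQ r)) :=
    fun r => hL₁ (Sum.inl r)
  have hω : ∀ p q : ℚ, Tendsto (fun k => chisOsc (u2 k) p q) atTop (nhds (ω p q)) :=
    fun p q => hL₁ (Sum.inr (p, q))
  have hctrl2 : ∀ j n, n ≤ j + 1 → modVar (u2 j) n ≤ μ n + 1 := by
    intro j n hn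
    have hj : j ≤ φ₁ j := hφ₁mono.le_apply
    exact hctrl1 (φ₁ j) n (by omega)
  -- the H set
  set Hset : ℕ → Set ℝ := fun m => {t : ℝ | t ∈ Set.Icc (0:ℝ) 1 ∧
      ∀ p q : ℚ, (p:ℝ) < t → t < (q:ℝ) → 1/(m+1:ℝ) ≤ ω p q} with hHsetdef
  have hHfin : ∀ m, (Hset m).Finite := fun m => chis_Hfin μ ho u2 hctrl2 ω hω m
  set H : Set ℝ := ⋃ m, Hset m with hHdef
  have hHcount : H.Countable := Set.countable_iUnion fun m => (hHfin m).countable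
  have hHsub : H ⊆ Set.Icc (0:ℝ) 1 := by
    rw [hHdef]
    exact Set.iUnion_subset fun m t ht => ht.1
  haveI := hHcount.to_subtype
  -- Stage C : extraction on H
  set fC : ℕ → ↥H → ℝ := fun k h => u2 k h.1 with hfCdef
  have hfCbdd : ∀ k (h : ↥H), |fC k h| ≤ B := fun k h =>
    hbound (φ₁ k) h.1 (hHsub h.2)
  obtain ⟨φ₂, hφ₂mono, L₂, hL₂⟩ := chis_diag fC (fun _ => B) hfCbdd
  set w : ℕ → ℝ → ℝ := fun k => u2 (φ₂ k) with hwdef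
  have hwyQ : ∀ r : ℚ, Tendsto (fun k => w k (clamp r)) atTop (nhds (yQ r)) :=
    fun r => (hyQ r).comp (hφ₂mono.tendsto_atTop)
  have hwω : ∀ p q : ℚ, Tendsto (fun k => chisOsc (w k) p q) atTop (nhds (ω p q)) :=
    fun p q => (hω p q).comp (hφ₂mono.tendsto_atTop)
  have hwbound : ∀ k, ∀ t ∈ Set.Icc (0:ℝ) 1, |w k t| ≤ B :=
    fun k => hbound (φ₁ (φ₂ k))
  -- convergence everywhere on [0,1]
  have hconv : ∀ t ∈ Set.Icc (0:ℝ) 1, ∃ L : ℝ, Tendsto (fun k => w k t) atTop (nhds L) := by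
    intro t ht
    by_cases htH : t ∈ H
    · exact ⟨L₂ ⟨t, htH⟩, hL₂ ⟨t, htH⟩⟩
    by_cases htQ : ∃ r : ℚ, (r:ℝ) = t
    · obtain ⟨r, hr⟩ := htQ
      have hcl : clamp r = t := by
        rw [hclampdef]
        simp only []
        rw [hr, min_eq_right ht.2, max_eq_right ht.1]
      refine ⟨yQ r, ?_⟩
      have := hwyQ r
      rwa [hcl] at this
    -- irrational case : Cauchy
    have ht1 : t < 1 := lt_of_le_of_ne ht.2 (fun h => htQ ⟨1, by rw [h]; norm_num⟩)
    refine cauchySeq_tendsto_of_complete ?_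
    rw [Metric.cauchySeq_iff]
    intro ε hε
    obtain ⟨m₀, hm₀⟩ := exists_nat_gt (3/ε)
    have hm₀' : 1/((m₀:ℝ)+1) < ε/3 := by
      rw [div_lt_div_iff₀ (by positivity) (by positivity)]
      have h1 : (3/ε) * ε < (m₀:ℝ) * ε := mul_lt_mul_of_pos_right hm₀ hε
      have h2 : (3/ε) * ε = 3 := by field_simp
      nlinarith
    have htm : t ∉ Hset m₀ := fun h => htH (Set.mem_iUnion.mpr ⟨m₀, h⟩)
    rw [hHsetdef] at htm
    simp only [Set.mem_setOf_eq, not_and, not_forall, not_le] at htm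
    obtain ⟨p, q, hpt, htq, hωlt⟩ := htm ht
    -- a rational point in the interval
    have htq1 : t < min ((q:ℝ)) 1 := lt_min htq ht1
    obtain ⟨r, hr1, hr2⟩ := exists_rat_btwn htq1
    have hrmem : (r:ℝ) ∈ Set.Ioo ((p:ℝ)) (q:ℝ) ∩ Set.Icc 0 1 :=
      ⟨⟨lt_trans hpt hr1, lt_of_lt_of_le hr2 (min_le_left _ _)⟩,
        ⟨le_trans ht.1 hr1.le, le_trans hr2.le (min_le_right _ _)⟩⟩
    have htmem : t ∈ Set.Ioo ((p:ℝ)) (q:ℝ) ∩ Set.Icc 0 1 := ⟨⟨hpt, htq⟩, ht⟩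
    have hcl : clamp r = (r:ℝ) := by
      rw [hclampdef]
      simp only []
      rw [min_eq_right hrmem.2.2, max_eq_right hrmem.2.1]
    -- eventual closeness
    have hev1 : ∀ᶠ k in atTop, chisOsc (w k) p q < 1/((m₀:ℝ)+1) :=
      (hwω p q).eventually_lt_const hωlt
    have hrconv : Tendsto (fun k => w k (r:ℝ)) atTop (nhds (yQ r)) := by
      have := hwyQ r; rwa [hcl] at this
    have hrC := (hrconv.cauchySeq)
    rw [Metric.cauchySeq_iff] at hrC
    obtain ⟨N₁, hN₁⟩ := hrC (ε/3) (by positivity)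
    obtain ⟨N₂, hN₂⟩ := hev1.exists_forall_of_atTop
    refine ⟨max N₁ N₂, fun k hk l hl => ?_⟩
    have hk1 := le_trans (le_max_left N₁ N₂) hk
    have hk2 := le_trans (le_max_right N₁ N₂) hk
    have hl1 := le_trans (le_max_left N₁ N₂) hl
    have hl2 := le_trans (le_max_right N₁ N₂) hl
    have e1 : |w k t - w k (r:ℝ)| ≤ chisOsc (w k) p q :=
      chis_le_osc (hwbound k) htmem hrmem
    have e2 : |w l t - w l (r:ℝ)| ≤ chisOsc (w l) p q :=
      chis_le_osc (hwbound l) htmem hrmem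
    have e3 := hN₂ k hk2
    have e4 := hN₂ l hl2
    have e5 := hN₁ k hk1 l hl1
    rw [Real.dist_eq] at e5 ⊢
    have e6 : |w k t - w l t| ≤ |w k t - w k (r:ℝ)| + |w k (r:ℝ) - w l (r:ℝ)|
        + |w l (r:ℝ) - w l t| := by
      have := abs_sub_le (w k t) (w k (r:ℝ)) (w l t)
      have := abs_sub_le (w k (r:ℝ)) (w l (r:ℝ)) (w l t)
      linarith
    rw [abs_sub_comm (w l (r:ℝ)) (w l t)] at e6
    linarith [e1, e2, hm₀']
  -- the limit function
  set y : ℝ → ℝ := fun t =>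
    if h : ∃ L : ℝ, Tendsto (fun k => w k t) atTop (nhds L) then h.choose else 0 with hydef
  have hy : ∀ t ∈ Set.Icc (0:ℝ) 1, Tendsto (fun k => w k t) atTop (nhds (y t)) := by
    intro t ht
    have h := hconv t ht
    rw [hydef]
    simp only [dif_pos h]
    exact h.choose_spec
  -- the final subsequence
  refine ⟨fun k => ψ (φ₁ (φ₂ k)), hψmono.comp (hφ₁mono.comp hφ₂mono), y, hy, ?_⟩
  -- the modulus of variation bound
  intro n
  rw [modVar]
  refine iSup_le ?_
  rintro ⟨⟨s, tt⟩, hno⟩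
  simp only []
  have hmemIcc : ∀ i, s i ∈ Set.Icc (0:ℝ) 1 ∧ tt i ∈ Set.Icc (0:ℝ) 1 := by
    intro i
    obtain ⟨h1, h2, h3⟩ := hno.1 i
    exact ⟨⟨h1, le_trans h2 h3⟩, ⟨le_trans h1 h2, h3⟩⟩
  have hsumconv : Tendsto (fun k => ∑ i, |w k (tt i) - w k (s i)|) atTop
      (nhds (∑ i, |y (tt i) - y (s i)|)) := by
    refine tendsto_finset_sum _ fun i _ => ?_
    exact ((hy (tt i) (hmemIcc i).2).sub (hy (s i) (hmemIcc i).1)).abs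
  have hAconv : Tendsto (fun k => ENNReal.ofReal (∑ i, |w k (tt i) - w k (s i)|)) atTop
      (nhds (ENNReal.ofReal (∑ i, |y (tt i) - y (s i)|))) :=
    ENNReal.tendsto_ofReal hsumconv
  have hCconv : Tendsto (fun k : ℕ => μ n + ENNReal.ofReal (1/((k:ℝ)+1))) atTop
      (nhds (μ n)) := by
    have h0 : Tendsto (fun k : ℕ => ENNReal.ofReal (1/((k:ℝ)+1))) atTop (nhds 0) := by
      have := ENNReal.tendsto_ofReal (tendsto_one_div_add_atTop_nhds_zero_nat)
      simpa using this
    have := (tendsto_const_nhds (x := μ n) (f := atTop (α := ℕ))).add h0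
    simpa using this
  have hle : ∀ᶠ k in atTop, ENNReal.ofReal (∑ i, |w k (tt i) - w k (s i)|)
      ≤ μ n + ENNReal.ofReal (1/((k:ℝ)+1)) := by
    filter_upwards [eventually_ge_atTop n] with k hk
    have hn : n ≤ k + 1 := by omega
    have hb1 : ENNReal.ofReal (∑ i, |w k (tt i) - w k (s i)|) ≤ modVar (w k) n :=
      chis_term_le_modVar (w k) s tt hno
    have hσ : k ≤ φ₁ (φ₂ k) := le_trans (hφ₂mono.le_apply) (hφ₁mono.le_apply)
    have hb2 : modVar (w k) n ≤ μ n + ENNReal.ofReal (1/((φ₁ (φ₂ k):ℝ)+1)) :=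
      hctrl (φ₁ (φ₂ k)) n (by omega)
    have hb3 : ENNReal.ofReal (1/((φ₁ (φ₂ k):ℝ)+1)) ≤ ENNReal.ofReal (1/((k:ℝ)+1)) := by
      apply ENNReal.ofReal_le_ofReal
      apply one_div_le_one_div_of_le (by positivity)
      have : (k:ℝ) ≤ (φ₁ (φ₂ k) : ℝ) := by exact_mod_cast hσ
      linarith
    exact hb1.trans (hb2.trans (add_le_add_right hb3 _))
  exact le_of_tendsto_of_tendsto hAconv hCconv hle
end

section
/- Let A = (a_n) be a Waterman sequence, M > 0, and let (x_j) be a sequence of functions in ABV with ‖x_j‖_{ABV} ≤ M for all j. Then there exists a subsequence (x_{j_k}) pointwise convergent on [0,1] to some function x with ‖x‖_{ABV} ≤ M; in particular x ∈ ABV. -/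
open Filter Set
open scoped ENNReal

namespace Stmt14Aux

open scoped Topology

/-- An enumeration of the rationals of `[0,1]` (as real numbers). -/
noncomputable def enumQ : ℕ → ℝ := fun n =>
  max 0 (min 1 (((Denumerable.eqv ℚ).symm n : ℚ) : ℝ))

lemma enumQ_mem (n : ℕ) : enumQ n ∈ Set.Icc (0:ℝ) 1 :=
  ⟨le_max_left _ _, max_le zero_le_one (min_le_left _ _)⟩

lemma enumQ_surj (q : ℚ) (h0 : 0 ≤ (q:ℝ)) (h1 : (q:ℝ) ≤ 1) : ∃ n, enumQ n = (q:ℝ) := by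
  refine ⟨Denumerable.eqv ℚ q, ?_⟩
  rw [enumQ, Equiv.symm_apply_apply, min_eq_right h1, max_eq_right h0]

lemma tsum_le_eVar (a : ℕ → ℝ) (x : ℝ → ℝ) {s t : ℕ → ℝ} (h : Nonoverlapping s t) :
    ∑' n, ENNReal.ofReal (a n * |x (t n) - x (s n)|) ≤ eVar a x :=
  le_iSup (fun p : {p : (ℕ → ℝ) × (ℕ → ℝ) // Nonoverlapping p.1 p.2} =>
    ∑' n, ENNReal.ofReal (a n * |x (p.1.2 n) - x (p.1.1 n)|)) ⟨(s, t), h⟩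

lemma sum_bound {a : ℕ → ℝ} (ha : ∀ n, 0 ≤ a n) {x : ℝ → ℝ} {M : ℝ} (hM : 0 ≤ M)
    (hx : eNormABV a x ≤ ENNReal.ofReal M) {s t : ℕ → ℝ} (hst : Nonoverlapping s t) (N : ℕ) :
    |x 0| + ∑ n ∈ Finset.range N, a n * |x (t n) - x (s n)| ≤ M := by
  have h1 : ∀ n, 0 ≤ a n * |x (t n) - x (s n)| := fun n => mul_nonneg (ha n) (abs_nonneg _)
  have h2 : ENNReal.ofReal (|x 0| + ∑ n ∈ Finset.range N, a n * |x (t n) - x (s n)|)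
      ≤ ENNReal.ofReal M := by
    rw [ENNReal.ofReal_add (abs_nonneg _) (Finset.sum_nonneg fun n _ => h1 n),
      ENNReal.ofReal_sum_of_nonneg (fun n _ => h1 n)]
    exact le_trans (add_le_add le_rfl
      (le_trans (ENNReal.sum_le_tsum _) (tsum_le_eVar a x hst))) hx
  exact (ENNReal.ofReal_le_ofReal_iff hM).mp h2

lemma single_bound {a : ℕ → ℝ} (ha : ∀ n, 0 ≤ a n) {x : ℝ → ℝ} {M : ℝ} (hM : 0 ≤ M)
    (hx : eNormABV a x ≤ ENNReal.ofReal M) {s t : ℝ} (h0 : 0 ≤ s) (hst : s ≤ t) (h1 : t ≤ 1) :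
    a 0 * |x t - x s| ≤ M := by
  have hno : Nonoverlapping (fun n => if n = 0 then s else 1)
      (fun n => if n = 0 then t else 1) := by
    constructor
    · intro n
      by_cases h : n = 0 <;>
        simp [h, h0, hst, h1]
    · intro m n hmn
      rcases eq_or_ne m 0 with rfl | hm
      · have hn : n ≠ 0 := fun h => hmn h.symm
        simp [hn]
      · simp [hm]
  have h2 := sum_bound ha hM hx hno 1
  simp only [Finset.sum_range_one, eq_self_iff_true, if_true] at h2
  have := abs_nonneg (x 0)
  linarith

lemma abs_x0_le {a : ℕ → ℝ} {x : ℝ → ℝ} {M : ℝ} (hM : 0 ≤ M)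
    (hx : eNormABV a x ≤ ENNReal.ofReal M) : |x 0| ≤ M := by
  have h : ENNReal.ofReal |x 0| ≤ ENNReal.ofReal M :=
    le_trans (le_add_right le_rfl) hx
  exact (ENNReal.ofReal_le_ofReal_iff hM).mp h

lemma abs_le_C {a : ℕ → ℝ} (ha0 : 0 < a 0) (ha : ∀ n, 0 ≤ a n) {x : ℝ → ℝ} {M : ℝ} (hM : 0 ≤ M)
    (hx : eNormABV a x ≤ ENNReal.ofReal M) {t : ℝ} (ht : t ∈ Set.Icc (0:ℝ) 1) :
    |x t| ≤ M + M / a 0 := by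
  have h1 := single_bound ha hM hx le_rfl ht.1 ht.2
  have h2 := abs_x0_le hM hx
  have h3 : |x t - x 0| ≤ M / a 0 := by
    rw [le_div_iff₀ ha0]
    linarith [mul_comm (a 0) |x t - x 0|]
  calc |x t| = |x 0 + (x t - x 0)| := by ring_nf
    _ ≤ |x 0| + |x t - x 0| := abs_add_le _ _
    _ ≤ M + M / a 0 := add_le_add h2 h3

lemma tsum_const_eq_top {a : ℕ → ℝ} (ha : ∀ n, 0 ≤ a n) (hns : ¬ Summable a) {ε : ℝ}
    (hε : 0 < ε) : ∑' n, ENNReal.ofReal (a n * ε) = ⊤ := by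
  by_contra h
  have hs : Summable fun n => (ENNReal.ofReal (a n * ε)).toReal := ENNReal.summable_toReal h
  have heq : ∀ n, (ENNReal.ofReal (a n * ε)).toReal = a n * ε := fun n =>
    ENNReal.toReal_ofReal (mul_nonneg (ha n) hε.le)
  have hs2 : Summable fun n => a n * ε := by
    refine hs.congr fun n => heq n
  have := hs2.mul_right ε⁻¹
  refine hns ?_
  simpa [mul_assoc, mul_inv_cancel₀ hε.ne'] using this

lemma osc_right {a : ℕ → ℝ} (ha : ∀ n, 0 ≤ a n) (hns : ¬ Summable a)
    {x : ℝ → ℝ} (hx : eVar a x ≠ ⊤) {c : ℝ} (hc0 : 0 ≤ c) (hc1 : c < 1) {ε : ℝ} (hε : 0 < ε) :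
    ∃ d, c < d ∧ d ≤ 1 ∧ ∀ u v, c < u → u ≤ v → v < d → |x v - x u| ≤ ε := by
  by_contra hcon
  push_neg at hcon
  have key : ∀ d : {d : ℝ // c < d ∧ d ≤ 1}, ∃ w : ℝ × ℝ,
      c < w.1 ∧ w.1 ≤ w.2 ∧ w.2 < d.1 ∧ ε < |x w.2 - x w.1| := by
    intro d
    obtain ⟨u, v, h1, h2, h3, h4⟩ := hcon d.1 d.2.1 d.2.2
    exact ⟨(u, v), h1, h2, h3, h4⟩
  choose W h1 h2 h3 h4 using key
  let F : ℕ → {d : ℝ // c < d ∧ d ≤ 1} := fun n => Nat.rec ⟨1, hc1, le_rfl⟩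
    (fun _ d => ⟨(W d).1, h1 d, le_trans (h2 d) (le_trans (h3 d).le d.2.2)⟩) n
  set u : ℕ → ℝ := fun n => (W (F n)).1 with hu
  set v : ℕ → ℝ := fun n => (W (F n)).2 with hv
  have hcu : ∀ n, c < u n := fun n => h1 (F n)
  have hun : ∀ n, u n ≤ v n := fun n => h2 (F n)
  have hv1 : ∀ n, v n ≤ 1 := fun n => le_trans (h3 (F n)).le (F n).2.2
  have hstep : ∀ n, v (n + 1) < u n := fun n => h3 (F (n + 1))
  have haux : ∀ k m, v (m + k + 1) < u m := by
    intro k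
    induction k with
    | zero => exact fun m => hstep m
    | succ k ih =>
      intro m
      have e : m + (k + 1) + 1 = (m + 1) + k + 1 := by omega
      rw [e]
      exact lt_trans (lt_of_lt_of_le (ih (m + 1)) (hun (m + 1))) (hstep m)
  have hdec : ∀ m n, m < n → v n < u m := by
    intro m n h
    obtain ⟨k, rfl⟩ : ∃ k, n = m + k + 1 := ⟨n - m - 1, by omega⟩
    exact haux k m
  have hnov : Nonoverlapping u v := by
    constructor
    · exact fun n => ⟨le_trans hc0 (hcu n).le, hun n, hv1 n⟩
    · intro m n hmn
      rcases lt_or_gt_of_ne hmn with h | h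
      · rw [Set.disjoint_left]
        intro z hz1 hz2
        exact absurd hz1.1 (not_lt.mpr (le_of_lt (lt_trans hz2.2 (hdec m n h))))
      · rw [Set.disjoint_right]
        intro z hz1 hz2
        exact absurd hz1.1 (not_lt.mpr (le_of_lt (lt_trans hz2.2 (hdec n m h))))
  have hle : ∑' n, ENNReal.ofReal (a n * ε)
      ≤ ∑' n, ENNReal.ofReal (a n * |x (v n) - x (u n)|) :=
    ENNReal.tsum_le_tsum fun n =>
      ENNReal.ofReal_le_ofReal (mul_le_mul_of_nonneg_left (h4 (F n)).le (ha n))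
  rw [tsum_const_eq_top ha hns hε] at hle
  exact hx (top_le_iff.mp (le_trans hle (tsum_le_eVar a x hnov)))

lemma partition {a : ℕ → ℝ} (hA : IsWaterman a) {M : ℝ} (hM : 0 ≤ M) {ε : ℝ} (hε : 0 < ε) :
    ∃ K : ℕ, ∀ x : ℝ → ℝ, eNormABV a x ≤ ENNReal.ofReal M →
      ∃ p : ℕ → ℝ, Monotone p ∧ p 0 = 0 ∧ (∀ i, p i ∈ Set.Icc (0:ℝ) 1) ∧ p K = 1 ∧
        ∀ i u v, p i < u → u ≤ v → v < p (i + 1) → |x v - x u| ≤ ε := by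
  classical
  obtain ⟨hanti, hpos, hns⟩ := hA
  have ha0 : ∀ n, 0 ≤ a n := fun n => (hpos n).le
  have hdiv : Tendsto (fun N => ∑ n ∈ Finset.range N, a n * ε) atTop atTop := by
    have := (not_summable_iff_tendsto_nat_atTop_of_nonneg
      (fun n => mul_nonneg (ha0 n) hε.le)).mp
      (fun hsum => hns (by simpa [mul_assoc, mul_inv_cancel₀ hε.ne'] using hsum.mul_right ε⁻¹))
    exact this
  obtain ⟨N0, hN0⟩ := (hdiv.eventually_gt_atTop M).exists_forall_of_atTop
  set N : ℕ := N0 + 1 with hNdef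
  have hN2 : M < ∑ n ∈ Finset.range N, a n * ε := hN0 N (by omega)
  refine ⟨2 * N, ?_⟩
  intro x hx
  have hxvar : eVar a x ≤ ENNReal.ofReal M := le_trans le_add_self hx
  have hxne : eVar a x ≠ ⊤ := fun h =>
    (by simp [h] : (⊤:ℝ≥0∞) ≤ ENNReal.ofReal M → False)
      (h ▸ hxvar) |>.elim
  set S : ℝ → Set ℝ := fun c =>
    {d | d ∈ Set.Icc c 1 ∧ ∀ u v, c < u → u ≤ v → v < d → |x v - x u| ≤ ε} with hS
  have hmemS : ∀ c, c ≤ 1 → c ∈ S c := by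
    intro c hc
    exact ⟨⟨le_rfl, hc⟩, fun u v hcu huv hvc => absurd (lt_of_le_of_lt huv hvc)
      (not_lt.mpr hcu.le)⟩
  have hbddS : ∀ c, BddAbove (S c) := fun c => ⟨1, fun d hd => hd.1.2⟩
  let p : ℕ → ℝ := fun n => Nat.rec (motive := fun _ => ℝ) 0 (fun _ q => sSup (S q)) n
  have hp0 : p 0 = 0 := rfl
  have hpsucc : ∀ i, p (i + 1) = sSup (S (p i)) := fun i => rfl
  have hIcc : ∀ i, 0 ≤ p i ∧ p i ≤ 1 := by
    intro i
    induction i with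
    | zero => exact ⟨le_rfl, zero_le_one⟩
    | succ i ih =>
      constructor
      · exact le_trans ih.1 (le_csSup (hbddS _) (hmemS _ ih.2))
      · rw [hpsucc]
        exact csSup_le ⟨p i, hmemS _ ih.2⟩ fun d hd => hd.1.2
  have hple : ∀ i, p i ≤ p (i + 1) := fun i => le_csSup (hbddS _) (hmemS _ (hIcc i).2)
  have hpmono : Monotone p := monotone_nat_of_le_succ hple
  have hPprop : ∀ i u v, p i < u → u ≤ v → v < p (i + 1) → |x v - x u| ≤ ε := by
    intro i u v hu huv hv
    obtain ⟨d, hd, hvd⟩ := exists_lt_of_lt_csSup ⟨p i, hmemS _ (hIcc i).2⟩ hv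
    exact hd.2 u v hu huv hvd
  have hprog : ∀ i, p i < 1 → p i < p (i + 1) := by
    intro i h
    obtain ⟨d, hd1, hd2, hd3⟩ := osc_right ha0 hns hxne (hIcc i).1 h hε
    have hdS : d ∈ S (p i) := ⟨⟨hd1.le, hd2⟩, fun u v hu huv hvd => hd3 u v hu huv hvd⟩
    exact lt_of_lt_of_le hd1 (le_csSup (hbddS _) hdS)
  have hK : p (2 * N - 1) = 1 := by
    by_contra hne
    have hlt : p (2 * N - 1) < 1 := lt_of_le_of_ne (hIcc (2 * N - 1)).2 hne
    have hwit : ∀ n, n < N → ∃ w : ℝ × ℝ,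
        p (2 * n) < w.1 ∧ w.1 ≤ w.2 ∧ w.2 < p (2 * n + 2) ∧ ε < |x w.2 - x w.1| := by
      intro n hn
      have h1 : p (2 * n + 1) < 1 := lt_of_le_of_lt (hpmono (show 2 * n + 1 ≤ 2 * N - 1 by omega)) hlt
      have h2 : p (2 * n + 1) < p (2 * n + 2) := by
        have e : 2 * n + 1 + 1 = 2 * n + 2 := by omega
        have := hprog (2 * n + 1) h1
        rwa [e] at this
      have h3 : p (2 * n + 2) ∉ S (p (2 * n)) := by
        intro hmem
        have := le_csSup (hbddS (p (2 * n))) hmem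
        rw [← hpsucc (2 * n)] at this
        exact absurd h2 (not_lt.mpr this)
      have h4 : ¬ ∀ u v, p (2 * n) < u → u ≤ v → v < p (2 * n + 2) → |x v - x u| ≤ ε :=
        fun h => h3 ⟨⟨hpmono (show 2 * n ≤ 2 * n + 2 by omega), (hIcc (2 * n + 2)).2⟩, h⟩
      push_neg at h4
      obtain ⟨u, v, huu, huv, hvv, hbig⟩ := h4
      exact ⟨(u, v), huu, huv, hvv, hbig⟩
    have hwit' : ∀ n, ∃ w : ℝ × ℝ, n < N →
        p (2 * n) < w.1 ∧ w.1 ≤ w.2 ∧ w.2 < p (2 * n + 2) ∧ ε < |x w.2 - x w.1| := by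
      intro n
      by_cases h : n < N
      · obtain ⟨w, hw⟩ := hwit n h
        exact ⟨w, fun _ => hw⟩
      · exact ⟨(1, 1), fun h' => absurd h' h⟩
    choose w hw using hwit'
    set s' : ℕ → ℝ := fun n => if n < N then (w n).1 else 1 with hs'
    set t' : ℕ → ℝ := fun n => if n < N then (w n).2 else 1 with ht'
    have hnov : Nonoverlapping s' t' := by
      constructor
      · intro n
        by_cases h : n < N
        · obtain ⟨hw1, hw2, hw3, _⟩ := hw n h
          simp only [hs', ht', if_pos h]
          exact ⟨le_trans (hIcc (2 * n)).1 hw1.le, hw2, le_trans hw3.le (hIcc (2 * n + 2)).2⟩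
        · simp [hs', ht', h]
      · intro m n hmn
        by_cases hm : m < N
        · by_cases hn : n < N
          · rcases lt_or_gt_of_ne hmn with h | h
            · rw [Set.disjoint_left]
              intro z hz1 hz2
              simp only [hs', ht', if_pos hm, if_pos hn] at hz1 hz2
              have e1 : z < p (2 * m + 2) := lt_trans hz1.2 (hw m hm).2.2.1
              have e2 : p (2 * n) < z := lt_trans (hw n hn).1 hz2.1
              exact absurd (lt_trans e1 (lt_of_le_of_lt
                (hpmono (show 2 * m + 2 ≤ 2 * n by omega)) e2)) (lt_irrefl z)
            · rw [Set.disjoint_right]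
              intro z hz1 hz2
              simp only [hs', ht', if_pos hm, if_pos hn] at hz1 hz2
              have e1 : z < p (2 * n + 2) := lt_trans hz1.2 (hw n hn).2.2.1
              have e2 : p (2 * m) < z := lt_trans (hw m hm).1 hz2.1
              exact absurd (lt_trans e1 (lt_of_le_of_lt
                (hpmono (show 2 * n + 2 ≤ 2 * m by omega)) e2)) (lt_irrefl z)
          · simp [ht', hs', hn]
        · simp [ht', hs', hm]
    have hcontra : ENNReal.ofReal (∑ n ∈ Finset.range N, a n * ε) ≤ ENNReal.ofReal M := by
      rw [ENNReal.ofReal_sum_of_nonneg (fun n _ => mul_nonneg (ha0 n) hε.le)]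
      refine le_trans ?_ (le_trans (tsum_le_eVar a x hnov) hxvar)
      refine le_trans (Finset.sum_le_sum ?_) (ENNReal.sum_le_tsum _)
      intro n hn
      rw [Finset.mem_range] at hn
      simp only [hs', ht', if_pos hn]
      exact ENNReal.ofReal_le_ofReal (mul_le_mul_of_nonneg_left (hw n hn).2.2.2.le (ha0 n))
    have := (ENNReal.ofReal_le_ofReal_iff hM).mp hcontra
    linarith
  have hfin : p (2 * N) = 1 :=
    le_antisymm (hIcc (2 * N)).2 (by rw [← hK]; exact hpmono (show 2 * N - 1 ≤ 2 * N by omega))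
  exact ⟨p, hpmono, hp0, fun i => ⟨(hIcc i).1, (hIcc i).2⟩, hfin, hPprop⟩

lemma extract_subseq (F : ℕ → ℕ → ℝ) (C : ℝ) (hF : ∀ j n, |F j n| ≤ C) :
    ∃ φ : ℕ → ℕ, StrictMono φ ∧ ∃ g : ℕ → ℝ,
      ∀ n, Tendsto (fun k => F (φ k) n) atTop (𝓝 (g n)) := by
  have hcomp : IsCompact (Set.pi Set.univ fun _ : ℕ => Set.Icc (-C) C) :=
    isCompact_univ_pi fun _ => isCompact_Icc
  have hmem : ∀ j, F j ∈ Set.pi Set.univ fun _ : ℕ => Set.Icc (-C) C := by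
    intro j
    rw [Set.mem_univ_pi]
    exact fun n => abs_le.mp (hF j n)
  obtain ⟨g, _, φ, hφ, hconv⟩ := hcomp.isSeqCompact hmem
  exact ⟨φ, hφ, g, fun n => (tendsto_pi_nhds.mp hconv n)⟩

end Stmt14Aux

open Stmt14Aux
open scoped Topology

/-- Helly-type selection principle for Waterman spaces: a sequence in
`ABV` bounded by `M` in the `ABV` norm has a subsequence converging pointwise on `[0,1]`
to a function `x` with `‖x‖_{ABV} ≤ M`; in particular `x ∈ ABV`. -/
theorem stmt14 (a : ℕ → ℝ) (hA : IsWaterman a) (M : ℝ) (hM : 0 < M)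
    (x : ℕ → ℝ → ℝ) (hmem : ∀ j, MemABV a (x j))
    (hbdd : ∀ j, eNormABV a (x j) ≤ ENNReal.ofReal M) :
    ∃ φ : ℕ → ℕ, StrictMono φ ∧ ∃ y : ℝ → ℝ,
      (∀ t ∈ Set.Icc (0 : ℝ) 1, Tendsto (fun k => x (φ k) t) atTop (nhds (y t))) ∧
      eNormABV a y ≤ ENNReal.ofReal M ∧ MemABV a y := by
  classical
  obtain ⟨hanti, hpos, hns⟩ := hA
  have hM0 : (0:ℝ) ≤ M := hM.le
  have ha0 : ∀ n, 0 ≤ a n := fun n => (hpos n).le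
  set C : ℝ := M + M / a 0 with hC
  have hbdC : ∀ j, ∀ t ∈ Set.Icc (0:ℝ) 1, |x j t| ≤ C := fun j t ht =>
    abs_le_C (hpos 0) ha0 hM0 (hbdd j) ht
  -- uniform partitions for each accuracy 1/(m+1)
  have hKex : ∀ m : ℕ, ∃ K : ℕ, ∀ z : ℝ → ℝ, eNormABV a z ≤ ENNReal.ofReal M →
      ∃ p : ℕ → ℝ, Monotone p ∧ p 0 = 0 ∧ (∀ i, p i ∈ Set.Icc (0:ℝ) 1) ∧ p K = 1 ∧
        ∀ i u v, p i < u → u ≤ v → v < p (i + 1) → |z v - z u| ≤ 1 / (m + 1) := by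
    intro m
    exact partition ⟨hanti, hpos, hns⟩ hM0 (by positivity : (0:ℝ) < 1 / (m + 1))
  choose K hK using hKex
  choose p hp1 hp2 hp3 hp4 hp5 using fun j m => hK m (x j) (hbdd j)
  -- extraction 1 : values at the rationals
  obtain ⟨φ₁, hφ₁, g, hg⟩ := extract_subseq (fun j n => x j (enumQ n)) C
    (fun j n => hbdC j _ (enumQ_mem n))
  -- extraction 2 : partition points
  let d : ℕ × ℕ ≃ ℕ := Denumerable.eqv (ℕ × ℕ)
  obtain ⟨φ₂, hφ₂, q₂, hq₂⟩ := extract_subseq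
    (fun j n => p (φ₁ j) (d.symm n).1 (d.symm n).2) 1
    (fun j n => by
      have h := hp3 (φ₁ j) (d.symm n).1 (d.symm n).2
      have h' : (-1:ℝ) ≤ p (φ₁ j) (d.symm n).1 (d.symm n).2 := le_trans (by norm_num) h.1
      exact abs_le.mpr ⟨h', h.2⟩)
  have hPconv : ∀ m i, Tendsto (fun k => p (φ₁ (φ₂ k)) m i) atTop (𝓝 (q₂ (d (m, i)))) := by
    intro m i
    have h := hq₂ (d (m, i))
    simpa using h
  have hPmem : ∀ m i, q₂ (d (m, i)) ∈ Set.Icc (0:ℝ) 1 := fun m i =>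
    ⟨ge_of_tendsto' (hPconv m i) fun k => (hp3 _ m i).1,
     le_of_tendsto' (hPconv m i) fun k => (hp3 _ m i).2⟩
  -- extraction 3 : values at the limit partition points
  obtain ⟨φ₃, hφ₃, h₃, hh₃⟩ := extract_subseq
    (fun j n => x (φ₁ (φ₂ j)) (q₂ (d ((d.symm n).1, (d.symm n).2)))) C
    (fun j n => hbdC _ _ (hPmem _ _))
  refine ⟨fun k => φ₁ (φ₂ (φ₃ k)), hφ₁.comp (hφ₂.comp hφ₃), ?_⟩
  set φ : ℕ → ℕ := fun k => φ₁ (φ₂ (φ₃ k)) with hφdef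
  set X : ℕ → ℝ → ℝ := fun k => x (φ k) with hXdef
  have hgconv : ∀ n, Tendsto (fun k => X k (enumQ n)) atTop (𝓝 (g n)) := fun n =>
    (hg n).comp ((hφ₂.comp hφ₃).tendsto_atTop)
  have hpconv : ∀ m i, Tendsto (fun k => p (φ k) m i) atTop (𝓝 (q₂ (d (m, i)))) := fun m i =>
    (hPconv m i).comp hφ₃.tendsto_atTop
  have hPconv' : ∀ m i, Tendsto (fun k => X k (q₂ (d (m, i)))) atTop
      (𝓝 (h₃ (d (m, i)))) := by
    intro m i
    have h := hh₃ (d (m, i))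
    simpa using h
  -- pointwise convergence everywhere on [0,1]
  have hconv : ∀ t ∈ Set.Icc (0:ℝ) 1, ∃ L, Tendsto (fun k => X k t) atTop (𝓝 L) := by
    intro t ht
    by_cases hcase : ∃ m i, q₂ (d (m, i)) = t
    · obtain ⟨m, i, rfl⟩ := hcase
      exact ⟨_, hPconv' m i⟩
    · push_neg at hcase
      have hb1 : IsBoundedUnder (· ≤ ·) atTop (fun k => X k t) :=
        isBoundedUnder_of ⟨C, fun k => (abs_le.mp (hbdC (φ k) t ht)).2⟩
      have hb2 : IsBoundedUnder (· ≥ ·) atTop (fun k => X k t) :=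
        isBoundedUnder_of ⟨-C, fun k => (abs_le.mp (hbdC (φ k) t ht)).1⟩
      have key : ∀ m : ℕ, limsup (fun k => X k t) atTop ≤
          liminf (fun k => X k t) atTop + 2 * (1 / (m + 1)) := by
        intro m
        have hP0 : q₂ (d (m, 0)) = 0 := by
          refine tendsto_nhds_unique (hPconv m 0) ?_
          simp only [hp2]
          exact tendsto_const_nhds
        have hPK : q₂ (d (m, K m)) = 1 := by
          refine tendsto_nhds_unique (hPconv m (K m)) ?_
          simp only [hp4]
          exact tendsto_const_nhds
        have hPmono2 : ∀ i i' : ℕ, i ≤ i' → q₂ (d (m, i)) ≤ q₂ (d (m, i')) := fun i i' hii =>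
          le_of_tendsto_of_tendsto' (hPconv m i) (hPconv m i') fun k => hp1 _ m hii
        have h0t : 0 < t := by
          rcases lt_or_eq_of_le ht.1 with h | h
          · exact h
          · exact absurd (hP0.trans h) (hcase m 0)
        let P : ℕ → Prop := fun i => q₂ (d (m, i)) < t
        set istar : ℕ := Nat.findGreatest P (K m) with histar
        have hMem0 : P 0 := by
          show q₂ (d (m, 0)) < t
          rw [hP0]; exact h0t
        have hspec : q₂ (d (m, istar)) < t :=
          Nat.findGreatest_spec (Nat.zero_le _) hMem0
        have hi1 : istar ≤ K m := Nat.findGreatest_le _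
        have hiK : istar < K m := by
          rcases lt_or_eq_of_le hi1 with h | h
          · exact h
          · rw [h, hPK] at hspec
            exact absurd ht.2 (not_le.mpr hspec)
        have hnext : t < q₂ (d (m, istar + 1)) := by
          have h1 : ¬ P (istar + 1) :=
            Nat.findGreatest_is_greatest (Nat.lt_succ_self istar) (by omega)
          rcases lt_or_eq_of_le (not_lt.mp h1) with h | h
          · exact h
          · exact absurd h.symm (hcase m (istar + 1))
        obtain ⟨q, hq1, hq2'⟩ := exists_rat_btwn hspec
        obtain ⟨n, hn⟩ := enumQ_surj q (le_trans (hPmem m istar).1 hq1.le)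
          (le_trans hq2'.le ht.2)
        have hev1 : ∀ᶠ k in atTop, p (φ k) m istar < (q:ℝ) :=
          (hpconv m istar).eventually_lt_const hq1
        have hev2 : ∀ᶠ k in atTop, t < p (φ k) m (istar + 1) :=
          (hpconv m (istar + 1)).eventually_const_lt hnext
        have hosc : ∀ᶠ k in atTop, |X k t - X k (enumQ n)| ≤ 1 / (m + 1) := by
          filter_upwards [hev1, hev2] with k h1 h2
          exact hp5 (φ k) m istar (enumQ n) t (by rw [hn]; exact h1)
            (by rw [hn]; exact hq2'.le) h2
        have htendup : Tendsto (fun k => X k (enumQ n) + 1 / (m + 1)) atTop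
            (𝓝 (g n + 1 / (m + 1))) := (hgconv n).add_const _
        have htenddown : Tendsto (fun k => X k (enumQ n) - 1 / (m + 1)) atTop
            (𝓝 (g n - 1 / (m + 1))) := (hgconv n).sub_const _
        have hup : limsup (fun k => X k t) atTop ≤ g n + 1 / (m + 1) := by
          have hle : (fun k => X k t) ≤ᶠ[atTop] fun k => X k (enumQ n) + 1 / (m + 1) := by
            filter_upwards [hosc] with k hk
            have := (abs_le.mp hk).2
            linarith
          calc limsup (fun k => X k t) atTop
              ≤ limsup (fun k => X k (enumQ n) + 1 / (m + 1)) atTop :=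
                limsup_le_limsup hle hb2.isCoboundedUnder_le htendup.isBoundedUnder_le
            _ = g n + 1 / (m + 1) := htendup.limsup_eq
        have hdown : g n - 1 / (m + 1) ≤ liminf (fun k => X k t) atTop := by
          have hle : (fun k => X k (enumQ n) - 1 / (m + 1)) ≤ᶠ[atTop] fun k => X k t := by
            filter_upwards [hosc] with k hk
            have := (abs_le.mp hk).1
            linarith
          calc g n - 1 / (m + 1)
              = liminf (fun k => X k (enumQ n) - 1 / (m + 1)) atTop := htenddown.liminf_eq.symm
            _ ≤ liminf (fun k => X k t) atTop :=
                liminf_le_liminf hle htenddown.isBoundedUnder_ge hb1.isCoboundedUnder_ge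
        linarith
      have hlim : limsup (fun k => X k t) atTop ≤ liminf (fun k => X k t) atTop := by
        have htend0 : Tendsto (fun m : ℕ =>
            liminf (fun k => X k t) atTop + 2 * (1 / ((m:ℝ) + 1))) atTop
            (𝓝 (liminf (fun k => X k t) atTop)) := by
          have h1 : Tendsto (fun m : ℕ => (1:ℝ) / (m + 1)) atTop (𝓝 0) :=
            tendsto_one_div_add_atTop_nhds_zero_nat
          have h2 := h1.const_mul (2:ℝ)
          have h3 : Tendsto (fun m : ℕ =>
              liminf (fun k => X k t) atTop + 2 * (1 / ((m:ℝ) + 1))) atTop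
              (𝓝 (liminf (fun k => X k t) atTop + 2 * 0)) :=
            tendsto_const_nhds.add h2
          simpa using h3
        exact ge_of_tendsto' htend0 key
      exact ⟨limsup (fun k => X k t) atTop,
        tendsto_of_liminf_eq_limsup
          (le_antisymm (liminf_le_limsup hb1 hb2) hlim) rfl hb1 hb2⟩
  set y : ℝ → ℝ := fun t => limsup (fun k => X k t) atTop with hy
  have hyconv : ∀ t ∈ Set.Icc (0:ℝ) 1, Tendsto (fun k => X k t) atTop (𝓝 (y t)) := by
    intro t ht
    obtain ⟨L, hL⟩ := hconv t ht
    have : y t = L := hL.limsup_eq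
    rw [this]
    exact hL
  have hsum : ∀ (s t : ℕ → ℝ), Nonoverlapping s t → ∀ N,
      |y 0| + ∑ n ∈ Finset.range N, a n * |y (t n) - y (s n)| ≤ M := by
    intro s t hst N
    have h01 : (0:ℝ) ∈ Set.Icc (0:ℝ) 1 := ⟨le_rfl, zero_le_one⟩
    have hmems : ∀ n, s n ∈ Set.Icc (0:ℝ) 1 := fun n =>
      ⟨(hst.1 n).1, le_trans (hst.1 n).2.1 (hst.1 n).2.2⟩
    have hmemt : ∀ n, t n ∈ Set.Icc (0:ℝ) 1 := fun n =>
      ⟨le_trans (hst.1 n).1 (hst.1 n).2.1, (hst.1 n).2.2⟩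
    have htt : ∀ n, Tendsto (fun k => a n * |X k (t n) - X k (s n)|) atTop
        (𝓝 (a n * |y (t n) - y (s n)|)) := fun n =>
      (((hyconv (t n) (hmemt n)).sub (hyconv (s n) (hmems n))).abs).const_mul (a n)
    have htot : Tendsto
        (fun k => |X k 0| + ∑ n ∈ Finset.range N, a n * |X k (t n) - X k (s n)|) atTop
        (𝓝 (|y 0| + ∑ n ∈ Finset.range N, a n * |y (t n) - y (s n)|)) :=
      ((hyconv 0 h01).abs).add (tendsto_finset_sum _ fun n _ => htt n)
    exact le_of_tendsto' htot fun k => sum_bound ha0 hM0 (hbdd (φ k)) hst N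
  have hnorm : eNormABV a y ≤ ENNReal.ofReal M := by
    have hne : Nonempty {p : (ℕ → ℝ) × (ℕ → ℝ) // Nonoverlapping p.1 p.2} :=
      ⟨⟨(fun _ => 1, fun _ => 1), ⟨fun n => ⟨zero_le_one, le_rfl, le_rfl⟩,
        fun m n _ => by simp⟩⟩⟩
    unfold eNormABV eVar
    rw [ENNReal.add_iSup]
    refine iSup_le ?_
    rintro ⟨⟨s, t⟩, hst⟩
    rw [ENNReal.tsum_eq_iSup_sum, ENNReal.add_iSup]
    refine iSup_le fun F => ?_
    obtain ⟨N, hFN⟩ := F.exists_nat_subset_range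
    have h1 : ∑ n ∈ F, ENNReal.ofReal (a n * |y (t n) - y (s n)|)
        ≤ ∑ n ∈ Finset.range N, ENNReal.ofReal (a n * |y (t n) - y (s n)|) :=
      Finset.sum_le_sum_of_subset hFN
    refine le_trans (add_le_add le_rfl h1) ?_
    rw [← ENNReal.ofReal_sum_of_nonneg (fun n _ => mul_nonneg (ha0 n) (abs_nonneg _)),
      ← ENNReal.ofReal_add (abs_nonneg _)
        (Finset.sum_nonneg fun n _ => mul_nonneg (ha0 n) (abs_nonneg _))]
    exact ENNReal.ofReal_le_ofReal (hsum s t hst N)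
  refine ⟨y, hyconv, hnorm, ?_⟩
  exact lt_of_le_of_lt (le_trans le_add_self hnorm) ENNReal.ofReal_lt_top
end
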